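/- arXiv:0705.4362 — 7 statements merged into one kernel-verified Lean document; each statement's English description precedes it below -/
import Mathlib

section
/- Let n ≥ 3 and T = Σ_{k=1}^{n−1} P_k. Then a complex number λ is an eigenvalue of T if and only if λ ∈ {n−1, n−2, −1}. -/
open Matrix

/-- The n×n complex permutation matrix of the transposition (a b). -/
noncomputable def permP (n : ℕ) (a b : Fin n) : Matrix (Fin n) (Fin n) ℂ :=
  Matrix.of fun i j => if i = Equiv.swap a b j then 1 else 0

/-- P_k = P(1,k+1) for 1 ≤ k ≤ n-1: with 0-based indices, the transposition (0, k+1). -/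
noncomputable def Pk (n : ℕ) [NeZero n] (k : Fin (n - 1)) : Matrix (Fin n) (Fin n) ℂ :=
  permP n 0 ⟨k.1 + 1, by have := k.2; omega⟩

lemma permP_mulVec (n : ℕ) (a b : Fin n) (v : Fin n → ℂ) (i : Fin n) :
    (permP n a b *ᵥ v) i = v (Equiv.swap a b i) := by
  simp only [permP, mulVec, dotProduct, of_apply]
  rw [Finset.sum_eq_single (Equiv.swap a b i)]
  · rw [if_pos (by simp), one_mul]
  · intro j _ hj
    rw [if_neg, zero_mul]
    intro h
    exact hj (by rw [h, Equiv.swap_apply_self])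
  · simp

lemma T_mulVec (n : ℕ) [NeZero n] (v : Fin n → ℂ) (i : Fin n) :
    ((∑ k : Fin (n - 1), Pk n k) *ᵥ v) i
      = ∑ k : Fin (n - 1), v (Equiv.swap 0 ⟨k.1 + 1, by have := k.2; omega⟩ i) := by
  have : (∑ k : Fin (n - 1), Pk n k) *ᵥ v = ∑ k : Fin (n - 1), Pk n k *ᵥ v := by
    induction (Finset.univ : Finset (Fin (n - 1))) using Finset.induction with
    | empty => simp
    | @insert a s h ih => simp [Finset.sum_insert h, Matrix.add_mulVec, ih]
  rw [this, Finset.sum_apply]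
  exact Finset.sum_congr rfl fun k _ => permP_mulVec n _ _ v i

lemma T_row_zero (n : ℕ) [NeZero n] (v : Fin n → ℂ) :
    ((∑ k : Fin (n - 1), Pk n k) *ᵥ v) 0
      = ∑ k : Fin (n - 1), v ⟨k.1 + 1, by have := k.2; omega⟩ := by
  rw [T_mulVec]
  exact Finset.sum_congr rfl fun k _ => by rw [Equiv.swap_apply_left]

lemma T_row_ne (n : ℕ) [NeZero n] (hn : 3 ≤ n) (v : Fin n → ℂ) (i : Fin n) (hi : i ≠ 0) :
    ((∑ k : Fin (n - 1), Pk n k) *ᵥ v) i = v 0 + ((n : ℂ) - 2) * v i := by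
  rw [T_mulVec]
  have hi1 : 1 ≤ i.1 := by
    rcases Nat.eq_zero_or_pos i.1 with h | h
    · exact absurd (Fin.ext h) hi
    · exact h
  have key : ∀ k : Fin (n - 1),
      v (Equiv.swap 0 ⟨k.1 + 1, by have := k.2; omega⟩ i)
        = v i + (if k = ⟨i.1 - 1, by have := i.2; omega⟩ then v 0 - v i else 0) := by
    intro k
    rw [Equiv.swap_apply_def]
    by_cases h : k = (⟨i.1 - 1, by have := i.2; omega⟩ : Fin (n - 1))
    · have : i = (⟨k.1 + 1, by have := k.2; omega⟩ : Fin n) := by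
        apply Fin.ext; simp [h]; omega
      rw [if_neg hi, if_pos this, if_pos h]; ring
    · have h2 : i ≠ (⟨k.1 + 1, by have := k.2; omega⟩ : Fin n) := by
        intro hh
        exact h (by apply Fin.ext; simp [hh])
      rw [if_neg hi, if_neg h2, if_neg h]; ring
  rw [Finset.sum_congr rfl fun k _ => key k, Finset.sum_add_distrib,
    Finset.sum_ite_eq' _ _ (fun _ => v 0 - v i), if_pos (Finset.mem_univ _),
    Finset.sum_const, Finset.card_univ, Fintype.card_fin, nsmul_eq_mul]
  have : ((n - 1 : ℕ) : ℂ) = (n : ℂ) - 1 := by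
    push_cast [Nat.cast_sub (by omega : 1 ≤ n)]; ring
  rw [this]; ring

lemma mem_spectrum_iff_exists (n : ℕ) [NeZero n] (M : Matrix (Fin n) (Fin n) ℂ) (lam : ℂ) :
    lam ∈ spectrum ℂ M ↔ ∃ v ≠ 0, M *ᵥ v = lam • v := by
  rw [spectrum.mem_iff, Matrix.isUnit_iff_isUnit_det, isUnit_iff_ne_zero, not_ne_iff,
    ← Matrix.exists_mulVec_eq_zero_iff]
  have key : ∀ v : Fin n → ℂ, (algebraMap ℂ _ lam - M) *ᵥ v = lam • v - M *ᵥ v := by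
    intro v
    rw [Matrix.sub_mulVec, Matrix.algebraMap_eq_diagonal]
    congr 1
    funext i
    simp [Matrix.mulVec_diagonal, Pi.algebraMap_apply]
  constructor
  · rintro ⟨v, hv, h⟩
    exact ⟨v, hv, by rw [key] at h; rw [← sub_eq_zero]; rw [sub_eq_zero] at h ⊢; exact h.symm⟩
  · rintro ⟨v, hv, h⟩
    exact ⟨v, hv, by rw [key, h, sub_self]⟩

/-- For n ≥ 3, λ is an eigenvalue of T = Σ_{k=1}^{n-1} P_k iff λ ∈ {n-1, n-2, -1}. -/
theorem T_eigenvalues (n : ℕ) [NeZero n] (hn : 3 ≤ n) (lam : ℂ) :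
    lam ∈ spectrum ℂ (∑ k : Fin (n - 1), Pk n k) ↔
      lam = (n : ℂ) - 1 ∨ lam = (n : ℂ) - 2 ∨ lam = -1 := by
  have hcard : ((n - 1 : ℕ) : ℂ) = (n : ℂ) - 1 := by
    push_cast [Nat.cast_sub (by omega : 1 ≤ n)]; ring
  rw [mem_spectrum_iff_exists]
  constructor
  · rintro ⟨v, hv, heq⟩
    by_cases hlam : lam = (n : ℂ) - 2
    · exact Or.inr (Or.inl hlam)
    have hd : lam - ((n : ℂ) - 2) ≠ 0 := sub_ne_zero.mpr hlam
    have hrow : ∀ i : Fin n, i ≠ 0 → (lam - ((n : ℂ) - 2)) * v i = v 0 := by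
      intro i hi
      have := congrFun heq i
      rw [T_row_ne n hn v i hi] at this
      simp only [Pi.smul_apply, smul_eq_mul] at this
      linear_combination -this
    have hv0 : v 0 ≠ 0 := by
      intro h0
      apply hv
      funext i
      by_cases hi : i = 0
      · rw [hi]; exact h0
      · have := hrow i hi
        rw [h0] at this
        exact (mul_eq_zero.mp this).resolve_left hd
    have h0eq := congrFun heq 0
    rw [T_row_zero] at h0eq
    have hterm : ∀ k : Fin (n - 1),
        v ⟨k.1 + 1, by have := k.2; omega⟩ = v 0 / (lam - ((n : ℂ) - 2)) := by
      intro k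
      have hk : (⟨k.1 + 1, by have := k.2; omega⟩ : Fin n) ≠ 0 := by
        intro h; have := Fin.val_eq_of_eq h; simp at this
      rw [eq_div_iff hd, mul_comm]
      exact hrow _ hk
    rw [Finset.sum_congr rfl fun k _ => hterm k, Finset.sum_const, Finset.card_univ,
      Fintype.card_fin, nsmul_eq_mul, hcard] at h0eq
    simp only [Pi.smul_apply, smul_eq_mul] at h0eq
    have key : ((n : ℂ) - 1) * v 0 = lam * (lam - ((n : ℂ) - 2)) * v 0 := by
      field_simp at h0eq
      linear_combination (v 0) * h0eq
    have : (lam - ((n : ℂ) - 1)) * (lam + 1) = 0 := by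
      have := mul_right_cancel₀ hv0 key
      linear_combination -this
    rcases mul_eq_zero.mp this with h | h
    · exact Or.inl (by linear_combination h)
    · exact Or.inr (Or.inr (by linear_combination h))
  · intro h
    have h1 : (⟨1, by omega⟩ : Fin n) ≠ 0 := by
      intro hh; have := Fin.val_eq_of_eq hh; simp at this
    rcases h with h | h | h
    · -- all-ones vector
      refine ⟨fun _ => 1, ?_, ?_⟩
      · intro hh; have := congrFun hh 0; simp at this
      · funext i
        by_cases hi : i = 0
        · subst hi
          rw [T_row_zero]
          simp [h, hcard]
        · rw [T_row_ne n hn _ i hi]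
          simp [h]; ring
    · -- lam = n - 2
      refine ⟨fun i => if i.1 = 1 then 1 else if i.1 = 2 then -1 else 0, ?_, ?_⟩
      · intro hh
        have := congrFun hh ⟨1, by omega⟩
        simp at this
      · funext i
        by_cases hi : i = 0
        · subst hi
          rw [T_row_zero]
          have : ∀ k : Fin (n - 1),
              (fun i : Fin n => if i.1 = 1 then (1:ℂ) else if i.1 = 2 then -1 else 0)
                ⟨k.1 + 1, by have := k.2; omega⟩
              = (if k = (⟨0, by omega⟩ : Fin (n-1)) then (1:ℂ) else 0)
                + (if k = (⟨1, by omega⟩ : Fin (n-1)) then (-1:ℂ) else 0) := by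
            intro k
            simp only [Fin.ext_iff]
            split_ifs <;> first | omega | norm_num
          rw [Finset.sum_congr rfl fun k _ => this k, Finset.sum_add_distrib,
            Finset.sum_ite_eq' _ _ (fun _ => (1:ℂ)), Finset.sum_ite_eq' _ _ (fun _ => (-1:ℂ))]
          simp
        · rw [T_row_ne n hn _ i hi]
          have hi0 : ¬ (0 : Fin n).1 = 1 := by simp
          have hi0' : ¬ (0 : Fin n).1 = 2 := by simp
          simp only [hi0, hi0', if_false, Pi.smul_apply, smul_eq_mul, h]
          ring
    · -- lam = -1
      refine ⟨fun i => if i = 0 then -((n : ℂ) - 1) else 1, ?_, ?_⟩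
      · intro hh
        have := congrFun hh ⟨1, by omega⟩
        simp [h1] at this
      · funext i
        by_cases hi : i = 0
        · subst hi
          rw [T_row_zero]
          have : ∀ k : Fin (n - 1),
              (fun i : Fin n => if i = 0 then -((n : ℂ) - 1) else 1)
                ⟨k.1 + 1, by have := k.2; omega⟩ = 1 := by
            intro k
            have : (⟨k.1 + 1, by have := k.2; omega⟩ : Fin n) ≠ 0 := by
              intro hh; have := Fin.val_eq_of_eq hh; simp at this
            simp [this]
          rw [Finset.sum_congr rfl fun k _ => this k, Finset.sum_const, Finset.card_univ,
            Fintype.card_fin, nsmul_eq_mul, hcard]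
          simp [h]
        · rw [T_row_ne n hn _ i hi]
          simp [hi, h]
          ring
end

section
/- Let n ≥ 1, z₀ ∈ ℂ, r > 0, ρ ∈ ℂ, and let a_{−1}, a_0, a_1, … be n×n complex matrices such that A(z) = a_{−1}/(z−z₀) + Σ_{j≥0} a_j (z−z₀)^j, with the power series converging for |z−z₀| < r. Suppose m ∈ ℤ and b_m, b_{m+1}, … are n×n complex matrices with b_m ≠ 0 such that W(z) = Σ_{p≥m} b_p (z−z₀)^p converges for 0 < |z−z₀| < r and W′(z) = ρ·A(z)·W(z) for all z with 0 < |z−z₀| < r. Then m is an eigenvalue of the matrix ρ·a_{−1}, i.e. det(m·I_n − ρ·a_{−1}) = 0. -/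
open Matrix
open scoped Topology

private lemma power_aux' (r : ℝ) (hr : 0 < r) (c : ℕ → ℂ)
    (hsum : ∀ w : ℂ, w ≠ 0 → ‖w‖ < r → Summable (fun p : ℕ => c p * w ^ p)) :
    ∃ F : ℂ → ℂ,
      (∀ w : ℂ, ‖w‖ < r → HasSum (fun p : ℕ => c p * w ^ p) (F w)) ∧
      F 0 = c 0 ∧ ContinuousAt F 0 ∧ ContinuousAt (deriv F) 0 ∧
      (∀ w : ℂ, ‖w‖ < r → HasDerivAt F (deriv F w) w) := by
  set p := FormalMultilinearSeries.ofScalars ℂ c with hp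
  have hrad : ENNReal.ofReal r ≤ p.radius := by
    apply ENNReal.le_of_forall_nnreal_lt
    intro s hs
    have hsr : (s : ℝ) < r := by
      rw [← ENNReal.ofReal_coe_nnreal] at hs
      exact (ENNReal.ofReal_lt_ofReal_iff_of_nonneg s.coe_nonneg).1 hs
    rcases eq_or_ne s 0 with rfl | hs0
    · simp
    · have hspos : (0:ℝ) < s := lt_of_le_of_ne s.coe_nonneg (by exact_mod_cast (Ne.symm hs0))
      have hsum' := hsum ((s:ℝ) : ℂ) (by exact_mod_cast hspos.ne') (by simpa [Complex.norm_of_nonneg s.coe_nonneg] using hsr)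
      have htend : Filter.Tendsto (fun n : ℕ => ‖c n * ((s:ℝ):ℂ) ^ n‖) Filter.atTop (𝓝 0) := by
        simpa using hsum'.tendsto_atTop_zero.norm
      obtain ⟨C, hC⟩ := htend.bddAbove_range
      apply p.le_radius_of_bound C
      intro n
      have : ‖p n‖ = ‖c n‖ := FormalMultilinearSeries.ofScalars_norm ℂ c n
      rw [this]
      have h2 : ‖c n‖ * (s:ℝ) ^ n = ‖c n * ((s:ℝ):ℂ) ^ n‖ := by
        rw [norm_mul, norm_pow, Complex.norm_real, Real.norm_eq_abs, abs_of_nonneg s.coe_nonneg]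
      rw [h2]
      exact hC ⟨n, rfl⟩
  have hradpos : 0 < p.radius := lt_of_lt_of_le (by simpa using ENNReal.ofReal_pos.2 hr) hrad
  have hball := p.hasFPowerSeriesOnBall hradpos
  have hmem : ∀ w : ℂ, ‖w‖ < r → w ∈ Metric.eball (0 : ℂ) p.radius := by
    intro w hw
    rw [Metric.mem_eball, edist_zero_right]
    calc (‖w‖₊ : ENNReal) = ENNReal.ofReal ‖w‖ := (ofReal_norm w).symm
      _ < ENNReal.ofReal r := by
          exact ENNReal.ofReal_lt_ofReal_iff_of_nonneg (norm_nonneg w) |>.2 hw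
      _ ≤ p.radius := hrad
  have hhs : ∀ w : ℂ, ‖w‖ < r → HasSum (fun n : ℕ => c n * w ^ n) (p.sum w) := by
    intro w hw
    have := p.hasSum (x := w) (by simpa [edist_zero_right] using hmem w hw)
    have e : (fun n : ℕ => c n * w ^ n) = fun n => p n fun _ => w := by
      funext n
      rw [hp, FormalMultilinearSeries.ofScalars_apply_eq, smul_eq_mul]
    rw [e]; exact this
  have hF0 : p.sum 0 = c 0 := by
    have h1 := hhs 0 (by simpa using hr)
    have h2 : HasSum (fun n : ℕ => c n * (0:ℂ) ^ n) (c 0) := by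
      convert hasSum_single (f := fun n : ℕ => c n * (0:ℂ) ^ n) 0 ?_ using 1
      · simp
      · intro b hb; simp [zero_pow hb]
    exact h1.unique h2
  have hAn : AnalyticOnNhd ℂ p.sum (Metric.eball 0 p.radius) := by
    intro y hy
    exact hball.analyticAt_of_mem (by simpa using hy)
  have hAn' : AnalyticOnNhd ℂ (deriv p.sum) (Metric.eball 0 p.radius) := hAn.deriv
  have h0mem : (0:ℂ) ∈ Metric.eball (0:ℂ) p.radius := by simpa using hradpos
  refine ⟨p.sum, hhs, hF0, (hAn 0 h0mem).continuousAt, (hAn' 0 h0mem).continuousAt, ?_⟩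
  intro w hw
  exact ((hAn w (hmem w hw)).differentiableAt).hasDerivAt


/-- Necessary condition: if `A` has a simple pole at `z₀` with residue `a₋₁` and analytic
part `Σ aⱼ (z-z₀)ʲ` on `|z-z₀| < r`, and a nonzero Laurent-type solution
`W(z) = Σ_{p≥m} b_p (z-z₀)^p` (indexed here by `b : ℕ → M_n(ℂ)`, `b_p := b (p-m)`)
of `W' = ρ·A·W` exists on `0 < |z-z₀| < r`, then `m` is an eigenvalue of `ρ·a₋₁`,
i.e. `det (m·I - ρ·a₋₁) = 0`.  All derivatives and series are entrywise. -/
theorem pole_order_is_eigenvalue (n : ℕ) (z₀ : ℂ) (r : ℝ) (hr : 0 < r) (ρ : ℂ)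
    (am1 : Matrix (Fin n) (Fin n) ℂ) (a : ℕ → Matrix (Fin n) (Fin n) ℂ)
    (A : ℂ → Matrix (Fin n) (Fin n) ℂ)
    (hA : ∀ z : ℂ, z ≠ z₀ → ‖z - z₀‖ < r → ∀ i j,
      HasSum (fun p : ℕ => a p i j * (z - z₀) ^ p) (A z i j - am1 i j / (z - z₀)))
    (m : ℤ) (b : ℕ → Matrix (Fin n) (Fin n) ℂ) (hb : b 0 ≠ 0)
    (W : ℂ → Matrix (Fin n) (Fin n) ℂ)
    (hW : ∀ z : ℂ, z ≠ z₀ → ‖z - z₀‖ < r → ∀ i j,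
      HasSum (fun p : ℕ => b p i j * (z - z₀) ^ (m + (p : ℤ))) (W z i j))
    (hODE : ∀ z : ℂ, z ≠ z₀ → ‖z - z₀‖ < r → ∀ i j,
      HasDerivAt (fun w => W w i j) ((ρ • (A z * W z)) i j) z) :
    Matrix.det ((m : ℂ) • (1 : Matrix (Fin n) (Fin n) ℂ) - ρ • am1) = 0 := by
  -- power series sums for the entries of b
  have keyB : ∀ i j : Fin n, ∃ F : ℂ → ℂ,
      (∀ w : ℂ, ‖w‖ < r → HasSum (fun p : ℕ => b p i j * w ^ p) (F w)) ∧
      F 0 = b 0 i j ∧ ContinuousAt F 0 ∧ ContinuousAt (deriv F) 0 ∧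
      (∀ w : ℂ, ‖w‖ < r → HasDerivAt F (deriv F w) w) := by
    intro i j
    apply power_aux' r hr
    intro w hw0 hwr
    have h := hW (z₀ + w) (by simpa using hw0) (by simpa using hwr) i j
    rw [add_sub_cancel_left] at h
    have h2 := (h.summable).mul_left (w ^ (-m))
    apply h2.congr
    intro p
    rw [← mul_assoc, mul_comm (w ^ (-m)), mul_assoc, ← zpow_add₀ hw0]
    rw [add_comm m, ← add_assoc, neg_add_cancel_comm]  -- may need fixing
    rw [zpow_natCast]
  choose Fb hFbsum hFb0 hFbc hFbdc hFbd using keyB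
  have keyA : ∀ i k : Fin n, ∃ F : ℂ → ℂ,
      (∀ w : ℂ, ‖w‖ < r → HasSum (fun p : ℕ => a p i k * w ^ p) (F w)) ∧
      F 0 = a 0 i k ∧ ContinuousAt F 0 ∧ ContinuousAt (deriv F) 0 ∧
      (∀ w : ℂ, ‖w‖ < r → HasDerivAt F (deriv F w) w) := by
    intro i k
    apply power_aux' r hr
    intro w hw0 hwr
    have h := hA (z₀ + w) (by simpa using hw0) (by simpa using hwr) i k
    rw [add_sub_cancel_left] at h
    exact h.summable
  choose Ha hHasum hHa0 hHac hHadc hHad using keyA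
  -- identification of W with the Laurent series expression
  have hWeq : ∀ z : ℂ, z ≠ z₀ → ‖z - z₀‖ < r → ∀ i j : Fin n,
      W z i j = (z - z₀) ^ m * Fb i j (z - z₀) := by
    intro z hz hzr i j
    have hu : z - z₀ ≠ 0 := sub_ne_zero.2 hz
    have h1 := hW z hz hzr i j
    have h2 := (hFbsum i j (z - z₀) hzr).mul_left ((z - z₀) ^ m)
    have h3 : (fun p : ℕ => (z - z₀) ^ m * (b p i j * (z - z₀) ^ (p : ℕ)))
        = fun p : ℕ => b p i j * (z - z₀) ^ (m + (p : ℤ)) := by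
      funext p
      rw [zpow_add₀ hu, zpow_natCast]
      ring
    rw [h3] at h2
    exact h1.unique h2
  have hAeq : ∀ z : ℂ, z ≠ z₀ → ‖z - z₀‖ < r → ∀ i k : Fin n,
      A z i k = am1 i k / (z - z₀) + Ha i k (z - z₀) := by
    intro z hz hzr i k
    have h := (hA z hz hzr i k).unique (hHasum i k (z - z₀) hzr)
    linear_combination h
  have hopen : IsOpen {w : ℂ | w ≠ z₀ ∧ ‖w - z₀‖ < r} := by
    apply IsOpen.inter isOpen_ne
    have : Continuous fun w : ℂ => ‖w - z₀‖ :=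
      continuous_norm.comp (continuous_id.sub continuous_const)
    exact isOpen_lt this continuous_const
  -- the main pointwise identity after cancelling (z-z₀)^(m-1)
  have hmain : ∀ z : ℂ, z ≠ z₀ → ‖z - z₀‖ < r → ∀ i j : Fin n,
      ρ * ∑ k, (am1 i k + (z - z₀) * Ha i k (z - z₀)) * Fb k j (z - z₀)
        = (m : ℂ) * Fb i j (z - z₀) + (z - z₀) * deriv (Fb i j) (z - z₀) := by
    intro z hz hzr i j
    have hu : z - z₀ ≠ 0 := sub_ne_zero.2 hz
    have hm' : (z - z₀) ^ m = (z - z₀) ^ (m - 1) * (z - z₀) := by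
      rw [← zpow_add_one₀ hu, sub_add_cancel]
    have hinner : HasDerivAt (fun w : ℂ => w - z₀) 1 z := (hasDerivAt_id z).sub_const z₀
    have h1 : HasDerivAt (fun w : ℂ => (w - z₀) ^ m) ((m : ℂ) * (z - z₀) ^ (m - 1)) z := by
      have := (hasDerivAt_zpow m (z - z₀) (Or.inl hu)).comp z hinner; rw [mul_one] at this; exact this
    have h2 : HasDerivAt (fun w : ℂ => Fb i j (w - z₀)) (deriv (Fb i j) (z - z₀)) z := by
      have := (hFbd i j (z - z₀) hzr).comp z hinner; rw [mul_one] at this; exact this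
    have h3 := h1.mul h2
    have hev : (fun w => W w i j) =ᶠ[𝓝 z] fun w => (w - z₀) ^ m * Fb i j (w - z₀) := by
      filter_upwards [hopen.mem_nhds ⟨hz, hzr⟩] with w hw
      exact hWeq w hw.1 hw.2 i j
    have h4 : HasDerivAt (fun w => W w i j)
        ((m : ℂ) * (z - z₀) ^ (m - 1) * Fb i j (z - z₀)
          + (z - z₀) ^ m * deriv (Fb i j) (z - z₀)) z :=
      h3.congr_of_eventuallyEq hev
    have h5 := (hODE z hz hzr i j).unique h4
    have h6 : (ρ • (A z * W z)) i j
        = (z - z₀) ^ (m - 1)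
          * (ρ * ∑ k, (am1 i k + (z - z₀) * Ha i k (z - z₀)) * Fb k j (z - z₀)) := by
      rw [Matrix.smul_apply, Matrix.mul_apply, smul_eq_mul, Finset.mul_sum, Finset.mul_sum,
        Finset.mul_sum]
      apply Finset.sum_congr rfl
      intro k _
      rw [hAeq z hz hzr i k, hWeq z hz hzr k j, hm']
      field_simp
    have h7 : (m : ℂ) * (z - z₀) ^ (m - 1) * Fb i j (z - z₀)
          + (z - z₀) ^ m * deriv (Fb i j) (z - z₀)
        = (z - z₀) ^ (m - 1)
          * ((m : ℂ) * Fb i j (z - z₀) + (z - z₀) * deriv (Fb i j) (z - z₀)) := by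
      rw [hm']; ring
    rw [h6, h7] at h5
    exact mul_left_cancel₀ (zpow_ne_zero _ hu) h5
  -- passing to the limit z → z₀
  have hlim : ∀ i j : Fin n, ρ * ∑ k, am1 i k * b 0 k j = (m : ℂ) * b 0 i j := by
    intro i j
    have hsub : Filter.Tendsto (fun z : ℂ => z - z₀) (𝓝[≠] z₀) (𝓝 0) := by
      have h0 : Filter.Tendsto (fun z : ℂ => z - z₀) (𝓝 z₀) (𝓝 (z₀ - z₀)) :=
        (continuous_id.sub continuous_const).continuousAt
      rw [sub_self] at h0
      exact h0.mono_left nhdsWithin_le_nhds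
    have hG : ContinuousAt (fun w : ℂ => ρ * ∑ k, (am1 i k + w * Ha i k w) * Fb k j w) 0 := by
      apply ContinuousAt.mul continuousAt_const
      exact tendsto_finset_sum _ fun k _ =>
        (continuousAt_const.add (continuousAt_id.mul (hHac i k))).mul (hFbc k j)
    have lim1 : Filter.Tendsto
        (fun z : ℂ => ρ * ∑ k, (am1 i k + (z - z₀) * Ha i k (z - z₀)) * Fb k j (z - z₀))
        (𝓝[≠] z₀) (𝓝 (ρ * ∑ k, am1 i k * b 0 k j)) := by
      have := hG.tendsto.comp hsub
      simp only [Function.comp_def] at this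
      convert this using 2
      simp [hFb0]
    have hH : ContinuousAt (fun w : ℂ => (m : ℂ) * Fb i j w + w * deriv (Fb i j) w) 0 := by
      exact (continuousAt_const.mul (hFbc i j)).add (continuousAt_id.mul (hFbdc i j))
    have lim2 : Filter.Tendsto
        (fun z : ℂ => (m : ℂ) * Fb i j (z - z₀) + (z - z₀) * deriv (Fb i j) (z - z₀))
        (𝓝[≠] z₀) (𝓝 ((m : ℂ) * b 0 i j)) := by
      have := hH.tendsto.comp hsub
      simp only [Function.comp_def] at this
      convert this using 2
      simp [hFb0]
    have hballmem : {z : ℂ | ‖z - z₀‖ < r} ∈ 𝓝 z₀ := by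
      have : Continuous fun w : ℂ => ‖w - z₀‖ :=
        continuous_norm.comp (continuous_id.sub continuous_const)
      exact (isOpen_lt this continuous_const).mem_nhds (by simpa using hr)
    have hev : (fun z : ℂ => ρ * ∑ k, (am1 i k + (z - z₀) * Ha i k (z - z₀)) * Fb k j (z - z₀))
        =ᶠ[𝓝[≠] z₀]
        fun z : ℂ => (m : ℂ) * Fb i j (z - z₀) + (z - z₀) * deriv (Fb i j) (z - z₀) := by
      filter_upwards [mem_nhdsWithin_of_mem_nhds hballmem, self_mem_nhdsWithin]
        with z h1 h2
      exact hmain z h2 h1 i j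
    exact tendsto_nhds_unique (lim1.congr' hev) lim2
  -- conclusion
  set M : Matrix (Fin n) (Fin n) ℂ := (m : ℂ) • (1 : Matrix (Fin n) (Fin n) ℂ) - ρ • am1 with hM
  have hMb : M * b 0 = 0 := by
    ext i j
    rw [Matrix.mul_apply]
    simp only [hM, Matrix.sub_apply, Matrix.smul_apply, Matrix.one_apply, smul_eq_mul,
      Matrix.zero_apply, sub_mul]
    rw [Finset.sum_sub_distrib]
    have e1 : ∑ k, (m : ℂ) * (if i = k then (1:ℂ) else 0) * b 0 k j = (m : ℂ) * b 0 i j := by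
      simp [mul_ite, ite_mul, Finset.sum_ite_eq]
    have e2 : ∑ k, ρ * am1 i k * b 0 k j = ρ * ∑ k, am1 i k * b 0 k j := by
      rw [Finset.mul_sum]
      exact Finset.sum_congr rfl fun k _ => by ring
    rw [e1, e2, ← hlim i j, sub_self]
  by_contra hdet
  have hu : IsUnit M.det := isUnit_iff_ne_zero.2 hdet
  have hinv := Matrix.nonsing_inv_mul M hu
  apply hb
  calc b 0 = 1 * b 0 := (one_mul _).symm
    _ = (M⁻¹ * M) * b 0 := by rw [hinv]
    _ = M⁻¹ * (M * b 0) := by rw [Matrix.mul_assoc]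
    _ = 0 := by rw [hMb, Matrix.mul_zero]
end

section
/- Let n ≥ 1, z₀ ∈ ℂ, r > 0, ρ ∈ ℂ, and let a_{−1}, a_0, a_1, … be n×n complex matrices such that A(z) = a_{−1}/(z−z₀) + Σ_{j≥0} a_j (z−z₀)^j, with the power series converging for |z−z₀| < r. Let m ≤ M be integers such that M is an eigenvalue of ρ·a_{−1} and no integer q > M is an eigenvalue of ρ·a_{−1}. Suppose n×n matrices b_m, b_{m+1}, …, b_M with b_m ≠ 0 satisfy the recursion ((q+1)·I_n − ρ·a_{−1})·b_{q+1} = Σ_{j≥0, ℓ≥m, j+ℓ=q} ρ·a_j·b_ℓ for every integer q with m ≤ q+1 ≤ M. Then there exist n×n matrices b_p for p > M and a radius r′ with 0 < r′ ≤ r such that W(z) = Σ_{p≥m} b_p (z−z₀)^p converges for 0 < |z−z₀| < r′ and satisfies W′(z) = ρ·A(z)·W(z) for all z with 0 < |z−z₀| < r′. -/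
set_option maxHeartbeats 2000000

open Matrix

attribute [local instance] Matrix.linftyOpNormedRing Matrix.linftyOpNormedAlgebra

/-- entry norm is at most the `L∞`-operator norm -/
private theorem entry_le_norm {n : ℕ} (A : Matrix (Fin n) (Fin n) ℂ) (i j : Fin n) :
    ‖A i j‖ ≤ ‖A‖ := by
  rw [← coe_nnnorm, ← coe_nnnorm, NNReal.coe_le_coe, Matrix.linfty_opNNNorm_def]
  exact le_trans (Finset.single_le_sum (f := fun j => ‖A i j‖₊) (by simp) (Finset.mem_univ j))
    (Finset.le_sup (f := fun i => ∑ j, ‖A i j‖₊) (Finset.mem_univ i))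

private theorem norm_le_card_mul {n : ℕ} (A : Matrix (Fin n) (Fin n) ℂ) (c : ℝ) (hc : 0 ≤ c)
    (h : ∀ i j, ‖A i j‖ ≤ c) : ‖A‖ ≤ n * c := by
  have hnn : ∀ i j, ‖A i j‖₊ ≤ ⟨c, hc⟩ := fun i j => h i j
  rw [← coe_nnnorm]
  have : ‖A‖₊ ≤ n • (⟨c, hc⟩ : NNReal) := by
    rw [Matrix.linfty_opNNNorm_def]
    refine Finset.sup_le fun i _ => le_trans (Finset.sum_le_card_nsmul _ _ _
      (fun j _ => hnn i j)) ?_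
    simp
    exact (nsmul_eq_mul _ _).le
  calc (‖A‖₊ : ℝ) ≤ ((n • (⟨c, hc⟩ : NNReal) : NNReal) : ℝ) := by exact_mod_cast this
    _ = n * c := by push_cast [NNReal.smul_def]; ring

private theorem inv_norm_bound {n : ℕ} [Nonempty (Fin n)] (ρ : ℂ)
    (am1 : Matrix (Fin n) (Fin n) ℂ) (M : ℤ) :
    ∃ K : ℝ, 0 ≤ K ∧ ∀ q : ℤ, M < q →
      ‖((q : ℂ) • (1 : Matrix (Fin n) (Fin n) ℂ) - ρ • am1)⁻¹‖ ≤ K := by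
  set c₀ : ℝ := ‖ρ • am1‖ with hc₀def
  have hc₀ : 0 ≤ c₀ := norm_nonneg _
  set N₀ : ℤ := max (M + 1) (⌈2 * c₀⌉ + 1) with hN₀def
  have key : ∀ q : ℤ, N₀ ≤ q → ‖((q : ℂ) • (1 : Matrix (Fin n) (Fin n) ℂ) - ρ • am1)⁻¹‖ ≤ 2 := by
    intro q hq
    have hceil : (0:ℤ) ≤ ⌈2 * c₀⌉ := Int.ceil_nonneg (by linarith)
    have hq1 : (1:ℤ) ≤ q := le_trans (by omega) (le_trans (le_max_right _ _) hq)
    have hq1R : (1:ℝ) ≤ (q:ℝ) := by exact_mod_cast hq1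
    have h2c : 2 * c₀ ≤ (q:ℝ) := by
      have h1 : (⌈2 * c₀⌉ : ℝ) ≤ (q:ℝ) - 1 := by
        have h0 : ⌈2 * c₀⌉ + 1 ≤ q := le_trans (le_max_right _ _) hq
        have h0' : (⌈2 * c₀⌉ + 1 : ℝ) ≤ (q:ℝ) := by exact_mod_cast h0
        linarith
      linarith [Int.le_ceil (2 * c₀)]
    have hqC : ((q:ℤ) : ℂ) ≠ 0 := by exact_mod_cast (by omega : (q:ℤ) ≠ 0)
    set B : Matrix (Fin n) (Fin n) ℂ := ((q:ℂ))⁻¹ • (ρ • am1) with hBdef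
    have hnormq : ‖((q:ℤ):ℂ)‖ = (q:ℝ) := by
      rw [show ((q:ℤ):ℂ) = ((q:ℝ):ℂ) by push_cast; ring, Complex.norm_real]
      exact abs_of_pos (by linarith)
    have hBnorm : ‖B‖ ≤ 1/2 := by
      rw [hBdef, norm_smul, norm_inv, hnormq]
      rw [inv_mul_le_iff₀ (by linarith)]
      linarith
    have hB2 : ‖B‖ < 1 := lt_of_le_of_lt hBnorm (by norm_num)
    have hgeo : Summable fun i : ℕ => B ^ i := summable_geometric_of_norm_lt_one hB2
    have hpow : ∀ i : ℕ, ‖B ^ i‖ ≤ ‖B‖ ^ i := by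
      intro i
      cases i with
      | zero => simp
      | succ j => exact norm_pow_le' B j.succ_pos
    have hgeoR : Summable fun i : ℕ => ‖B‖ ^ i :=
      summable_geometric_of_lt_one (norm_nonneg _) hB2
    have hsn : Summable fun i : ℕ => ‖B ^ i‖ :=
      Summable.of_nonneg_of_le (fun i => norm_nonneg _) hpow hgeoR
    have hSnorm : ‖∑' i : ℕ, B ^ i‖ ≤ 2 := by
      calc ‖∑' i : ℕ, B ^ i‖ ≤ ∑' i : ℕ, ‖B ^ i‖ := norm_tsum_le_tsum_norm hsn
        _ ≤ ∑' i : ℕ, ‖B‖ ^ i := Summable.tsum_le_tsum hpow hsn hgeoR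
        _ = (1 - ‖B‖)⁻¹ := tsum_geometric_of_lt_one (norm_nonneg _) hB2
        _ ≤ 2 := by
            rw [inv_le_comm₀ (by linarith) (by norm_num)]
            linarith
    have hXq : (q:ℂ) • (1 : Matrix (Fin n) (Fin n) ℂ) - ρ • am1 = (q:ℂ) • (1 - B) := by
      rw [hBdef, smul_sub, smul_smul, mul_inv_cancel₀ hqC, one_smul]
    have hinv : ((q:ℂ) • (1 : Matrix (Fin n) (Fin n) ℂ) - ρ • am1)⁻¹
        = ((q:ℂ))⁻¹ • ∑' i : ℕ, B ^ i := by
      apply Matrix.inv_eq_right_inv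
      rw [hXq, Matrix.smul_mul, Matrix.mul_smul, smul_smul, mul_inv_cancel₀ hqC, one_smul]
      exact mul_neg_geom_series B hB2
    rw [hinv, norm_smul, norm_inv, hnormq]
    calc ((q:ℝ))⁻¹ * ‖∑' i : ℕ, B ^ i‖ ≤ 1 * 2 := by
          apply mul_le_mul _ hSnorm (norm_nonneg _) (by norm_num)
          rw [inv_le_one_iff₀]; right; linarith
      _ = 2 := by norm_num
  refine ⟨2 + ∑ q ∈ Finset.Icc (M + 1) (N₀ - 1),
    ‖((q : ℂ) • (1 : Matrix (Fin n) (Fin n) ℂ) - ρ • am1)⁻¹‖, ?_, ?_⟩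
  · have hs : (0:ℝ) ≤ ∑ q ∈ Finset.Icc (M + 1) (N₀ - 1),
        ‖((q : ℂ) • (1 : Matrix (Fin n) (Fin n) ℂ) - ρ • am1)⁻¹‖ :=
      Finset.sum_nonneg fun _ _ => norm_nonneg _
    linarith
  · intro q hq
    by_cases hqN : N₀ ≤ q
    · have h2 := key q hqN
      have hs : (0:ℝ) ≤ ∑ q ∈ Finset.Icc (M + 1) (N₀ - 1),
          ‖((q : ℂ) • (1 : Matrix (Fin n) (Fin n) ℂ) - ρ • am1)⁻¹‖ :=
        Finset.sum_nonneg fun _ _ => norm_nonneg _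
      linarith
    · have hmem : q ∈ Finset.Icc (M + 1) (N₀ - 1) := Finset.mem_Icc.mpr ⟨by omega, by omega⟩
      have h2 := Finset.single_le_sum
        (f := fun q : ℤ => ‖((q : ℂ) • (1 : Matrix (Fin n) (Fin n) ℂ) - ρ • am1)⁻¹‖)
        (fun _ _ => norm_nonneg _) hmem
      linarith

/-- The Frobenius coefficients: equal to `b (m+k)` for `m+k ≤ M`, and defined
recursively by solving the recursion for `m+k > M`. -/
noncomputable def frobCoeff {n : ℕ} (ρ : ℂ) (am1 : Matrix (Fin n) (Fin n) ℂ)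
    (a : ℕ → Matrix (Fin n) (Fin n) ℂ) (m M : ℤ) (b : ℤ → Matrix (Fin n) (Fin n) ℂ) :
    ℕ → Matrix (Fin n) (Fin n) ℂ
  | k =>
    if (m + (k : ℤ)) ≤ M then b (m + k)
    else (((m + (k : ℤ) : ℤ) : ℂ) • (1 : Matrix (Fin n) (Fin n) ℂ) - ρ • am1)⁻¹ *
      ∑ l ∈ (Finset.range k).attach,
        ρ • (a (k - 1 - (l : ℕ)) * frobCoeff ρ am1 a m M b l)
  decreasing_by exact Finset.mem_range.mp l.2

private theorem frobCoeff_of_le {n : ℕ} (ρ : ℂ) (am1 : Matrix (Fin n) (Fin n) ℂ)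
    (a : ℕ → Matrix (Fin n) (Fin n) ℂ) (m M : ℤ) (b : ℤ → Matrix (Fin n) (Fin n) ℂ)
    (k : ℕ) (h : m + (k : ℤ) ≤ M) : frobCoeff ρ am1 a m M b k = b (m + k) := by
  rw [frobCoeff, if_pos h]

private theorem frobCoeff_of_gt {n : ℕ} (ρ : ℂ) (am1 : Matrix (Fin n) (Fin n) ℂ)
    (a : ℕ → Matrix (Fin n) (Fin n) ℂ) (m M : ℤ) (b : ℤ → Matrix (Fin n) (Fin n) ℂ)
    (k : ℕ) (h : ¬ (m + (k : ℤ) ≤ M)) :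
    frobCoeff ρ am1 a m M b k =
      (((m + (k : ℤ) : ℤ) : ℂ) • (1 : Matrix (Fin n) (Fin n) ℂ) - ρ • am1)⁻¹ *
      ∑ l ∈ Finset.range k, ρ • (a (k - 1 - l) * frobCoeff ρ am1 a m M b l) := by
  rw [frobCoeff, if_neg h, ← Finset.sum_attach (Finset.range k)
    (fun l => ρ • (a (k - 1 - l) * frobCoeff ρ am1 a m M b l))]

private theorem frob_rec {n : ℕ} (ρ : ℂ) (am1 : Matrix (Fin n) (Fin n) ℂ)
    (a : ℕ → Matrix (Fin n) (Fin n) ℂ) (m M : ℤ) (hmM : m ≤ M)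
    (hnoeig : ∀ q : ℤ, M < q →
      Matrix.det ((q : ℂ) • (1 : Matrix (Fin n) (Fin n) ℂ) - ρ • am1) ≠ 0)
    (b : ℤ → Matrix (Fin n) (Fin n) ℂ)
    (hrec : ∀ q : ℤ, m ≤ q + 1 → q + 1 ≤ M →
      (((q : ℂ) + 1) • (1 : Matrix (Fin n) (Fin n) ℂ) - ρ • am1) * b (q + 1)
        = ∑ l ∈ Finset.Icc m q, ρ • (a (q - l).toNat * b l)) :
    ∀ k : ℕ, (((m + (k : ℤ) : ℤ) : ℂ) • (1 : Matrix (Fin n) (Fin n) ℂ) - ρ • am1)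
        * frobCoeff ρ am1 a m M b k
      = ∑ l ∈ Finset.range k, ρ • (a (k - 1 - l) * frobCoeff ρ am1 a m M b l) := by
  intro k
  by_cases h : m + (k : ℤ) ≤ M
  · rw [frobCoeff_of_le ρ am1 a m M b k h]
    have key := hrec (m + (k:ℤ) - 1) (by omega) (by omega)
    rw [show m + (k:ℤ) - 1 + 1 = m + k by ring] at key
    have hc : ((m + (k:ℤ) - 1 : ℤ) : ℂ) + 1 = ((m + (k:ℤ) : ℤ) : ℂ) := by push_cast; ring
    rw [hc] at key
    rw [key]
    refine Finset.sum_nbij' (i := fun l : ℤ => (l - m).toNat) (j := fun l' : ℕ => m + (l' : ℤ))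
      ?_ ?_ ?_ ?_ ?_
    · intro l hl
      simp only [Finset.mem_Icc] at hl
      simp only [Finset.mem_range]
      omega
    · intro l' hl'
      simp only [Finset.mem_range] at hl'
      simp only [Finset.mem_Icc]
      omega
    · intro l hl; simp only [Finset.mem_Icc] at hl
      show m + (((l - m).toNat : ℕ) : ℤ) = l; omega
    · intro l' hl'; simp only [Finset.mem_range] at hl'
      show (m + (l' : ℤ) - m).toNat = l'; omega
    · intro l hl
      simp only [Finset.mem_Icc] at hl
      have h1 : (m + (k:ℤ) - 1 - l).toNat = k - 1 - (l - m).toNat := by omega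
      have h2 : m + (((l - m).toNat : ℕ) : ℤ) ≤ M := by omega
      have h3 : m + (((l - m).toNat : ℕ) : ℤ) = l := by omega
      show ρ • (a (m + (k:ℤ) - 1 - l).toNat * b l)
        = ρ • (a (k - 1 - (l - m).toNat) * frobCoeff ρ am1 a m M b (l - m).toNat)
      rw [h1, frobCoeff_of_le ρ am1 a m M b _ h2, h3]
  · rw [frobCoeff_of_gt ρ am1 a m M b k h, ← mul_assoc,
      Matrix.mul_nonsing_inv _ (isUnit_iff_ne_zero.mpr (hnoeig (m + (k:ℤ)) (by omega))), one_mul]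

private theorem frob_growth {n : ℕ} [Nonempty (Fin n)] (ρ : ℂ)
    (am1 : Matrix (Fin n) (Fin n) ℂ)
    (a : ℕ → Matrix (Fin n) (Fin n) ℂ) (m M : ℤ) (hmM : m ≤ M)
    (b : ℤ → Matrix (Fin n) (Fin n) ℂ) (r : ℝ) (hr : 0 < r)
    (K : ℝ) (hK0 : 0 ≤ K)
    (hK : ∀ q : ℤ, M < q → ‖((q : ℂ) • (1 : Matrix (Fin n) (Fin n) ℂ) - ρ • am1)⁻¹‖ ≤ K)
    (Ca' : ℝ) (hCa'0 : 0 ≤ Ca') (ha : ∀ p : ℕ, ‖a p‖ ≤ Ca' * (2/r)^p) :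
    ∃ τ D : ℝ, 1 ≤ τ ∧ 1 ≤ D ∧ ∀ k : ℕ, ‖frobCoeff ρ am1 a m M b k‖ ≤ D * τ^k := by
  set τ : ℝ := max (4/r) (2*K*‖ρ‖*Ca') + 1 with hτdef
  have hmax0 : 0 ≤ max (4/r) (2*K*‖ρ‖*Ca') := le_max_of_le_left (by positivity)
  have hτ1 : 1 ≤ τ := by rw [hτdef]; linarith
  have hτ0 : 0 < τ := by linarith
  have hτ4 : 4/r ≤ τ := le_trans (le_max_left _ _) (by rw [hτdef]; linarith)
  have hτK : 2*K*‖ρ‖*Ca' ≤ τ := le_trans (le_max_right _ _) (by rw [hτdef]; linarith)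
  set D : ℝ := 1 + ∑ k ∈ Finset.range ((M - m).toNat + 1),
    ‖frobCoeff ρ am1 a m M b k‖ * (τ⁻¹)^k with hDdef
  have hsumD : 0 ≤ ∑ k ∈ Finset.range ((M - m).toNat + 1),
      ‖frobCoeff ρ am1 a m M b k‖ * (τ⁻¹)^k :=
    Finset.sum_nonneg fun _ _ => by positivity
  have hD1 : 1 ≤ D := by rw [hDdef]; linarith
  have hD0 : 0 ≤ D := by linarith
  refine ⟨τ, D, hτ1, hD1, ?_⟩
  intro k
  induction k using Nat.strong_induction_on with
  | _ k ih =>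
  by_cases hk : m + (k : ℤ) ≤ M
  · have hkmem : k ∈ Finset.range ((M - m).toNat + 1) := Finset.mem_range.mpr (by omega)
    have h1 : ‖frobCoeff ρ am1 a m M b k‖ * (τ⁻¹)^k ≤ D := by
      have := Finset.single_le_sum
        (f := fun k => ‖frobCoeff ρ am1 a m M b k‖ * (τ⁻¹)^k)
        (fun _ _ => by positivity) hkmem
      rw [hDdef]; linarith
    calc ‖frobCoeff ρ am1 a m M b k‖
        = (‖frobCoeff ρ am1 a m M b k‖ * (τ⁻¹)^k) * τ^k := by
          rw [mul_assoc, ← mul_pow, inv_mul_cancel₀ (ne_of_gt hτ0), one_pow, mul_one]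
      _ ≤ D * τ^k := mul_le_mul_of_nonneg_right h1 (by positivity)
  · have hk1 : 1 ≤ k := by omega
    rw [frobCoeff_of_gt ρ am1 a m M b k hk]
    have hsum2 : ∑ l ∈ Finset.range k, (2/r)^(k-1-l) * τ^l ≤ 2 * τ^(k-1) := by
      have step : ∀ l ∈ Finset.range k, (2/r)^(k-1-l) * τ^l ≤ (1/2)^(k-1-l) * τ^(k-1) := by
        intro l hl
        rw [Finset.mem_range] at hl
        have h42 : (4:ℝ)/r = 2*(2/r) := by ring
        have h2r : (2/r : ℝ) ≤ τ/2 := by linarith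
        calc (2/r)^(k-1-l) * τ^l ≤ (τ/2)^(k-1-l) * τ^l :=
              mul_le_mul_of_nonneg_right (pow_le_pow_left₀ (by positivity) h2r _) (by positivity)
          _ = (1/2)^(k-1-l) * (τ^(k-1-l) * τ^l) := by rw [div_pow, div_pow]; ring
          _ = (1/2)^(k-1-l) * τ^(k-1) := by rw [← pow_add]; congr 2; omega
      calc ∑ l ∈ Finset.range k, (2/r)^(k-1-l) * τ^l
          ≤ ∑ l ∈ Finset.range k, (1/2)^(k-1-l) * τ^(k-1) := Finset.sum_le_sum step
        _ = (∑ l ∈ Finset.range k, (1/2:ℝ)^(k-1-l)) * τ^(k-1) := by rw [Finset.sum_mul]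
        _ = (∑ l ∈ Finset.range k, (1/2:ℝ)^l) * τ^(k-1) := by
            rw [Finset.sum_range_reflect (fun l => (1/2:ℝ)^l) k]
        _ ≤ 2 * τ^(k-1) := by
            apply mul_le_mul_of_nonneg_right _ (by positivity)
            calc ∑ l ∈ Finset.range k, (1/2:ℝ)^l
                ≤ ∑' l : ℕ, (1/2:ℝ)^l := Summable.sum_le_tsum _ (fun _ _ => by positivity)
                  (summable_geometric_of_lt_one (by norm_num) (by norm_num))
              _ = 2 := by rw [tsum_geometric_of_lt_one (by norm_num) (by norm_num)]; norm_num
    calc ‖(((m + (k : ℤ) : ℤ) : ℂ) • (1 : Matrix (Fin n) (Fin n) ℂ) - ρ • am1)⁻¹ *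
          ∑ l ∈ Finset.range k, ρ • (a (k - 1 - l) * frobCoeff ρ am1 a m M b l)‖
        ≤ ‖(((m + (k : ℤ) : ℤ) : ℂ) • (1 : Matrix (Fin n) (Fin n) ℂ) - ρ • am1)⁻¹‖ *
          ‖∑ l ∈ Finset.range k, ρ • (a (k - 1 - l) * frobCoeff ρ am1 a m M b l)‖ :=
          norm_mul_le _ _
      _ ≤ K * ∑ l ∈ Finset.range k, ‖ρ‖ * ((Ca' * (2/r)^(k-1-l)) * (D * τ^l)) := by
          apply mul_le_mul (hK (m + (k:ℤ)) (by omega)) _ (norm_nonneg _) hK0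
          refine le_trans (norm_sum_le _ _) (Finset.sum_le_sum fun l hl => ?_)
          rw [Finset.mem_range] at hl
          rw [norm_smul]
          apply mul_le_mul_of_nonneg_left _ (norm_nonneg _)
          exact le_trans (norm_mul_le _ _)
            (mul_le_mul (ha _) (ih l hl) (norm_nonneg _) (by positivity))
      _ = (K * ‖ρ‖ * Ca' * D) * ∑ l ∈ Finset.range k, (2/r)^(k-1-l) * τ^l := by
          rw [Finset.mul_sum, Finset.mul_sum]; apply Finset.sum_congr rfl; intros; ring
      _ ≤ (K * ‖ρ‖ * Ca' * D) * (2 * τ^(k-1)) := by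
          apply mul_le_mul_of_nonneg_left hsum2 (by positivity)
      _ = (2 * K * ‖ρ‖ * Ca') * D * τ^(k-1) := by ring
      _ ≤ τ * D * τ^(k-1) := by
          apply mul_le_mul_of_nonneg_right (mul_le_mul_of_nonneg_right hτK hD0) (by positivity)
      _ = D * τ^k := by
          rw [show k = (k-1) + 1 by omega]; ring_nf
          rw [show 1 + (k - 1) - 1 = k - 1 by omega]

private theorem hasSum_finsetSum {ι : Type*} (s : Finset ι) (f : ι → ℕ → ℂ) (g : ι → ℂ)
    (h : ∀ i ∈ s, HasSum (f i) (g i)) :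
    HasSum (fun p => ∑ i ∈ s, f i p) (∑ i ∈ s, g i) := by
  classical
  induction s using Finset.induction with
  | empty => simpa using hasSum_zero
  | insert a s hx ih =>
    simp only [Finset.sum_insert hx]
    exact (h a (Finset.mem_insert_self a s)).add
      (ih fun i hi => h i (Finset.mem_insert_of_mem hi))

private theorem HasSum.congr_fun' {f g : ℕ → ℂ} {s : ℂ} (hf : HasSum f s)
    (h : ∀ p, f p = g p) : HasSum g s := (funext h : f = g) ▸ hf
/-- Sufficient condition: let `A` have a simple pole at `z₀` with residue `a₋₁` and
analytic part converging for `|z-z₀| < r`.  Let `m ≤ M` be integers with `M` an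
eigenvalue of `ρ·a₋₁` and no integer `q > M` an eigenvalue of `ρ·a₋₁`.  If matrices
`b_m, …, b_M` (given as `b : ℤ → M_n(ℂ)`) with `b m ≠ 0` satisfy the recursion
`((q+1)·I - ρ·a₋₁)·b_{q+1} = Σ_{j+ℓ=q, j≥0, ℓ≥m} ρ·a_j·b_ℓ` for `m ≤ q+1 ≤ M`,
then the coefficients extend to a Laurent-type solution
`W(z) = Σ_{p≥m} c_p (z-z₀)^p` of `W' = ρ·A·W` convergent on `0 < |z-z₀| < r'`
for some `0 < r' ≤ r`.  All derivatives and series are entrywise. -/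
theorem laurent_solution_exists (n : ℕ) (z₀ : ℂ) (r : ℝ) (hr : 0 < r) (ρ : ℂ)
    (am1 : Matrix (Fin n) (Fin n) ℂ) (a : ℕ → Matrix (Fin n) (Fin n) ℂ)
    (A : ℂ → Matrix (Fin n) (Fin n) ℂ)
    (hA : ∀ z : ℂ, z ≠ z₀ → ‖z - z₀‖ < r → ∀ i j,
      HasSum (fun p : ℕ => a p i j * (z - z₀) ^ p) (A z i j - am1 i j / (z - z₀)))
    (m M : ℤ) (hmM : m ≤ M)
    (hMeig : Matrix.det ((M : ℂ) • (1 : Matrix (Fin n) (Fin n) ℂ) - ρ • am1) = 0)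
    (hnoeig : ∀ q : ℤ, M < q →
      Matrix.det ((q : ℂ) • (1 : Matrix (Fin n) (Fin n) ℂ) - ρ • am1) ≠ 0)
    (b : ℤ → Matrix (Fin n) (Fin n) ℂ) (hb : b m ≠ 0)
    (hrec : ∀ q : ℤ, m ≤ q + 1 → q + 1 ≤ M →
      (((q : ℂ) + 1) • (1 : Matrix (Fin n) (Fin n) ℂ) - ρ • am1) * b (q + 1)
        = ∑ l ∈ Finset.Icc m q, ρ • (a (q - l).toNat * b l)) :
    ∃ (c : ℤ → Matrix (Fin n) (Fin n) ℂ) (r' : ℝ) (W : ℂ → Matrix (Fin n) (Fin n) ℂ),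
      (∀ p : ℤ, m ≤ p → p ≤ M → c p = b p) ∧ 0 < r' ∧ r' ≤ r ∧
      (∀ z : ℂ, z ≠ z₀ → ‖z - z₀‖ < r' →
        (∀ i j, HasSum (fun p : ℕ => c (m + p) i j * (z - z₀) ^ (m + (p : ℤ))) (W z i j)) ∧
        (∀ i j, HasDerivAt (fun w => W w i j) ((ρ • (A z * W z)) i j) z)) := by
  classical
  -- the case n = 0 is vacuous
  rcases Nat.eq_zero_or_pos n with hn0 | hn0
  · exfalso
    subst hn0
    haveI : IsEmpty (Fin 0) := inferInstance
    rw [Matrix.det_isEmpty] at hMeig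
    exact one_ne_zero hMeig
  haveI : Nonempty (Fin n) := ⟨⟨0, hn0⟩⟩
  -- entrywise bound on the coefficients a
  obtain ⟨Ca, hCa0, hCa⟩ : ∃ Ca : ℝ, 0 ≤ Ca ∧ ∀ (p : ℕ) (i j : Fin n),
      ‖a p i j‖ ≤ Ca * (2/r)^p := by
    set z₁ : ℂ := z₀ + ((r/2 : ℝ) : ℂ) with hz₁def
    have hsub : z₁ - z₀ = ((r/2 : ℝ) : ℂ) := by rw [hz₁def]; ring
    have habs : ‖z₁ - z₀‖ = r/2 := by
      rw [hsub, Complex.norm_real, Real.norm_eq_abs, abs_of_pos (by linarith)]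
    have hz₁ne : z₁ ≠ z₀ := by
      intro h
      rw [h, sub_self] at hsub
      have : (r/2 : ℝ) = 0 := by exact_mod_cast hsub.symm
      linarith
    have hS : ∀ i j : Fin n, Summable fun p : ℕ => ‖a p i j * (z₁ - z₀)^p‖ :=
      fun i j => summable_norm_iff.mpr (hA z₁ hz₁ne (by rw [habs]; linarith) i j).summable
    set C : Fin n × Fin n → ℝ := fun q => ∑' p : ℕ, ‖a p q.1 q.2 * (z₁ - z₀)^p‖ with hCdef
    have hCnn : ∀ q, 0 ≤ C q := fun q => tsum_nonneg fun _ => norm_nonneg _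
    set Ca : ℝ := ∑ q : Fin n × Fin n, C q with hCadef
    have hCa0 : 0 ≤ Ca := Finset.sum_nonneg fun q _ => hCnn q
    have hCle : ∀ q : Fin n × Fin n, C q ≤ Ca := fun q =>
      Finset.single_le_sum (fun q _ => hCnn q) (Finset.mem_univ q)
    refine ⟨Ca, hCa0, ?_⟩
    intro p i j
    have h1 : ‖a p i j * (z₁ - z₀)^p‖ ≤ C (i, j) :=
      Summable.le_tsum (hS i j) p (fun _ _ => norm_nonneg _)
    have h2 : ‖a p i j‖ * (r/2)^p ≤ Ca := by
      rw [norm_mul, norm_pow] at h1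
      rw [show ‖z₁ - z₀‖ = r/2 by rw [habs]] at h1
      exact le_trans h1 (hCle (i, j))
    have hpos : (0:ℝ) < (r/2)^p := by positivity
    rw [show ((2:ℝ)/r)^p = ((r/2)^p)⁻¹ by rw [← inv_pow]; congr 1; rw [inv_div],
      ← div_eq_mul_inv, le_div_iff₀ hpos]
    exact h2
  -- matrix norm bound on the coefficients a
  have haM : ∀ p : ℕ, ‖a p‖ ≤ (n * Ca) * (2/r)^p := by
    intro p
    have h := norm_le_card_mul (a p) (Ca * (2/r)^p) (by positivity) (fun i j => hCa p i j)
    calc ‖a p‖ ≤ n * (Ca * (2/r)^p) := h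
      _ = (n * Ca) * (2/r)^p := by ring
  obtain ⟨K, hK0, hK⟩ := inv_norm_bound ρ am1 M
  obtain ⟨τ, D, hτ1, hD1, hgrowM⟩ :=
    frob_growth ρ am1 a m M hmM b r hr K hK0 hK (n * Ca) (by positivity) haM
  have hτ0 : (0:ℝ) < τ := by linarith
  have hD0 : (0:ℝ) < D := by linarith
  set d : ℕ → Matrix (Fin n) (Fin n) ℂ := frobCoeff ρ am1 a m M b with hd
  have hgrow : ∀ (k : ℕ) (i j : Fin n), ‖d k i j‖ ≤ D * τ^k := fun k i j =>
    le_trans (entry_le_norm _ i j) (hgrowM k)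
  have hrec' := frob_rec ρ am1 a m M hmM hnoeig b hrec
  set r' : ℝ := min (r/2) (1/(2*τ)) with hr'def
  have hr'0 : 0 < r' := lt_min (by linarith) (by positivity)
  have hr'r2 : r' ≤ r/2 := min_le_left _ _
  have hr'τ : r' ≤ 1/(2*τ) := min_le_right _ _
  have hr'r : r' ≤ r := by linarith
  refine ⟨fun p => if m ≤ p then d (p - m).toNat else 0, r',
    fun z => Matrix.of fun i j => (z - z₀) ^ m * ∑' k : ℕ, d k i j * (z - z₀)^k,
    ?_, hr'0, hr'r, ?_⟩
  · intro p hmp hpM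
    simp only [if_pos hmp]
    rw [hd, frobCoeff_of_le ρ am1 a m M b (p - m).toNat (by omega),
      show m + (((p - m).toNat : ℕ) : ℤ) = p from by omega]
  · intro z hz0 hzr
    have hu0 : z - z₀ ≠ 0 := sub_ne_zero.mpr hz0
    have hnz : ‖z - z₀‖ < r' := by exact hzr
    have hur2 : ‖z - z₀‖ < r/2 := lt_of_lt_of_le hnz hr'r2
    have huτ : τ * ‖z - z₀‖ < 1/2 := by
      have h1 : ‖z - z₀‖ < 1/(2*τ) := lt_of_lt_of_le hnz hr'τ
      calc τ * ‖z - z₀‖ < τ * (1/(2*τ)) := by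
            exact mul_lt_mul_of_pos_left h1 hτ0
        _ = 1/2 := by field_simp
    have huτ1 : τ * ‖z - z₀‖ < 1 := by linarith
    have hu_nn : 0 ≤ ‖z - z₀‖ := norm_nonneg _
    -- summability of the main series, at any point of the ball
    have hdsum : ∀ (w : ℂ), ‖w - z₀‖ < r' → ∀ (i j : Fin n),
        Summable fun k : ℕ => d k i j * (w - z₀)^k := by
      intro w hw i j
      have hwτ : τ * ‖w - z₀‖ < 1 := by
        have h1 : ‖w - z₀‖ < 1/(2*τ) := lt_of_lt_of_le hw hr'τ
        have h2 : τ * ‖w - z₀‖ < τ * (1/(2*τ)) := mul_lt_mul_of_pos_left h1 hτ0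
        have h3 : τ * (1/(2*τ)) = 1/2 := by field_simp
        linarith
      apply Summable.of_norm
      refine Summable.of_nonneg_of_le (fun k => norm_nonneg _) (fun k => ?_)
        ((summable_geometric_of_lt_one (by positivity) hwτ).mul_left D)
      rw [norm_mul, norm_pow]
      calc ‖d k i j‖ * ‖w - z₀‖^k ≤ (D * τ^k) * ‖w - z₀‖^k :=
            mul_le_mul_of_nonneg_right (hgrow k i j) (by positivity)
        _ = D * (τ * ‖w - z₀‖)^k := by rw [mul_pow]; ring
    -- uniform bound inside the ball
    have hballτ : ∀ w : ℂ, ‖w - z₀‖ < r' → τ * ‖w - z₀‖ < 1/2 := by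
      intro w hw
      have h1 : ‖w - z₀‖ < 1/(2*τ) := lt_of_lt_of_le hw hr'τ
      have h2 : τ * ‖w - z₀‖ < τ * (1/(2*τ)) := mul_lt_mul_of_pos_left h1 hτ0
      have h3 : τ * (1/(2*τ)) = 1/2 := by field_simp
      linarith
    -- summable bound for the differentiated series
    have hgb_sum : Summable fun k : ℕ => D * τ * ((k : ℝ) * (1/2)^(k-1)) := by
      have h2 : Summable fun k : ℕ => (k:ℝ) * (1/2)^k := by
        have := summable_pow_mul_geometric_of_norm_lt_one (R := ℝ) 1
          (r := 1/2) (by norm_num [Real.norm_eq_abs])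
        simpa using this
      have h3 : Summable fun k : ℕ => (1/2:ℝ)^k :=
        summable_geometric_of_lt_one (by norm_num) (by norm_num)
      have h1 : Summable fun k : ℕ => ((k:ℝ) + 1) * (1/2)^k := by
        have := h2.add h3
        refine this.congr fun k => ?_
        ring
      have h4 : Summable fun k : ℕ => ((k:ℝ)) * (1/2)^(k-1) := by
        rw [← summable_nat_add_iff 1]
        refine h1.congr fun k => ?_
        simp only [Nat.add_sub_cancel]
        push_cast
        ring
      exact h4.mul_left _
    -- the bound itself
    have hgb : ∀ (i j : Fin n) (w : ℂ), w ∈ Metric.ball z₀ r' → ∀ k : ℕ,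
        ‖d k i j * ((k:ℂ) * (w - z₀)^(k-1))‖ ≤ D * τ * ((k : ℝ) * (1/2)^(k-1)) := by
      intro i j w hw k
      have hwn : ‖w - z₀‖ < r' := by rw [Metric.mem_ball, dist_eq_norm] at hw; exact hw
      have hwτ : τ * ‖w - z₀‖ ≤ 1/2 := le_of_lt (hballτ w hwn)
      cases k with
      | zero => simp
      | succ q =>
        rw [norm_mul, norm_mul, norm_pow]
        simp only [Nat.add_sub_cancel, Complex.norm_natCast]
        calc ‖d (q+1) i j‖ * ((q+1 : ℕ) * ‖w - z₀‖^q)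
            ≤ (D * τ^(q+1)) * ((q+1 : ℕ) * ‖w - z₀‖^q) :=
              mul_le_mul_of_nonneg_right (hgrow (q+1) i j) (by positivity)
          _ = D * τ * ((q+1 : ℕ) * (τ * ‖w - z₀‖)^q) := by rw [pow_succ, mul_pow]; ring
          _ ≤ D * τ * ((q+1 : ℕ) * (1/2)^q) := by
              apply mul_le_mul_of_nonneg_left _ (by positivity)
              exact mul_le_mul_of_nonneg_left
                (pow_le_pow_left₀ (by positivity) hwτ q) (by positivity)
    -- termwise differentiation
    have hVd : ∀ (i j : Fin n) (y : ℂ), y ∈ Metric.ball z₀ r' →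
        HasDerivAt (fun w => ∑' k : ℕ, d k i j * (w - z₀)^k)
          (∑' k : ℕ, d k i j * ((k:ℂ) * (y - z₀)^(k-1))) y := by
      intro i j y hy
      refine hasDerivAt_tsum_of_isPreconnected hgb_sum Metric.isOpen_ball
        (convex_ball z₀ r').isPreconnected (fun k w _hw => ?_)
        (fun k w hw => hgb i j w hw k) (Metric.mem_ball_self hr'0) ?_ hy
      · have h1 : HasDerivAt (fun w : ℂ => (w - z₀)^k) ((k:ℂ) * (w - z₀)^(k-1) * 1) w :=
          ((hasDerivAt_id w).sub_const z₀).pow k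
        simpa [mul_assoc] using h1.const_mul (d k i j)
      · refine summable_of_ne_finset_zero (s := ({0} : Finset ℕ)) fun k hk => ?_
        simp only [Finset.mem_singleton] at hk
        simp [sub_self, zero_pow hk]
    refine ⟨?_, ?_⟩
    · -- the HasSum statement
      intro i j
      have h1 : HasSum (fun k : ℕ => (z - z₀)^(m:ℤ) * (d k i j * (z - z₀)^k))
          ((z - z₀)^(m:ℤ) * ∑' k : ℕ, d k i j * (z - z₀)^k) :=
        (hdsum z hnz i j).hasSum.mul_left _
      show HasSum (fun p : ℕ => (if m ≤ m + (p:ℤ) then d (m + (p:ℤ) - m).toNat else 0) i j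
          * (z - z₀) ^ (m + (p : ℤ)))
        ((z - z₀)^(m:ℤ) * ∑' k : ℕ, d k i j * (z - z₀)^k)
      have heq : (fun p : ℕ => (if m ≤ m + (p:ℤ) then d (m + (p:ℤ) - m).toNat else 0) i j
          * (z - z₀) ^ (m + (p : ℤ)))
          = fun k : ℕ => (z - z₀)^(m:ℤ) * (d k i j * (z - z₀)^k) := by
        funext p
        rw [if_pos (by omega : m ≤ m + (p:ℤ)), show (m + (p:ℤ) - m).toNat = p by omega,
          zpow_add₀ hu0, zpow_natCast]
        ring
      rw [heq]
      exact h1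
    · -- the differential equation, entrywise
      intro i j
      have hzball : z ∈ Metric.ball z₀ r' := by rw [Metric.mem_ball, dist_eq_norm]; exact hnz
      have hV := hVd i j z hzball
      have hzpow : HasDerivAt (fun w : ℂ => (w - z₀)^(m:ℤ)) ((m:ℂ) * (z - z₀)^(m-1)) z := by
        have h1 := hasDerivAt_zpow m (z - z₀) (Or.inl hu0)
        have h2 := (hasDerivAt_id z).sub_const z₀
        have h3 := h1.comp z h2
        simpa [Function.comp_def] using h3
      have hWd := hzpow.mul hV
      convert hWd using 1
      case e'_4 => rfl
      case e'_5 => rfl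
      case e'_8 => rfl
      -- now prove the value identity
      -- Cauchy products with the analytic part of A
      have hAz : ∀ k' : Fin n, HasSum (fun p : ℕ => a p i k' * (z - z₀)^p)
          (A z i k' - am1 i k' / (z - z₀)) :=
        fun k' => hA z hz0 (lt_of_lt_of_le hzr hr'r) i k'
      have hna : ∀ k' : Fin n, Summable fun x : ℕ => ‖a x i k' * (z - z₀)^x‖ := by
        intro k'
        have hlt : (2/r) * ‖z - z₀‖ < 1 := by
          have h5 : (2/r) * ‖z - z₀‖ < (2/r) * (r/2) := mul_lt_mul_of_pos_left hur2 (by positivity)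
          have h6 : (2/r) * (r/2) = 1 := by field_simp
          linarith
        refine Summable.of_nonneg_of_le (fun _ => norm_nonneg _) (fun x => ?_)
          ((summable_geometric_of_lt_one (by positivity) hlt).mul_left Ca)
        rw [norm_mul, norm_pow]
        calc ‖a x i k'‖ * ‖z - z₀‖^x ≤ (Ca * (2/r)^x) * ‖z - z₀‖^x :=
              mul_le_mul_of_nonneg_right (hCa x i k') (by positivity)
          _ = Ca * ((2/r) * ‖z - z₀‖)^x := by rw [mul_pow]; ring
      have hnd : ∀ k' : Fin n, Summable fun y : ℕ => ‖d y k' j * (z - z₀)^y‖ :=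
        fun k' => summable_norm_iff.mpr (hdsum z hnz k' j)
      have hCauchy : ∀ k' : Fin n, HasSum
          (fun p : ℕ => ∑ l ∈ Finset.range (p+1),
            (a l i k' * (z - z₀)^l) * (d (p - l) k' j * (z - z₀)^(p - l)))
          ((A z i k' - am1 i k' / (z - z₀)) * ∑' y : ℕ, d y k' j * (z - z₀)^y) := by
        intro k'
        have h := hasSum_sum_range_mul_of_summable_norm (hna k') (hnd k')
        rwa [(hAz k').tsum_eq] at h
      have hT := hasSum_finsetSum Finset.univ _ _ (fun k' (_ : k' ∈ Finset.univ) => hCauchy k')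
      have hTeq : ∀ p : ℕ, (ρ * (z - z₀)) * (∑ k' : Fin n, ∑ l ∈ Finset.range (p+1),
          (a l i k' * (z - z₀)^l) * (d (p - l) k' j * (z - z₀)^(p - l)))
          = ρ * ((∑ l ∈ Finset.range (p+1), (a (p+1-1-l) * d l) i j) * (z - z₀)^(p+1)) := by
        intro p
        have e1 : ∀ k' : Fin n, ∑ l ∈ Finset.range (p+1),
            (a l i k' * (z - z₀)^l) * (d (p - l) k' j * (z - z₀)^(p - l))
            = ∑ l ∈ Finset.range (p+1), a l i k' * d (p - l) k' j * (z - z₀)^p := by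
          intro k'
          refine Finset.sum_congr rfl fun l hl => ?_
          rw [Finset.mem_range] at hl
          have hpow2 : (z - z₀)^l * (z - z₀)^(p - l) = (z - z₀)^p := by
            rw [← pow_add]; congr 1; omega
          calc (a l i k' * (z - z₀)^l) * (d (p - l) k' j * (z - z₀)^(p - l))
              = a l i k' * d (p - l) k' j * ((z - z₀)^l * (z - z₀)^(p - l)) := by ring
            _ = a l i k' * d (p - l) k' j * (z - z₀)^p := by rw [hpow2]
        rw [Finset.sum_congr rfl (fun k' _ => e1 k'), Finset.sum_comm]
        have e2 : ∀ l, ∑ k' : Fin n, a l i k' * d (p - l) k' j * (z - z₀)^p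
            = (a l * d (p - l)) i j * (z - z₀)^p := by
          intro l
          rw [Matrix.mul_apply, Finset.sum_mul]
        rw [Finset.sum_congr rfl (fun l _ => e2 l)]
        have e3 : ∑ l ∈ Finset.range (p+1), (a l * d (p - l)) i j * (z - z₀)^p
            = ∑ l ∈ Finset.range (p+1), (a (p - l) * d l) i j * (z - z₀)^p := by
          rw [← Finset.sum_range_reflect (fun l => (a l * d (p - l)) i j * (z - z₀)^p) (p+1)]
          refine Finset.sum_congr rfl fun l hl => ?_
          rw [Finset.mem_range] at hl
          have h7 : p + 1 - 1 - l = p - l := by omega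
          have h8 : p - (p - l) = l := by omega
          rw [h7, h8]
        rw [e3]
        simp only [Nat.add_sub_cancel]
        rw [← Finset.sum_mul, pow_succ]
        ring
      have h' := (hT.mul_left (ρ * (z - z₀))).congr_fun' hTeq
      have h'' := (hasSum_nat_add_iff
        (f := fun p : ℕ => ρ * ((∑ l ∈ Finset.range p, (a (p-1-l) * d l) i j) * (z - z₀)^p))
        1).mp h'
      have hzero : ∑ i' ∈ Finset.range 1,
          ρ * ((∑ l ∈ Finset.range i', (a (i'-1-l) * d l) i j) * (z - z₀)^i') = 0 := by
        simp
      rw [hzero, add_zero] at h''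
      -- part 1 of the right-hand side
      have hpart1 : HasSum (fun p : ℕ => ρ * ∑ k' : Fin n, am1 i k' * (d p k' j * (z - z₀)^p))
          (ρ * ∑ k' : Fin n, am1 i k' * ∑' y : ℕ, d y k' j * (z - z₀)^y) :=
        (hasSum_finsetSum Finset.univ _ _ (fun k' (_ : k' ∈ Finset.univ) =>
          ((hdsum z hnz k' j).hasSum.mul_left (am1 i k')))).mul_left ρ
      have hRTot := hpart1.add h''
      -- the left-hand side series
      have hs2 : Summable fun p : ℕ => d p i j * ((p:ℂ) * (z - z₀)^(p-1)) := by
        apply Summable.of_norm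
        exact Summable.of_nonneg_of_le (fun _ => norm_nonneg _)
          (fun p => hgb i j z hzball p) hgb_sum
      have hL : HasSum (fun p : ℕ => ((m:ℂ) + (p:ℕ)) * d p i j * (z - z₀)^p)
          ((m:ℂ) * (∑' k : ℕ, d k i j * (z - z₀)^k)
            + (z - z₀) * ∑' k : ℕ, d k i j * ((k:ℂ) * (z - z₀)^(k-1))) := by
        have h1 := (hdsum z hnz i j).hasSum.mul_left (m:ℂ)
        have h2 := hs2.hasSum.mul_left (z - z₀)
        refine (h1.add h2).congr_fun' fun p => ?_
        cases p with
        | zero => simp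
        | succ q =>
          show (m:ℂ) * (d (q+1) i j * (z - z₀)^(q+1))
              + (z - z₀) * (d (q+1) i j * (((q+1:ℕ):ℂ) * (z - z₀)^(q+1-1)))
            = ((m:ℂ) + ((q+1:ℕ):ℂ)) * d (q+1) i j * (z - z₀)^(q+1)
          simp only [Nat.add_sub_cancel]
          push_cast
          ring
      -- pointwise identification of the two series
      have hmatch : ∀ p : ℕ, ρ * ∑ k' : Fin n, am1 i k' * (d p k' j * (z - z₀)^p)
          + ρ * ((∑ l ∈ Finset.range p, (a (p-1-l) * d l) i j) * (z - z₀)^p)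
          = ((m:ℂ) + (p:ℕ)) * d p i j * (z - z₀)^p := by
        intro p
        have hm : ((((m + (p:ℤ) : ℤ) : ℂ) • (1 : Matrix (Fin n) (Fin n) ℂ) - ρ • am1) * d p) i j
            = (∑ l ∈ Finset.range p, ρ • (a (p-1-l) * d l)) i j := by
          rw [hd, hrec' p]
        simp only [Matrix.mul_apply, Matrix.sub_apply, Matrix.smul_apply, Matrix.one_apply,
          smul_eq_mul, sub_mul, ite_mul, mul_ite, mul_one, mul_zero, one_mul, zero_mul,
          Finset.sum_sub_distrib, Finset.sum_ite_eq, Finset.mem_univ, if_true,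
          Finset.sum_apply, Matrix.sum_apply] at hm
        push_cast at hm
        have e4 : ∑ k' : Fin n, am1 i k' * (d p k' j * (z - z₀)^p)
            = (∑ k' : Fin n, am1 i k' * d p k' j) * (z - z₀)^p := by
          rw [Finset.sum_mul]
          exact Finset.sum_congr rfl fun _ _ => by ring
        have e6 : ∑ l ∈ Finset.range p, ρ * ∑ j1 : Fin n, a (p-1-l) i j1 * d l j1 j
            = ρ * ∑ l ∈ Finset.range p, (a (p-1-l) * d l) i j := by
          rw [Finset.mul_sum]
          refine Finset.sum_congr rfl fun l _ => ?_
          rw [Matrix.mul_apply]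
        have e5 : ∑ x : Fin n, ρ * am1 i x * d p x j
            = ρ * ∑ x : Fin n, am1 i x * d p x j := by
          rw [Finset.mul_sum]
          exact Finset.sum_congr rfl fun _ _ => by ring
        rw [e6, e5] at hm
        rw [e4]
        linear_combination (-(z - z₀)^p) * hm
      have hRTot' : HasSum (fun p : ℕ => ((m:ℂ) + (p:ℕ)) * d p i j * (z - z₀)^p)
          (ρ * ∑ k' : Fin n, am1 i k' * ∑' y : ℕ, d y k' j * (z - z₀)^y
            + ρ * (z - z₀) * (∑ k' : Fin n, (A z i k' - am1 i k' / (z - z₀))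
              * ∑' y : ℕ, d y k' j * (z - z₀)^y)) := hRTot.congr_fun' hmatch
      have hId := hL.unique hRTot'
      -- final algebra
      have e2 : (z - z₀)^((m:ℤ)-1) * (z - z₀) = (z - z₀)^(m:ℤ) := by
        rw [zpow_sub_one₀ hu0, mul_assoc, inv_mul_cancel₀ hu0, mul_one]
      have esum : ∑ k' : Fin n, A z i k' * ((z - z₀)^(m:ℤ) * ∑' p : ℕ, d p k' j * (z - z₀)^p)
          = (z - z₀)^((m:ℤ)-1) * (∑ k' : Fin n, am1 i k' * ∑' p : ℕ, d p k' j * (z - z₀)^p)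
            + (z - z₀)^(m:ℤ) * (∑ k' : Fin n, (A z i k' - am1 i k' / (z - z₀))
              * ∑' p : ℕ, d p k' j * (z - z₀)^p) := by
        rw [Finset.mul_sum, Finset.mul_sum, ← Finset.sum_add_distrib]
        refine Finset.sum_congr rfl fun k' _ => ?_
        have e : (z - z₀)^(m:ℤ) * (z - z₀)⁻¹ = (z - z₀)^((m:ℤ)-1) := (zpow_sub_one₀ hu0 m).symm
        have hdiv : am1 i k' / (z - z₀) = am1 i k' * (z - z₀)⁻¹ := div_eq_mul_inv _ _
        rw [hdiv]
        linear_combination (am1 i k' * ∑' p : ℕ, d p k' j * (z - z₀)^p) * e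
      show (ρ • (A z * Matrix.of fun i j => (z - z₀) ^ m * ∑' k : ℕ, d k i j * (z - z₀)^k)) i j
          = (m:ℂ) * (z - z₀)^((m:ℤ)-1) * (∑' k : ℕ, d k i j * (z - z₀)^k)
            + (z - z₀)^(m:ℤ) * ∑' k : ℕ, d k i j * ((k:ℂ) * (z - z₀)^(k-1))
      rw [Matrix.smul_apply, Matrix.mul_apply]
      simp only [Matrix.of_apply, smul_eq_mul]
      rw [esum]
      linear_combination (-((z - z₀)^((m:ℤ)-1))) * hId
        + ((∑' k : ℕ, d k i j * ((k:ℂ) * (z - z₀)^(k-1)))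
          - ρ * (∑ k' : Fin n, (A z i k' - am1 i k' / (z - z₀))
            * ∑' y : ℕ, d y k' j * (z - z₀)^y)) * e2
end

section
/- Let n ≥ 2 and let z_1, …, z_{n−1} be pairwise distinct complex numbers. For 1 ≤ k ≤ n−1 set α_k = (−1)^{n+k−1} / [∏_{i>k}(z_i − z_k) · ∏_{j<k}(z_k − z_j)], and define the vector function Y(z) = (Σ_{k=1}^{n−1} α_k/(z−z_k)) · 𝟙, where 𝟙 = (1,1,…,1) ∈ ℂ^n. Then Y is not identically zero and Y′(z) = −A(z)·Y(z) for all z ∈ ℂ ∖ {z_1, …, z_{n−1}}. -/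
open Matrix

/-- A(z) = Σ_{k=1}^{n-1} P_k / (z - z_k). -/
noncomputable def Amat (n : ℕ) [NeZero n] (z : Fin (n - 1) → ℂ) (w : ℂ) :
    Matrix (Fin n) (Fin n) ℂ :=
  ∑ k : Fin (n - 1), (w - z k)⁻¹ • Pk n k

/-- α_k = (-1)^{n+k-1} / [∏_{i>k}(z_i - z_k) · ∏_{j<k}(z_k - z_j)], where `k : Fin (n-1)`
represents the 1-based index k+1 (so the sign is (-1)^{n + k.1}). -/
noncomputable def alph (n : ℕ) (z : Fin (n - 1) → ℂ) (k : Fin (n - 1)) : ℂ :=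
  (-1 : ℂ) ^ (n + k.1) /
    ((∏ i ∈ Finset.univ.filter (fun i => k < i), (z i - z k)) *
     (∏ j ∈ Finset.univ.filter (fun j => j < k), (z k - z j)))

/-- Y(z) = (Σ_k α_k/(z - z_k)) · 𝟙. -/
noncomputable def Yfun (n : ℕ) (z : Fin (n - 1) → ℂ) (u : ℂ) : Fin n → ℂ :=
  (∑ k : Fin (n - 1), alph n z k / (u - z k)) • (fun _ => (1 : ℂ))

lemma alph_eq (n : ℕ) (z : Fin (n - 1) → ℂ) (k : Fin (n - 1)) :
    alph n z k = (∏ i ∈ Finset.univ.erase k, (z k - z i))⁻¹ := by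
  classical
  have h1 : (Finset.univ.filter (fun i => k < i) : Finset (Fin (n-1))) = Finset.Ioi k := by
    ext i; simp
  have h2 : (Finset.univ.filter (fun j => j < k) : Finset (Fin (n-1))) = Finset.Iio k := by
    ext i; simp
  have hsplit : (Finset.univ.erase k : Finset (Fin (n-1))) = Finset.Ioi k ∪ Finset.Iio k := by
    ext i
    simp only [Finset.mem_erase, Finset.mem_union, Finset.mem_Ioi, Finset.mem_Iio,
      Finset.mem_univ, and_true, Fin.lt_def, ne_eq, ← Fin.val_eq_val]
    omega
  have hdisj : Disjoint (Finset.Ioi k) (Finset.Iio k) := by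
    rw [Finset.disjoint_left]; intro a ha hb; simp at ha hb; omega
  have hcard : (Finset.Ioi k).card = n - 2 - k.1 := by
    rw [Fin.card_Ioi]; omega
  have hneg : ∏ i ∈ Finset.Ioi k, (z i - z k)
      = (-1 : ℂ) ^ (n - 2 - k.1) * ∏ i ∈ Finset.Ioi k, (z k - z i) := by
    rw [← hcard]
    rw [← Finset.prod_const, ← Finset.prod_mul_distrib]
    exact Finset.prod_congr rfl fun i _ => by ring
  have hsign : ((-1 : ℂ)) ^ (n + k.1) = (-1 : ℂ) ^ (n - 2 - k.1) := by
    have hk := k.2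
    have h2n : 2 ≤ n := by omega
    have : n + k.1 = (n - 2 - k.1) + 2 * (k.1 + 1) := by omega
    rw [this, pow_add, pow_mul, neg_one_sq, one_pow, mul_one]
  rw [alph, h1, h2, hneg, hsign, hsplit, Finset.prod_union hdisj]
  rw [mul_assoc, mul_inv, div_eq_mul_inv, mul_inv, ← mul_assoc,
    mul_inv_cancel₀ (by simp : ((-1:ℂ))^(n-2-k.1) ≠ 0), one_mul, mul_inv]

lemma key_sum (n : ℕ) (hn : 2 ≤ n) (z : Fin (n - 1) → ℂ) (hz : Function.Injective z)
    (w : ℂ) (hw : ∀ k, w ≠ z k) :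
    ∑ k, alph n z k / (w - z k) = (∏ k, (w - z k))⁻¹ := by
  classical
  have hwk : ∀ k : Fin (n-1), w - z k ≠ 0 := fun k => sub_ne_zero.2 (hw k)
  have hW : (∏ k : Fin (n-1), (w - z k)) ≠ 0 := Finset.prod_ne_zero_iff.2 fun k _ => hwk k
  have hne : (Finset.univ : Finset (Fin (n-1))).Nonempty :=
    ⟨⟨0, by omega⟩, Finset.mem_univ _⟩
  have hL := Lagrange.sum_basis (Set.injOn_of_injective hz) hne
  have h1 := congrArg (Polynomial.eval w) hL
  rw [Polynomial.eval_finset_sum, Polynomial.eval_one] at h1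
  have key : (∑ k : Fin (n-1), alph n z k / (w - z k)) * (∏ k : Fin (n-1), (w - z k)) = 1 := by
    rw [Finset.sum_mul, ← h1]
    refine Finset.sum_congr rfl fun k _ => ?_
    rw [alph_eq n, Lagrange.basis, Polynomial.eval_prod]
    simp only [Lagrange.basisDivisor, Polynomial.eval_mul, Polynomial.eval_C,
      Polynomial.eval_sub, Polynomial.eval_X]
    rw [Finset.prod_mul_distrib, ← Finset.prod_inv_distrib]
    rw [← Finset.mul_prod_erase _ (fun i => w - z i) (Finset.mem_univ k)]
    field_simp
    rw [mul_right_comm, mul_div_cancel_right₀ _ (hwk k)]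
  exact eq_inv_of_mul_eq_one_left (by linear_combination key)

/-- Y is a not-identically-zero rational solution of Y' = -A(z)·Y. -/
theorem rational_solution_Y1 (n : ℕ) [NeZero n] (hn : 2 ≤ n)
    (z : Fin (n - 1) → ℂ) (hz : Function.Injective z) :
    (∃ w : ℂ, (∀ k, w ≠ z k) ∧ Yfun n z w ≠ 0) ∧
    (∀ w : ℂ, (∀ k, w ≠ z k) → ∀ i,
      HasDerivAt (fun u => Yfun n z u i) (-(Amat n z w *ᵥ Yfun n z w) i) w) := by
  classical
  constructor
  · obtain ⟨w, hw⟩ := (Set.Finite.infinite_compl (Set.finite_range z)).nonempty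
    have hw' : ∀ k, w ≠ z k := fun k hk => hw ⟨k, hk.symm⟩
    refine ⟨w, hw', fun h => ?_⟩
    have hW : (∏ k : Fin (n-1), (w - z k)) ≠ 0 :=
      Finset.prod_ne_zero_iff.2 fun k _ => sub_ne_zero.2 (hw' k)
    have h0 := congrFun h ⟨0, Nat.pos_of_ne_zero (NeZero.ne n)⟩
    have : (∏ k : Fin (n-1), (w - z k))⁻¹ = 0 := by
      rw [← key_sum n hn z hz w hw']
      simpa [Yfun] using h0
    exact inv_ne_zero hW this
  · intro w hw i
    have hwk : ∀ k : Fin (n-1), w - z k ≠ 0 := fun k => sub_ne_zero.2 (hw k)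
    have hW : (∏ k : Fin (n-1), (w - z k)) ≠ 0 := Finset.prod_ne_zero_iff.2 fun k _ => hwk k
    -- the constant value of Yfun at w
    have hYconst : ∀ j, Yfun n z w j = (∏ l : Fin (n-1), (w - z l))⁻¹ := by
      intro j
      simp only [Yfun, Pi.smul_apply, smul_eq_mul, mul_one]
      exact key_sum n hn z hz w hw
    -- the matrix-vector product
    have hA : (Amat n z w *ᵥ Yfun n z w) i
        = ∑ k : Fin (n-1), (w - z k)⁻¹ * (∏ l : Fin (n-1), (w - z l))⁻¹ := by
      have hPkv : ∀ k : Fin (n-1),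
          ∑ j, Pk n k i j * Yfun n z w j = (∏ l : Fin (n-1), (w - z l))⁻¹ := by
        intro k
        set a : Fin n := ⟨k.1 + 1, by have := k.2; omega⟩
        have hcond : ∀ j : Fin n, (i = Equiv.swap 0 a j) ↔ (Equiv.swap 0 a i = j) := by
          intro j
          constructor <;> intro h
          · simp [h]
          · simp [← h]
        simp only [Pk, permP, Matrix.of_apply, hYconst,
          ite_mul, one_mul, zero_mul, hcond]
        simp only [show ∀ j : Fin n, (i = Equiv.swap 0 ⟨k.1 + 1, by have := k.2; omega⟩ j) ↔
          (Equiv.swap 0 ⟨k.1 + 1, by have := k.2; omega⟩ i = j) from hcond, Finset.sum_ite_eq]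
        simp
      rw [Amat, Matrix.mulVec, dotProduct]
      simp only [Matrix.sum_apply, Matrix.smul_apply, smul_eq_mul, Finset.sum_mul]
      rw [Finset.sum_comm]
      refine Finset.sum_congr rfl fun k _ => ?_
      rw [← hPkv k, Finset.mul_sum]
      exact Finset.sum_congr rfl fun j _ => by ring
    -- derivative of the product
    have hWd : HasDerivAt (fun u => ∏ k : Fin (n-1), (u - z k))
        (∑ k : Fin (n-1), ∏ j ∈ Finset.univ.erase k, (w - z j)) w := by
      have := HasDerivAt.fun_finsetProd (𝕜 := ℂ) (x := w) (u := (Finset.univ : Finset (Fin (n-1))))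
        (f := fun k u => u - z k) (f' := fun _ => 1)
        (fun k _ => (hasDerivAt_id w).sub_const (z k))
      simpa using this
    have hinv : HasDerivAt (fun u => (∏ k : Fin (n-1), (u - z k))⁻¹)
        (-(∑ k : Fin (n-1), ∏ j ∈ Finset.univ.erase k, (w - z j))
          / (∏ k : Fin (n-1), (w - z k)) ^ 2) w := hWd.inv hW
    have hev : (fun u => Yfun n z u i) =ᶠ[nhds w] (fun u => (∏ k : Fin (n-1), (u - z k))⁻¹) := by
      have hopen : IsOpen {u : ℂ | ∀ k, u ≠ z k} := by
        have hs : {u : ℂ | ∀ k, u ≠ z k} = (Set.range z)ᶜ := by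
          ext u; simp [Set.mem_range, eq_comm]
        rw [hs]
        exact (Set.finite_range z).isClosed.isOpen_compl
      filter_upwards [hopen.mem_nhds hw] with u hu
      simp only [Yfun, Pi.smul_apply, smul_eq_mul, mul_one]
      exact key_sum n hn z hz u hu
    refine HasDerivAt.congr_of_eventuallyEq ?_ hev
    refine hinv.congr_deriv (Eq.symm ?_)
    rw [hA, neg_div, neg_inj, Finset.sum_div]
    refine Finset.sum_congr rfl fun k _ => ?_
    have hWk : (∏ l : Fin (n-1), (w - z l))
        = (w - z k) * ∏ j ∈ Finset.univ.erase k, (w - z j) :=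
      (Finset.mul_prod_erase _ _ (Finset.mem_univ k)).symm
    have hE : (∏ j ∈ Finset.univ.erase k, (w - z j)) ≠ 0 :=
      Finset.prod_ne_zero_iff.2 fun j _ => hwk j
    rw [hWk, eq_div_iff (pow_ne_zero 2 (mul_ne_zero (hwk k) hE)), sq,
      mul_assoc ((w - z k)⁻¹), inv_mul_cancel_left₀ (mul_ne_zero (hwk k) hE),
      inv_mul_cancel_left₀ (hwk k)]
end

section
/- Let n ≥ 3 and let z_1, …, z_{n−1} be pairwise distinct complex numbers. Let a_1, …, a_{n−1} ∈ ℂ satisfy a_1 + ⋯ + a_{n−1} = 0 with not all a_i zero. Define vectors G_p ∈ ℂ^n for 1 ≤ p ≤ n−1 by: G_p = 0 for 1 ≤ p ≤ n−3; G_{n−2} = (0, a_1, …, a_{n−1}); and G_{n−1} = (m/(n(n−1)))·(n−1, −1, …, −1) + (0, b_1, …, b_{n−1}), where m = Σ_{i=1}^{n−1} a_i z_i and b_k = a_k·Σ_{i≠k} z_i + m/(n−1). Let L_1, …, L_{n−1} ∈ ℂ^n be the unique vectors satisfying Σ_{k=1}^{n−1} z_k^{p−1}·L_k = G_p for p = 1,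 …, n−1. Then the vector function Y(z) = Σ_{k=1}^{n−1} L_k/(z−z_k) is not identically zero and satisfies Y′(z) = −A(z)·Y(z) for all z ∈ ℂ ∖ {z_1, …, z_{n−1}}. -/
open Matrix

/-- The vector v₃ = (n-1, -1, ..., -1). -/
noncomputable def v3 (n : ℕ) [NeZero n] : Fin n → ℂ :=
  fun i => if i = 0 then (n : ℂ) - 1 else -1

/-- The vector (0, c₁, …, c_{n-1}) ∈ ℂⁿ obtained from c : ℂ^{n-1}. -/
noncomputable def pad0 (n : ℕ) (c : Fin (n - 1) → ℂ) : Fin n → ℂ :=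
  fun i => if h : i.1 = 0 then 0 else c ⟨i.1 - 1, by have := i.2; omega⟩

/-- m = Σ_i a_i z_i. -/
noncomputable def mval (n : ℕ) (z a : Fin (n - 1) → ℂ) : ℂ :=
  ∑ i : Fin (n - 1), a i * z i

/-- b_k = a_k · Σ_{i≠k} z_i + m/(n-1). -/
noncomputable def bval (n : ℕ) (z a : Fin (n - 1) → ℂ) (k : Fin (n - 1)) : ℂ :=
  a k * (∑ i ∈ Finset.univ.erase k, z i) + mval n z a / ((n : ℂ) - 1)

/-- The G_p vectors (p : Fin (n-1) represents the 1-based index p+1 ∈ {1,…,n-1}):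
G_p = 0 for 1 ≤ p ≤ n-3, G_{n-2} = (0, a₁, …, a_{n-1}),
G_{n-1} = (m/(n(n-1)))·v₃ + (0, b₁, …, b_{n-1}). -/
noncomputable def Gvec (n : ℕ) [NeZero n] (z a : Fin (n - 1) → ℂ) (p : Fin (n - 1)) :
    Fin n → ℂ :=
  if p.1 = n - 2 then
    (mval n z a / ((n : ℂ) * ((n : ℂ) - 1))) • v3 n + pad0 n (bval n z a)
  else if p.1 = n - 3 then pad0 n a
  else 0

section Helpers

open Polynomial Finset Lagrange Function

lemma coeff_basis_pred {F : Type*} [Field F] {ι : Type*} [DecidableEq ι]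
    (s : Finset ι) (v : ι → F) {i : ι} (hi : i ∈ s) :
    (Lagrange.basis s v i).coeff (#s - 1) = nodalWeight s v i := by
  rw [basis_eq_prod_sub_inv_mul_nodal_div hi, ← nodal_erase_eq_nodal_div hi, coeff_C_mul]
  have h1 : (nodal (s.erase i) v).natDegree = #s - 1 := by
    rw [natDegree_nodal, card_erase_of_mem hi]
  rw [← h1, (nodal_monic).coeff_natDegree, mul_one]

lemma sum_pow_nodalWeight {F : Type*} [Field F] {ι : Type*} [DecidableEq ι]
    (s : Finset ι) (v : ι → F) (hvs : Set.InjOn v s) (p : ℕ) (hp : p < #s) :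
    ∑ i ∈ s, v i ^ p * nodalWeight s v i = if p = #s - 1 then 1 else 0 := by
  have hdeg : ((X : F[X]) ^ p).degree < #s := by
    simpa [degree_X_pow] using (by exact_mod_cast hp : ((p : ℕ) : WithBot ℕ) < (#s : ℕ))
  have h := Lagrange.eq_interpolate (s := s) (v := v) hvs hdeg
  have h2 := congrArg (fun q : F[X] => q.coeff (#s - 1)) h
  simp only [interpolate_apply, finset_sum_coeff, coeff_C_mul, coeff_X_pow, eval_pow, eval_X] at h2
  calc ∑ i ∈ s, v i ^ p * nodalWeight s v i
      = ∑ i ∈ s, v i ^ p * (Lagrange.basis s v i).coeff (#s - 1) :=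
        Finset.sum_congr rfl fun i hi => by rw [coeff_basis_pred s v hi]
    _ = if #s - 1 = p then 1 else 0 := h2.symm
    _ = if p = #s - 1 then 1 else 0 := by by_cases hc : p = #s - 1 <;> simp [hc, eq_comm]

lemma sum_pow_card_nodalWeight {F : Type*} [Field F] {ι : Type*} [DecidableEq ι]
    (s : Finset ι) (v : ι → F) (hvs : Set.InjOn v s) (hs : s.Nonempty) :
    ∑ i ∈ s, v i ^ (#s) * nodalWeight s v i = ∑ i ∈ s, v i := by
  set f : F[X] := X ^ (#s) - nodal s v with hf
  have hdeg : f.degree < #s := by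
    have h := Polynomial.degree_sub_lt (p := (X : F[X]) ^ (#s)) (q := nodal s v)
      (by rw [degree_X_pow, degree_nodal]) (by exact pow_ne_zero _ X_ne_zero)
      (by rw [monic_X_pow, nodal_monic])
    simpa [degree_X_pow] using h
  have h := Lagrange.eq_interpolate (s := s) (v := v) hvs hdeg
  have h2 := congrArg (fun q : F[X] => q.coeff (#s - 1)) h
  have hcn : (nodal s v).coeff (#s - 1) = -∑ i ∈ s, v i := by
    rw [nodal]; exact prod_X_sub_C_coeff_card_pred s v hs.card_pos
  have hxc : ((X : F[X]) ^ (#s)).coeff (#s - 1) = 0 := by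
    rw [coeff_X_pow, if_neg (by have := hs.card_pos; omega : ¬ #s - 1 = #s)]
  simp only [interpolate_apply, finset_sum_coeff, coeff_C_mul, hf, coeff_sub, hxc, hcn,
    zero_sub, neg_neg, eval_sub, eval_pow, eval_X] at h2
  have heval : ∀ i ∈ s, eval (v i) (nodal s v) = 0 := fun i hi => eval_nodal_at_node hi
  calc ∑ i ∈ s, v i ^ (#s) * nodalWeight s v i
      = ∑ i ∈ s, (v i ^ (#s) - eval (v i) (nodal s v)) * (Lagrange.basis s v i).coeff (#s - 1) :=
        Finset.sum_congr rfl fun i hi => by rw [coeff_basis_pred s v hi, heval i hi, sub_zero]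
    _ = ∑ i ∈ s, v i := h2.symm

lemma residue_identity {N : ℕ} (hN : 2 ≤ N) (z : Fin N → ℂ) (hz : Function.Injective z)
    (k : Fin N) :
    ∑ l ∈ univ.erase k, (z k - z l)⁻¹ * nodalWeight univ z l
      + (∑ l ∈ univ.erase k, (z k - z l)⁻¹) * nodalWeight univ z k = 0 := by
  classical
  set S := (univ : Finset (Fin N)).erase k with hS
  set E : Fin N → ℂ := fun l => nodalWeight S z l with hE
  have hzne : ∀ l ∈ S, z l - z k ≠ 0 := fun l hl =>
    sub_ne_zero.mpr (fun h => (mem_erase.mp hl).1 (hz h))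
  have hzne' : ∀ l ∈ S, z k - z l ≠ 0 := fun l hl =>
    sub_ne_zero.mpr (fun h => (mem_erase.mp hl).1 (hz h.symm))
  have key : ∀ t : ℂ, (∀ l ∈ S, t ≠ z l) →
      (∑ l ∈ S, (z l - t)⁻¹ * E l) = - ∏ j ∈ S, (t - z j)⁻¹ := by
    intro t ht
    have hz' : Function.Injective (Function.update z k t) := by
      intro a b hab
      by_cases ha : a = k <;> by_cases hb : b = k
      · rw [ha, hb]
      · rw [ha, update_self, update_of_ne hb] at hab
        exact absurd hab (ht b (mem_erase.mpr ⟨hb, mem_univ _⟩))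
      · rw [hb, update_self, update_of_ne ha] at hab
        exact absurd hab.symm (ht a (mem_erase.mpr ⟨ha, mem_univ _⟩))
      · rw [update_of_ne ha, update_of_ne hb] at hab
        exact hz hab
    have h0 := sum_pow_nodalWeight (univ : Finset (Fin N)) (Function.update z k t)
      (hz'.injOn) 0 (by simpa using (by omega : 0 < N))
    rw [if_neg (by simp; omega)] at h0
    simp only [pow_zero, one_mul] at h0
    rw [← Finset.add_sum_erase _ _ (mem_univ k)] at h0
    have hWk : nodalWeight univ (Function.update z k t) k = ∏ j ∈ S, (t - z j)⁻¹ := by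
      simp only [nodalWeight]
      refine Finset.prod_congr rfl fun j hj => ?_
      rw [update_self, update_of_ne (mem_erase.mp hj).1]
    have hWl : ∀ l ∈ S, nodalWeight univ (Function.update z k t) l = (z l - t)⁻¹ * E l := by
      intro l hl
      have hlk : l ≠ k := (mem_erase.mp hl).1
      have hk : k ∈ (univ : Finset (Fin N)).erase l := mem_erase.mpr ⟨Ne.symm hlk, mem_univ k⟩
      simp only [nodalWeight]
      rw [← Finset.mul_prod_erase _ _ hk, update_of_ne hlk, update_self, Finset.erase_right_comm]
      congr 1
      refine Finset.prod_congr rfl fun j hj => ?_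
      rw [update_of_ne (mem_erase.mp (mem_of_mem_erase hj)).1]
    rw [hWk, Finset.sum_congr rfl hWl] at h0
    linear_combination h0
  have hFd : HasDerivAt (fun t => ∑ l ∈ S, (z l - t)⁻¹ * E l)
      (∑ l ∈ S, ((z l - z k) ^ 2)⁻¹ * E l) (z k) := by
    refine HasDerivAt.fun_sum fun l hl => ?_
    have h1 : HasDerivAt (fun t : ℂ => (z l - t)⁻¹) (-(0 - 1) / (z l - z k) ^ 2) (z k) :=
      (((hasDerivAt_const (z k) (z l)).sub (hasDerivAt_id (z k)))).inv (hzne l hl)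
    have h2 := h1.mul_const (E l)
    convert h2 using 1
    · rfl
    · ring
  have hPd : HasDerivAt (fun t => - ∏ j ∈ S, (t - z j)⁻¹)
      (- ∑ j ∈ S, (∏ i ∈ S.erase j, (z k - z i)⁻¹) • (-1 / (z k - z j) ^ 2)) (z k) := by
    refine HasDerivAt.neg ?_
    refine HasDerivAt.fun_finsetProd fun j hj => ?_
    exact ((hasDerivAt_id (z k)).sub_const (z j)).inv (hzne' j hj)
  have hev : (fun t => ∑ l ∈ S, (z l - t)⁻¹ * E l) =ᶠ[nhds (z k)]
      (fun t => - ∏ j ∈ S, (t - z j)⁻¹) := by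
    have hall : ∀ᶠ t in nhds (z k), ∀ l ∈ S, t ≠ z l := by
      rw [Finset.eventually_all]
      intro l hl
      exact eventually_ne_nhds fun h => (hzne' l hl) (sub_eq_zero.mpr h)
    exact hall.mono fun t ht => key t ht
  have huniq := hFd.unique ((hPd).congr_of_eventuallyEq hev)
  have hWl : ∀ l ∈ S, ((z l - z k) ^ 2)⁻¹ * E l = -((z k - z l)⁻¹ * nodalWeight univ z l) := by
    intro l hl
    have hlk : l ≠ k := (mem_erase.mp hl).1
    have hk : k ∈ (univ : Finset (Fin N)).erase l := mem_erase.mpr ⟨Ne.symm hlk, mem_univ k⟩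
    have hW : nodalWeight univ z l = (z l - z k)⁻¹ * E l := by
      simp only [nodalWeight]
      rw [← Finset.mul_prod_erase _ _ hk, Finset.erase_right_comm]
      rfl
    rw [hW, show (z k - z l) = -(z l - z k) by ring, sq, mul_inv, inv_neg]
    ring
  have hWk : ∀ j ∈ S, (∏ i ∈ S.erase j, (z k - z i)⁻¹) • ((-1 : ℂ) / (z k - z j) ^ 2)
      = -((z k - z j)⁻¹ * nodalWeight univ z k) := by
    intro j hj
    have hW : nodalWeight univ z k = (z k - z j)⁻¹ * ∏ i ∈ S.erase j, (z k - z i)⁻¹ := by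
      simp only [nodalWeight]
      rw [← hS, ← Finset.mul_prod_erase _ _ hj]
    rw [smul_eq_mul, hW, sq, div_eq_mul_inv, mul_inv]
    ring
  rw [Finset.sum_congr rfl hWl, Finset.sum_congr rfl hWk] at huniq
  rw [Finset.sum_neg_distrib, Finset.sum_neg_distrib, neg_neg] at huniq
  rw [Finset.sum_mul]
  linear_combination -huniq

lemma sum_erase_comm {M ι : Type*} [AddCommGroup M] [Fintype ι] [DecidableEq ι]
    (f : ι → ι → M) :
    ∑ k, ∑ l ∈ univ.erase k, f k l = ∑ l, ∑ k ∈ univ.erase l, f k l := by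
  have h1 : ∀ k : ι, ∑ l ∈ univ.erase k, f k l = (∑ l, f k l) - f k k := fun k =>
    Finset.sum_erase_eq_sub (mem_univ k)
  have h2 : ∀ l : ι, ∑ k ∈ univ.erase l, f k l = (∑ k, f k l) - f l l := fun l =>
    Finset.sum_erase_eq_sub (mem_univ l)
  simp only [h1, h2, Finset.sum_sub_distrib]
  rw [Finset.sum_comm]

/-- The embedding Fin (n-1) → Fin n, k ↦ k+1. -/
def emb (n : ℕ) (k : Fin (n - 1)) : Fin n := ⟨k.1 + 1, by have := k.2; omega⟩

lemma Pk_eq (n : ℕ) [NeZero n] (k : Fin (n - 1)) : Pk n k = permP n 0 (emb n k) := rfl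

lemma emb_ne_zero (n : ℕ) [NeZero n] (k : Fin (n - 1)) : emb n k ≠ 0 := by
  simp [emb, Fin.ext_iff]

lemma emb_inj (n : ℕ) {j k : Fin (n - 1)} (h : emb n j = emb n k) : j = k := by
  simpa [emb, Fin.ext_iff] using h

lemma fin_repr (n : ℕ) [NeZero n] (i : Fin n) : i = 0 ∨ ∃ j : Fin (n - 1), i = emb n j := by
  by_cases h : i.1 = 0
  · exact Or.inl (Fin.ext (by rw [h]; simp))
  · refine Or.inr ⟨⟨i.1 - 1, by have := i.2; omega⟩, ?_⟩
    simp [emb, Fin.ext_iff]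
    omega

end Helpers

open Finset Lagrange

/-- Given a₁ + ⋯ + a_{n-1} = 0 (not all zero) and L₁,…,L_{n-1} the (unique) solutions of
Σ_k z_k^{p-1}·L_k = G_p (p = 1,…,n-1), the function Y(z) = Σ_k L_k/(z-z_k) is a
not-identically-zero rational solution of Y' = -A(z)·Y. -/
theorem rational_solutions_Yj (n : ℕ) [NeZero n] (hn : 3 ≤ n)
    (z : Fin (n - 1) → ℂ) (hz : Function.Injective z)
    (a : Fin (n - 1) → ℂ) (ha : ∑ i : Fin (n - 1), a i = 0) (ha0 : a ≠ 0)
    (L : Fin (n - 1) → Fin n → ℂ)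
    (hL : ∀ p : Fin (n - 1), ∑ k : Fin (n - 1), z k ^ p.1 • L k = Gvec n z a p)
    (Y : ℂ → Fin n → ℂ)
    (hY : ∀ u : ℂ, Y u = ∑ k : Fin (n - 1), (u - z k)⁻¹ • L k) :
    (∃ w : ℂ, (∀ k, w ≠ z k) ∧ Y w ≠ 0) ∧
    (∀ w : ℂ, (∀ k, w ≠ z k) → ∀ i,
      HasDerivAt (fun u => Y u i) (-(Amat n z w *ᵥ Y w) i) w) := by
  classical
  have hN2 : 2 ≤ n - 1 := by omega
  have hcard : #(univ : Finset (Fin (n - 1))) = n - 1 := by simp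
  have hn0 : (n : ℂ) ≠ 0 := Nat.cast_ne_zero.mpr (by omega)
  have hn1 : (n : ℂ) - 1 ≠ 0 := by
    intro h
    have : (n : ℂ) = 1 := by linear_combination h
    have : n = 1 := by exact_mod_cast this
    omega
  set m : ℂ := mval n z a with hm
  set μ : ℂ := m / n with hμ
  set e1 : ℂ := ∑ l : Fin (n - 1), z l with he1
  -- power sum identities
  have hSp : ∀ p : ℕ, p < n - 1 →
      ∑ k : Fin (n - 1), z k ^ p * nodalWeight univ z k = if p = n - 2 then 1 else 0 := by
    intro p hp
    have h := sum_pow_nodalWeight univ z hz.injOn p (by rwa [hcard])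
    rw [hcard] at h
    rw [h, show n - 1 - 1 = n - 2 by omega]
  have hStop : ∑ k : Fin (n - 1), z k ^ (n - 1) * nodalWeight univ z k = e1 := by
    have h := sum_pow_card_nodalWeight univ z hz.injOn
      (univ_nonempty_iff.mpr ⟨⟨0, by omega⟩⟩)
    rw [hcard] at h
    exact h
  have hE1 : ∑ l : Fin (n - 1), nodalWeight univ z l = 0 := by
    have h := hSp 0 (by omega)
    rw [if_neg (by omega)] at h
    simpa using h
  have hW0 : ∀ k, nodalWeight univ z k ≠ 0 := fun k =>
    nodalWeight_ne_zero hz.injOn (mem_univ k)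
  -- the explicit solution
  set Lexp : Fin (n - 1) → Fin n → ℂ := fun k i =>
    if h : i.1 = 0 then μ * nodalWeight univ z k
    else (μ + a ⟨i.1 - 1, by have := i.2; omega⟩ * (z k - z ⟨i.1 - 1, by have := i.2; omega⟩)) *
      nodalWeight univ z k with hLexp
  have hLexp0 : ∀ k, Lexp k 0 = μ * nodalWeight univ z k := by
    intro k; simp [hLexp]
  have hLexpe : ∀ k jj, Lexp k (emb n jj) = (μ + a jj * (z k - z jj)) * nodalWeight univ z k := by
    intro k jj
    have h0 : (emb n jj).1 = jj.1 + 1 := rfl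
    rw [hLexp]
    simp only [h0]
    rw [dif_neg (by omega)]
    congr 2 <;> exact congrArg _ (Fin.ext (by simp)) 
  -- moment equations for Lexp
  have hmom : ∀ p : Fin (n - 1), ∑ k : Fin (n - 1), z k ^ p.1 • Lexp k = Gvec n z a p := by
    intro p
    funext i
    rw [Finset.sum_apply]
    simp only [Pi.smul_apply, smul_eq_mul]
    have hp' : p.1 < n - 1 := p.2
    rcases fin_repr n i with rfl | ⟨jj, rfl⟩
    · -- coordinate 0
      have hL : ∑ k : Fin (n - 1), z k ^ p.1 * Lexp k 0
          = μ * ∑ k : Fin (n - 1), z k ^ p.1 * nodalWeight univ z k := by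
        rw [Finset.mul_sum]
        exact Finset.sum_congr rfl fun k _ => by rw [hLexp0 k]; ring
      rw [hL]
      by_cases hp2 : p.1 = n - 2
      · rw [hSp p.1 hp', if_pos hp2]
        have hval : (Gvec n z a p) 0 = m / ((n : ℂ) * ((n : ℂ) - 1)) * ((n : ℂ) - 1) := by
          simp [Gvec, if_pos hp2, v3, pad0, ← hm]
        rw [hval, hμ]
        field_simp
      · rw [hSp p.1 hp', if_neg hp2, Gvec, if_neg hp2, mul_zero]
        by_cases hp3 : p.1 = n - 3
        · rw [if_pos hp3]; simp [pad0]
        · rw [if_neg hp3]; rfl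
    · -- coordinate emb jj
      have hidx : ∀ c : Fin (n - 1) → ℂ, pad0 n c (emb n jj) = c jj := by
        intro c
        have h0 : (emb n jj).1 = jj.1 + 1 := rfl
        rw [pad0]
        simp only [h0]
        rw [dif_neg (by omega)]
        exact congrArg _ (Fin.ext (by simp))
      have hL : ∑ k : Fin (n - 1), z k ^ p.1 * Lexp k (emb n jj)
          = (μ - a jj * z jj) * (∑ k : Fin (n - 1), z k ^ p.1 * nodalWeight univ z k)
            + a jj * (∑ k : Fin (n - 1), z k ^ (p.1 + 1) * nodalWeight univ z k) := by
        rw [Finset.mul_sum, Finset.mul_sum, ← Finset.sum_add_distrib]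
        refine Finset.sum_congr rfl fun k _ => ?_
        rw [hLexpe k jj, pow_succ]
        ring
      rw [hL]
      by_cases hp2 : p.1 = n - 2
      · have hp1 : p.1 + 1 = n - 1 := by omega
        rw [hSp p.1 hp', if_pos hp2, hp1, hStop, Gvec, if_pos hp2]
        simp only [Pi.add_apply, Pi.smul_apply, smul_eq_mul, v3,
          if_neg (emb_ne_zero n jj), hidx, bval]
        rw [Finset.sum_erase_eq_sub (mem_univ jj), ← he1, ← hm, hμ]
        field_simp
        ring
      · rw [hSp p.1 hp', if_neg hp2, Gvec, if_neg hp2, mul_zero, zero_add]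
        by_cases hp3 : p.1 = n - 3
        · have hp1 : p.1 + 1 = n - 2 := by omega
          rw [hp1, hSp (n - 2) (by omega), if_pos rfl, if_pos hp3, hidx, mul_one]
        · have h1 : p.1 + 1 < n - 1 := by omega
          have h2 : ¬ (p.1 + 1 = n - 2) := by omega
          rw [hSp (p.1 + 1) h1, if_neg h2, mul_zero, if_neg hp3]
          rfl
  -- uniqueness: L = Lexp
  have hLki : ∀ k i, L k i = Lexp k i := by
    intro k i
    have hzero : (fun k => L k i - Lexp k i) = 0 := by
      apply Matrix.eq_zero_of_forall_pow_sum_mul_pow_eq_zero hz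
      intro p
      have h1 := congrFun (hL p) i
      have h2 := congrFun (hmom p) i
      rw [Finset.sum_apply] at h1 h2
      simp only [Pi.smul_apply, smul_eq_mul] at h1 h2
      calc ∑ j : Fin (n - 1), (L j i - Lexp j i) * z j ^ p.1
          = (∑ j : Fin (n - 1), z j ^ p.1 * L j i)
            - ∑ j : Fin (n - 1), z j ^ p.1 * Lexp j i := by
            rw [← Finset.sum_sub_distrib]
            exact Finset.sum_congr rfl fun j _ => by ring
        _ = 0 := by rw [h1, h2, sub_self]
    have := congrFun hzero k
    simpa [sub_eq_zero] using this
  have hL0 : ∀ k, L k 0 = μ * nodalWeight univ z k := fun k => (hLki k 0).trans (hLexp0 k)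
  have hLe : ∀ k jj, L k (emb n jj) = (μ + a jj * (z k - z jj)) * nodalWeight univ z k :=
    fun k jj => (hLki k (emb n jj)).trans (hLexpe k jj)
  -- swap facts
  have hswap0 : ∀ k : Fin (n - 1), Equiv.swap (0 : Fin n) (emb n k) 0 = emb n k :=
    fun k => Equiv.swap_apply_left _ _
  have hswapk : ∀ k : Fin (n - 1), Equiv.swap (0 : Fin n) (emb n k) (emb n k) = 0 :=
    fun k => Equiv.swap_apply_right _ _
  have hswapo : ∀ (k jj : Fin (n - 1)), jj ≠ k →
      Equiv.swap (0 : Fin n) (emb n k) (emb n jj) = emb n jj := fun k jj h =>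
    Equiv.swap_apply_of_ne_of_ne (emb_ne_zero n jj) (fun hc => h (emb_inj n hc))
  -- Key 1
  have key1 : ∀ (k : Fin (n - 1)) (i : Fin n), L k (Equiv.swap 0 (emb n k) i) = L k i := by
    intro k i
    rcases fin_repr n i with rfl | ⟨jj, rfl⟩
    · rw [hswap0, hLe k k, hL0 k]; ring
    · by_cases h : jj = k
      · subst h; rw [hswapk, hLe jj jj, hL0 jj]; ring
      · rw [hswapo k jj h]
  -- Key 2
  have key2 : ∀ (k : Fin (n - 1)) (i : Fin n),
      ∑ l ∈ univ.erase k, (z k - z l)⁻¹ *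
        (L l (Equiv.swap 0 (emb n k) i) + L k (Equiv.swap 0 (emb n l) i)) = 0 := by
    intro k i
    have hres := residue_identity hN2 z hz k
    have hU : ∑ l ∈ univ.erase k, nodalWeight univ z l = - nodalWeight univ z k := by
      rw [Finset.sum_erase_eq_sub (mem_univ k), hE1, zero_sub]
    have hA : ∑ l ∈ univ.erase k, a l = - a k := by
      rw [Finset.sum_erase_eq_sub (mem_univ k), ha, zero_sub]
    have hzkl : ∀ l ∈ univ.erase k, z k - z l ≠ 0 := fun l hl =>
      sub_ne_zero.mpr fun h => (Finset.mem_erase.mp hl).1 (hz h.symm)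
    rcases fin_repr n i with rfl | ⟨jj, rfl⟩
    · -- i = 0
      have hterm : ∀ l ∈ univ.erase k, (z k - z l)⁻¹ *
          (L l (Equiv.swap 0 (emb n k) 0) + L k (Equiv.swap 0 (emb n l) 0))
          = μ * ((z k - z l)⁻¹ * nodalWeight univ z l) + (-(a k)) * nodalWeight univ z l
            + (μ * nodalWeight univ z k) * (z k - z l)⁻¹ + a l * nodalWeight univ z k := by
        intro l hl
        rw [hswap0 k, hswap0 l, hLe l k, hLe k l]
        have hx := hzkl l hl
        field_simp
        ring
      rw [Finset.sum_congr rfl hterm, Finset.sum_add_distrib, Finset.sum_add_distrib,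
        Finset.sum_add_distrib, ← Finset.mul_sum, ← Finset.mul_sum, ← Finset.mul_sum,
        ← Finset.sum_mul]
      linear_combination μ * hres + (-(a k)) * hU + nodalWeight univ z k * hA
    · by_cases hjk : jj = k
      · subst hjk
        have hterm : ∀ l ∈ univ.erase jj, (z jj - z l)⁻¹ *
            (L l (Equiv.swap 0 (emb n jj) (emb n jj)) + L jj (Equiv.swap 0 (emb n l) (emb n jj)))
            = μ * ((z jj - z l)⁻¹ * nodalWeight univ z l)
              + (μ * nodalWeight univ z jj) * (z jj - z l)⁻¹ := by
          intro l hl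
          have hlk : l ≠ jj := (Finset.mem_erase.mp hl).1
          rw [hswapk jj, hswapo l jj (fun h => hlk h.symm), hL0 l, hLe jj jj]
          ring
        rw [Finset.sum_congr rfl hterm, Finset.sum_add_distrib, ← Finset.mul_sum,
          ← Finset.mul_sum]
        linear_combination μ * hres
      · set ν : ℂ := μ + a jj * (z k - z jj) with hν
        have hjmem : jj ∈ univ.erase k := Finset.mem_erase.mpr ⟨hjk, mem_univ _⟩
        have hterm : ∀ l ∈ univ.erase k, (z k - z l)⁻¹ *
            (L l (Equiv.swap 0 (emb n k) (emb n jj)) + L k (Equiv.swap 0 (emb n l) (emb n jj)))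
            = ν * ((z k - z l)⁻¹ * nodalWeight univ z l) + (-(a jj)) * nodalWeight univ z l
              + (ν * nodalWeight univ z k) * (z k - z l)⁻¹
              + (if l = jj then (-(a jj)) * nodalWeight univ z k else 0) := by
          intro l hl
          have hx := hzkl l hl
          rw [hswapo k jj hjk]
          by_cases hlj : l = jj
          · subst hlj
            rw [if_pos rfl, hswapk l, hLe l l, hL0 k, hν]
            field_simp
            ring
          · rw [if_neg hlj, hswapo l jj (fun h => hlj h.symm), hLe l jj, hLe k jj, hν]
            field_simp
            ring
        rw [Finset.sum_congr rfl hterm, Finset.sum_add_distrib, Finset.sum_add_distrib,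
          Finset.sum_add_distrib, ← Finset.mul_sum, ← Finset.mul_sum, ← Finset.mul_sum,
          Finset.sum_ite_eq' _ jj, if_pos hjmem]
        linear_combination ν * hres + (-(a jj)) * hU
  constructor
  · -- non-vanishing
    obtain ⟨j0, hj0⟩ : ∃ j, a j ≠ 0 := by
      by_contra h
      push_neg at h
      exact ha0 (funext h)
    have hKex : ∃ K, L K (emb n j0) ≠ 0 := by
      by_contra h
      push_neg at h
      have h1 : ∀ K, μ + a j0 * (z K - z j0) = 0 := by
        intro K
        have := h K
        rw [hLe K j0] at this
        exact (mul_eq_zero.mp this).resolve_right (hW0 K)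
      have h2 := h1 j0
      rw [sub_self, mul_zero, add_zero] at h2
      obtain ⟨K, hKj⟩ : ∃ K : Fin (n - 1), K ≠ j0 :=
        Fintype.exists_ne_of_one_lt_card (by simp; omega) j0
      have h3 := h1 K
      rw [h2, zero_add] at h3
      rcases mul_eq_zero.mp h3 with h4 | h4
      · exact hj0 h4
      · exact hKj (hz (by linear_combination h4))
    obtain ⟨K, hK⟩ := hKex
    by_contra hcon
    push_neg at hcon
    -- the limit function
    set g : ℂ → ℂ := fun t => (∑ k : Fin (n - 1), (z K + t - z k)⁻¹ * L k (emb n j0)) * t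
      with hg
    have hglim : Filter.Tendsto g (nhdsWithin 0 {(0 : ℂ)}ᶜ) (nhds (L K (emb n j0))) := by
      have hg' : g =ᶠ[nhdsWithin (0 : ℂ) {(0 : ℂ)}ᶜ]
          (fun t => L K (emb n j0)
            + (∑ k ∈ univ.erase K, (z K + t - z k)⁻¹ * L k (emb n j0)) * t) := by
        filter_upwards [self_mem_nhdsWithin] with t ht
        have ht0 : t ≠ 0 := ht
        simp only [hg]
        rw [← Finset.add_sum_erase _ _ (mem_univ K)]
        have : z K + t - z K = t := by ring
        rw [this, add_mul]
        congr 1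
        field_simp
      rw [Filter.tendsto_congr' hg']
      have hcont0 : Filter.Tendsto
          (fun t : ℂ => L K (emb n j0)
            + (∑ k ∈ univ.erase K, (z K + t - z k)⁻¹ * L k (emb n j0)) * t)
          (nhds 0) (nhds (L K (emb n j0)
            + (∑ k ∈ univ.erase K, (z K + 0 - z k)⁻¹ * L k (emb n j0)) * 0)) := by
        refine Filter.Tendsto.add tendsto_const_nhds (Filter.Tendsto.mul ?_ Filter.tendsto_id)
        refine tendsto_finset_sum _ fun k hk => Filter.Tendsto.mul ?_ tendsto_const_nhds
        have hne : z K + 0 - z k ≠ 0 := by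
          have : z K ≠ z k := fun h => (Finset.mem_erase.mp hk).1 ((hz h).symm)
          simpa [sub_ne_zero] using this
        exact (((continuous_const.add continuous_id).sub continuous_const).tendsto 0).inv₀ hne
      have hcont : Filter.Tendsto
          (fun t : ℂ => L K (emb n j0)
            + (∑ k ∈ univ.erase K, (z K + t - z k)⁻¹ * L k (emb n j0)) * t)
          (nhds 0) (nhds (L K (emb n j0))) := by simpa using hcont0
      exact hcont.mono_left nhdsWithin_le_nhds
    have hgzero : g =ᶠ[nhdsWithin (0 : ℂ) {(0 : ℂ)}ᶜ] (fun _ => 0) := by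
      have hev : ∀ᶠ t in nhdsWithin (0 : ℂ) {(0 : ℂ)}ᶜ, ∀ k ∈ univ.erase K, z K + t ≠ z k := by
        refine Filter.Eventually.filter_mono nhdsWithin_le_nhds ?_
        rw [Finset.eventually_all]
        intro k hk
        have h1 : Continuous (fun t : ℂ => z K + t) := by fun_prop
        have h2 : z K + 0 ≠ z k := by
          simpa using fun h => (Finset.mem_erase.mp hk).1.symm (hz h)
        have := (h1.tendsto 0).eventually (eventually_ne_nhds (by simpa using h2))
        simpa using this
      filter_upwards [self_mem_nhdsWithin, hev] with t ht0 hne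
      have ht0' : (t : ℂ) ≠ 0 := ht0
      have hall : ∀ k, z K + t ≠ z k := by
        intro k
        by_cases hk : k = K
        · subst hk
          intro h
          exact ht0' (by linear_combination h)
        · exact hne k (Finset.mem_erase.mpr ⟨hk, mem_univ _⟩)
      have hYz := hcon (z K + t) hall
      have := congrFun hYz (emb n j0)
      rw [hY (z K + t), Finset.sum_apply] at this
      simp only [Pi.smul_apply, smul_eq_mul, Pi.zero_apply] at this
      simp only [hg]
      rw [this, zero_mul]
    have : L K (emb n j0) = 0 := by
      have h2 : Filter.Tendsto g (nhdsWithin 0 {(0 : ℂ)}ᶜ) (nhds 0) := by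
        rw [Filter.tendsto_congr' hgzero]
        exact tendsto_const_nhds
      exact tendsto_nhds_unique hglim h2
    exact hK this
  · -- the ODE
    intro w hwne i
    have hwk : ∀ k : Fin (n - 1), w - z k ≠ 0 := fun k => sub_ne_zero.mpr (hwne k)
    have hfun : (fun u => Y u i) = (fun u => ∑ k : Fin (n - 1), (u - z k)⁻¹ * L k i) := by
      funext u
      rw [hY u, Finset.sum_apply]
      exact Finset.sum_congr rfl fun k _ => rfl
    rw [hfun]
    have hD : HasDerivAt (fun u => ∑ k : Fin (n - 1), (u - z k)⁻¹ * L k i)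
        (∑ k : Fin (n - 1), -1 / (w - z k) ^ 2 * L k i) w :=
      HasDerivAt.fun_sum fun k _ =>
        (((hasDerivAt_id w).sub_const (z k)).inv (hwk k)).mul_const _
    convert hD using 1
    -- value computation
    have hPkv : ∀ (k : Fin (n - 1)) (v : Fin n → ℂ),
        (Pk n k *ᵥ v) i = v (Equiv.swap 0 (emb n k) i) := by
      intro k v
      have hcond : ∀ j : Fin n,
          (i = Equiv.swap 0 (emb n k) j) ↔ (j = Equiv.swap 0 (emb n k) i) := by
        intro j
        constructor <;> intro h <;> simp [h]
      simp only [Pk_eq, permP, Matrix.mulVec, dotProduct, Matrix.of_apply]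
      simp only [hcond]
      simp [Finset.sum_ite_eq']
    have hAY : (Amat n z w *ᵥ Y w) i = ∑ k : Fin (n - 1), (w - z k)⁻¹ *
        ∑ l : Fin (n - 1), (w - z l)⁻¹ * L l (Equiv.swap 0 (emb n k) i) := by
      have h1 : (Amat n z w *ᵥ Y w) i
          = ∑ k : Fin (n - 1), (w - z k)⁻¹ * ((Pk n k *ᵥ Y w) i) := by
        simp only [Amat, Matrix.mulVec, dotProduct, Matrix.sum_apply,
          Matrix.smul_apply, smul_eq_mul, Finset.sum_mul]
        rw [Finset.sum_comm]
        refine Finset.sum_congr rfl fun k _ => ?_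
        rw [Finset.mul_sum]
        exact Finset.sum_congr rfl fun j _ => by ring
      rw [h1]
      refine Finset.sum_congr rfl fun k _ => ?_
      rw [hPkv k (Y w), hY w, Finset.sum_apply]
      exact congrArg _ (Finset.sum_congr rfl fun l _ => rfl)
    rw [hAY]
    have hsplit : ∀ k : Fin (n - 1), (∑ l : Fin (n - 1), (w - z l)⁻¹ *
        L l (Equiv.swap 0 (emb n k) i))
        = (w - z k)⁻¹ * L k i + ∑ l ∈ univ.erase k, (w - z l)⁻¹ *
          L l (Equiv.swap 0 (emb n k) i) := by
      intro k
      rw [← Finset.add_sum_erase _ _ (mem_univ k), key1 k i]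
    have hoff : ∑ k : Fin (n - 1), (w - z k)⁻¹ * (∑ l ∈ univ.erase k, (w - z l)⁻¹ *
        L l (Equiv.swap 0 (emb n k) i)) = 0 := by
      have hstep1 : ∀ k : Fin (n - 1), (w - z k)⁻¹ * (∑ l ∈ univ.erase k, (w - z l)⁻¹ *
          L l (Equiv.swap 0 (emb n k) i))
          = ∑ l ∈ univ.erase k,
              ((w - z k)⁻¹ * ((z k - z l)⁻¹ * L l (Equiv.swap 0 (emb n k) i))
                + (w - z l)⁻¹ * ((z l - z k)⁻¹ * L l (Equiv.swap 0 (emb n k) i))) := by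
        intro k
        rw [Finset.mul_sum]
        refine Finset.sum_congr rfl fun l hl => ?_
        have hx : z k - z l ≠ 0 :=
          sub_ne_zero.mpr fun h => (Finset.mem_erase.mp hl).1 (hz h.symm)
        have keyf : (w - z k)⁻¹ * (w - z l)⁻¹
            = (w - z k)⁻¹ * (z k - z l)⁻¹ + (w - z l)⁻¹ * (z l - z k)⁻¹ := by
          have h1 : (w - z k)⁻¹ - (w - z l)⁻¹
              = (z k - z l) * ((w - z k)⁻¹ * (w - z l)⁻¹) := by
            rw [inv_sub_inv (hwk k) (hwk l), div_eq_mul_inv, mul_inv]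
            ring
          have h2 : (z k - z l) * (z k - z l)⁻¹ = 1 := mul_inv_cancel₀ hx
          have h3 : (z l - z k)⁻¹ = -(z k - z l)⁻¹ := by
            rw [← neg_sub (z k) (z l), inv_neg]
          rw [h3]
          linear_combination -((z k - z l)⁻¹ * h1) - ((w - z k)⁻¹ * (w - z l)⁻¹) * h2
        linear_combination L l (Equiv.swap 0 (emb n k) i) * keyf
      rw [Finset.sum_congr rfl fun k _ => hstep1 k]
      simp only [Finset.sum_add_distrib]
      rw [sum_erase_comm (fun k l => (w - z l)⁻¹ *
        ((z l - z k)⁻¹ * L l (Equiv.swap 0 (emb n k) i)))]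
      rw [← Finset.sum_add_distrib]
      rw [Finset.sum_congr rfl (fun k _ => (Finset.sum_add_distrib).symm)]
      have hlast : ∀ k : Fin (n - 1),
          (∑ l ∈ univ.erase k,
            ((w - z k)⁻¹ * ((z k - z l)⁻¹ * L l (Equiv.swap 0 (emb n k) i))
              + (w - z k)⁻¹ * ((z k - z l)⁻¹ * L k (Equiv.swap 0 (emb n l) i)))) = 0 := by
        intro k
        have : ∀ l ∈ univ.erase k,
            ((w - z k)⁻¹ * ((z k - z l)⁻¹ * L l (Equiv.swap 0 (emb n k) i))
              + (w - z k)⁻¹ * ((z k - z l)⁻¹ * L k (Equiv.swap 0 (emb n l) i)))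
            = (w - z k)⁻¹ * ((z k - z l)⁻¹ *
                (L l (Equiv.swap 0 (emb n k) i) + L k (Equiv.swap 0 (emb n l) i))) := by
          intro l hl; ring
        rw [Finset.sum_congr rfl this, ← Finset.mul_sum, key2 k i, mul_zero]
      rw [Finset.sum_congr rfl fun k _ => hlast k, Finset.sum_const_zero]
    calc -(∑ k : Fin (n - 1), (w - z k)⁻¹ *
          ∑ l : Fin (n - 1), (w - z l)⁻¹ * L l (Equiv.swap 0 (emb n k) i))
        = -(∑ k : Fin (n - 1),
            ((w - z k)⁻¹ * ((w - z k)⁻¹ * L k i)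
              + (w - z k)⁻¹ * (∑ l ∈ univ.erase k, (w - z l)⁻¹ *
                L l (Equiv.swap 0 (emb n k) i)))) := by
          congr 1
          refine Finset.sum_congr rfl fun k _ => ?_
          rw [hsplit k, mul_add]
      _ = -(∑ k : Fin (n - 1), (w - z k)⁻¹ * ((w - z k)⁻¹ * L k i)) := by
          rw [Finset.sum_add_distrib, hoff, add_zero]
      _ = ∑ k : Fin (n - 1), -1 / (w - z k) ^ 2 * L k i := by
          rw [← Finset.sum_neg_distrib]
          exact Finset.sum_congr rfl fun k _ => by
            rw [div_eq_mul_inv, sq, mul_inv]; ring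
end

section
/- Let n ≥ 3 and let z_1, …, z_{n−1} be pairwise distinct complex numbers. Let v₃ = (n−1, −1, …, −1) ∈ ℂ^n, and for 1 ≤ i ≤ n−1 let N_i ∈ ℂ^n be the vector with (N_i)_1 = (N_i)_{i+1} = 1 and (N_i)_j = −2/(n−2) for all j ∉ {1, i+1}. Then there exist vectors L_1, …, L_{n−1} ∈ ℂ^n such that the vector function Y(z) = Σ_{k=1}^{n−1} L_k/(z−z_k) + z·v₃ − Σ_{i=1}^{n−1} z_i·N_i satisfies Y′(z) = −A(z)·Y(z) for all z ∈ ℂ ∖ {z_1, …, z_{n−1}}. -/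
open Matrix

/-- N_i : entries 1 at positions 1 and i+1 (1-based), and -2/(n-2) elsewhere. -/
noncomputable def Nvec (n : ℕ) (i : Fin (n - 1)) : Fin n → ℂ :=
  fun j => if j.1 = 0 ∨ j.1 = i.1 + 1 then 1 else -2 / ((n : ℂ) - 2)

open Polynomial Finset

noncomputable section RS

namespace RS

variable {m : ℕ} (z : Fin m → ℂ)

/-- Polynomial "integral": formal antiderivative with zero constant term. -/
def pint (p : ℂ[X]) : ℂ[X] := p.sum fun k a => C (a / (k + 1)) * X ^ (k + 1)

lemma derivative_pint (p : ℂ[X]) : derivative (pint p) = p := by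
  rw [pint, Polynomial.sum, map_sum]
  conv_rhs => rw [← Polynomial.sum_C_mul_X_pow_eq p]
  rw [Polynomial.sum]
  refine Finset.sum_congr rfl fun k hk => ?_
  have hk1 : ((k : ℂ) + 1) ≠ 0 := Nat.cast_add_one_ne_zero k
  rw [derivative_C_mul, derivative_X_pow]
  push_cast
  rw [← mul_assoc, ← C_mul, div_mul_cancel₀ _ hk1]

lemma coeff_pint_succ (p : ℂ[X]) (t : ℕ) :
    (pint p).coeff (t + 1) = p.coeff t / ((t : ℂ) + 1) := by
  rw [pint, Polynomial.sum, finset_sum_coeff]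
  by_cases ht : t ∈ p.support
  · rw [Finset.sum_eq_single t]
    · simp
    · intro b _ hbt
      rw [coeff_C_mul, coeff_X_pow, if_neg (by omega), mul_zero]
    · intro h; exact absurd ht h
  · have h0 : p.coeff t = 0 := Polynomial.notMem_support_iff.mp ht
    rw [h0, zero_div]
    refine Finset.sum_eq_zero fun b hb => ?_
    rw [coeff_C_mul, coeff_X_pow]
    rcases eq_or_ne b t with rfl | hbt
    · exact absurd hb ht
    · rw [if_neg (by omega), mul_zero]

lemma coeff_pint_zero (p : ℂ[X]) : (pint p).coeff 0 = 0 := by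
  rw [pint, Polynomial.sum, finset_sum_coeff]
  refine Finset.sum_eq_zero fun b _ => ?_
  rw [coeff_C_mul, coeff_X_pow, if_neg (by omega), mul_zero]

lemma natDegree_pint_le (p : ℂ[X]) : (pint p).natDegree ≤ p.natDegree + 1 := by
  refine natDegree_le_iff_coeff_eq_zero.mpr fun N hN => ?_
  obtain ⟨t, rfl⟩ : ∃ t, N = t + 1 := ⟨N - 1, by omega⟩
  rw [coeff_pint_succ, coeff_eq_zero_of_natDegree_lt (by omega), zero_div]


/-- Φ = ∏ (X - z k). -/
def Phi : ℂ[X] := ∏ k, (X - C (z k))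

/-- Φ_k = ∏_{j ≠ k} (X - z j). -/
def Phik (k : Fin m) : ℂ[X] := ∏ j ∈ Finset.univ.erase k, (X - C (z j))

lemma Phi_eq_mul (k : Fin m) : Phi z = (X - C (z k)) * Phik z k :=
  (Finset.mul_prod_erase univ _ (mem_univ k)).symm

lemma monic_Phi : (Phi z).Monic :=
  monic_prod_of_monic _ _ fun _ _ => monic_X_sub_C _

lemma natDegree_Phi : (Phi z).natDegree = m := by
  rw [Phi, natDegree_prod_of_monic _ _ (fun _ _ => monic_X_sub_C _)]
  simp [natDegree_X_sub_C]

lemma natDegree_Phik (k : Fin m) : (Phik z k).natDegree = m - 1 := by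
  rw [Phik, natDegree_prod_of_monic _ _ (fun _ _ => monic_X_sub_C _)]
  simp [natDegree_X_sub_C, Finset.card_erase_of_mem]

lemma derivative_prod_X_sub_C {ι : Type*} [DecidableEq ι] (s : Finset ι) (f : ι → ℂ) :
    derivative (∏ i ∈ s, (X - C (f i))) = ∑ i ∈ s, ∏ j ∈ s.erase i, (X - C (f j)) := by
  induction s using Finset.induction_on with
  | empty => simp
  | @insert a s ha ih =>
    rw [Finset.prod_insert ha, derivative_mul, ih, Finset.sum_insert ha,
      Finset.erase_insert ha, derivative_X_sub_C, one_mul, Finset.mul_sum]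
    congr 1
    refine Finset.sum_congr rfl fun i hi => ?_
    rw [Finset.erase_insert_of_ne (by rintro rfl; exact ha hi),
      Finset.prod_insert (fun h => ha (Finset.mem_of_mem_erase h))]

lemma derivative_Phi : derivative (Phi z) = ∑ k, Phik z k := by
  rw [Phi, derivative_prod_X_sub_C]; rfl

lemma eval_Phi_root (k : Fin m) : (Phi z).eval (z k) = 0 := by
  rw [Phi, eval_prod]
  exact Finset.prod_eq_zero (mem_univ k) (by simp)

lemma eval_Phik_self (k : Fin m) :
    (Phik z k).eval (z k) = ∏ j ∈ Finset.univ.erase k, (z k - z j) := by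
  rw [Phik, eval_prod]; simp

lemma eval_Phik_self_ne_zero (hz : Function.Injective z) (k : Fin m) :
    (Phik z k).eval (z k) ≠ 0 := by
  rw [eval_Phik_self]
  refine Finset.prod_ne_zero_iff.mpr fun j hj => ?_
  have : j ≠ k := (Finset.mem_erase.mp hj).1
  exact sub_ne_zero_of_ne fun h => this (hz h.symm)

lemma eval_Phik_ne (j k : Fin m) (hjk : j ≠ k) : (Phik z j).eval (z k) = 0 := by
  rw [Phik, eval_prod]
  exact Finset.prod_eq_zero (Finset.mem_erase.mpr ⟨hjk.symm, mem_univ k⟩) (by simp)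

lemma eval_Phi_ne_zero {w : ℂ} (hw : ∀ k, w ≠ z k) : (Phi z).eval w ≠ 0 := by
  rw [Phi, eval_prod]
  exact Finset.prod_ne_zero_iff.mpr fun k _ => by
    simpa using sub_ne_zero_of_ne (hw k)


def cc (m : ℕ) : ℂ := ((m : ℂ) + 1) * m

/-- T₀ = c ∫ Φ. -/
def T0 : ℂ[X] := C (cc m) * pint (Phi z)

lemma derivative_T0 : derivative (T0 z) = C (cc m) * Phi z := by
  rw [T0, derivative_C_mul, derivative_pint]

lemma coeff_Phi_self : (Phi z).coeff m = 1 := by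
  have h := (monic_Phi z).coeff_natDegree
  rwa [natDegree_Phi] at h

lemma coeff_Phi_pred (hm : 1 ≤ m) : (Phi z).coeff (m - 1) = -∑ j, z j := by
  have h := prod_X_sub_C_nextCoeff (s := (univ : Finset (Fin m))) z
  rw [show (∏ i : Fin m, (X - C (z i))) = Phi z from rfl] at h
  rw [nextCoeff_of_natDegree_pos (by rw [natDegree_Phi]; omega), natDegree_Phi] at h
  exact h

lemma coeff_Phi_zero {t : ℕ} (ht : m < t) : (Phi z).coeff t = 0 :=
  coeff_eq_zero_of_natDegree_lt (by rw [natDegree_Phi]; exact ht)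

lemma natDegree_T0_le : (T0 z).natDegree ≤ m + 1 := by
  refine le_trans (natDegree_C_mul_le _ _) (le_trans (natDegree_pint_le _) ?_)
  rw [natDegree_Phi]

lemma coeff_T0_zero {t : ℕ} (ht : m + 1 < t) : (T0 z).coeff t = 0 :=
  coeff_eq_zero_of_natDegree_lt (lt_of_le_of_lt (natDegree_T0_le z) ht)

lemma mcast_ne (hm : 1 ≤ m) : (m : ℂ) ≠ 0 := Nat.cast_ne_zero.mpr (by omega)

lemma coeff_T0_top : (T0 z).coeff (m + 1) = m := by
  rw [T0, coeff_C_mul, coeff_pint_succ, coeff_Phi_self, cc]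
  have h1 : ((m : ℂ) + 1) ≠ 0 := Nat.cast_add_one_ne_zero m
  field_simp

lemma cast_pred (hm : 1 ≤ m) : ((m - 1 : ℕ) : ℂ) = (m : ℂ) - 1 := by
  rw [Nat.cast_sub (by omega : 1 ≤ m), Nat.cast_one]

lemma cast_pred2 (hm : 2 ≤ m) : ((m - 2 : ℕ) : ℂ) = (m : ℂ) - 2 := by
  rw [Nat.cast_sub (by omega : 2 ≤ m)]; norm_num

lemma coeff_T0_second (hm : 1 ≤ m) :
    (T0 z).coeff m = -((m : ℂ) + 1) * ∑ j, z j := by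
  have h := coeff_pint_succ (Phi z) (m - 1)
  rw [show (m - 1) + 1 = m from by omega, coeff_Phi_pred z hm, cast_pred hm] at h
  rw [T0, coeff_C_mul, h, cc]
  have hm0 : (m : ℂ) ≠ 0 := mcast_ne hm
  have hm1 : (m : ℂ) - 1 + 1 = (m : ℂ) := by ring
  rw [hm1]
  field_simp

/-- G_j = (T₀ - T₀(z_j)) / (X - z_j)². -/
def Gp (j : Fin m) : ℂ[X] := (T0 z - C ((T0 z).eval (z j))) /ₘ ((X - C (z j)) ^ 2)

lemma Gp_spec (j : Fin m) :
    (X - C (z j)) ^ 2 * Gp z j = T0 z - C ((T0 z).eval (z j)) := by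
  set p : ℂ[X] := T0 z - C ((T0 z).eval (z j)) with hp
  have hmon : ((X - C (z j)) ^ 2).Monic := (monic_X_sub_C _).pow 2
  have hdvd : (X - C (z j)) ^ 2 ∣ p := by
    obtain ⟨q, hq⟩ := (dvd_iff_isRoot (p := p) (a := z j)).mpr
      (by rw [hp]; simp [IsRoot.def])
    have hq' : q.eval (z j) = 0 := by
      have hd : derivative ((X - C (z j)) * q) = C (cc m) * Phi z := by
        rw [← hq, hp, derivative_sub, derivative_C, sub_zero, derivative_T0]
      have hd2 := congrArg (fun r => r.eval (z j)) hd
      simpa [derivative_mul, eval_Phi_root] using hd2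
    obtain ⟨r, hr⟩ := (dvd_iff_isRoot (p := q) (a := z j)).mpr hq'
    exact ⟨r, by rw [hq, hr]; ring⟩
  have hmod : p %ₘ ((X - C (z j)) ^ 2) = 0 := (modByMonic_eq_zero_iff_dvd hmon).mpr hdvd
  have := modByMonic_add_div p ((X - C (z j)) ^ 2)
  rw [hmod, zero_add] at this
  rw [Gp, ← hp, this]

lemma natDegree_Gp_le (j : Fin m) : (Gp z j).natDegree ≤ m - 1 := by
  rw [Gp, natDegree_divByMonic _ ((monic_X_sub_C _).pow 2)]
  have h1 : (T0 z - C ((T0 z).eval (z j))).natDegree ≤ m + 1 :=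
    le_trans (natDegree_sub_le _ _) (by simp [natDegree_T0_le z, natDegree_C])
  have h2 : ((X - C (z j)) ^ 2).natDegree = 2 := by
    rw [natDegree_pow, natDegree_X_sub_C]
  omega

lemma sq_mul_coeff (a : ℂ) (G : ℂ[X]) (t : ℕ) :
    ((X - C a) ^ 2 * G).coeff (t + 2) =
      G.coeff t - 2 * a * G.coeff (t + 1) + a ^ 2 * G.coeff (t + 2) := by
  have h : (X - C a) ^ 2 * G
      = X ^ 2 * G - (C a * (X * G) + C a * (X * G)) + C a * (C a * G) := by ring
  rw [h]
  simp only [coeff_add, coeff_sub, coeff_X_pow_mul, coeff_C_mul]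
  have hxg : (X * G).coeff (t + 2) = G.coeff (t + 1) := coeff_X_mul G (t + 1)
  rw [hxg]
  ring

lemma coeff_Gp_top (hm : 2 ≤ m) (j : Fin m) : (Gp z j).coeff (m - 1) = m := by
  have hL := sq_mul_coeff (z j) (Gp z j) (m - 1)
  rw [Gp_spec] at hL
  have hz1 : (Gp z j).coeff ((m - 1) + 1) = 0 :=
    coeff_eq_zero_of_natDegree_lt (by have := natDegree_Gp_le z j; omega)
  have hz2 : (Gp z j).coeff ((m - 1) + 2) = 0 :=
    coeff_eq_zero_of_natDegree_lt (by have := natDegree_Gp_le z j; omega)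
  rw [hz1, hz2, show (m - 1) + 2 = m + 1 from by omega, coeff_sub, coeff_C,
    if_neg (by omega), sub_zero, coeff_T0_top] at hL
  linear_combination -hL

lemma coeff_Gp_second (hm : 2 ≤ m) (j : Fin m) :
    (Gp z j).coeff (m - 2) = -((m : ℂ) + 1) * (∑ l, z l) + 2 * (m : ℂ) * z j := by
  have hL := sq_mul_coeff (z j) (Gp z j) (m - 2)
  rw [Gp_spec] at hL
  have hz2 : (Gp z j).coeff ((m - 2) + 2) = 0 :=
    coeff_eq_zero_of_natDegree_lt (by have := natDegree_Gp_le z j; omega)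
  rw [show (m - 2) + 1 = m - 1 from by omega, coeff_Gp_top z hm j, hz2,
    show (m - 2) + 2 = m from by omega, coeff_sub, coeff_C,
    if_neg (by omega), sub_zero, coeff_T0_second z (by omega)] at hL
  linear_combination -hL

/-- Ŝ_j = ∫ G_j. -/
def Shat (j : Fin m) : ℂ[X] := pint (Gp z j)

lemma derivative_Shat (j : Fin m) : derivative (Shat z j) = Gp z j := derivative_pint _

lemma natDegree_Shat_le (hm : 1 ≤ m) (j : Fin m) : (Shat z j).natDegree ≤ m := by
  refine le_trans (natDegree_pint_le _) ?_
  have := natDegree_Gp_le z j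
  omega

lemma coeff_Shat_top (hm : 2 ≤ m) (j : Fin m) : (Shat z j).coeff m = 1 := by
  have h := coeff_pint_succ (Gp z j) (m - 1)
  rw [show (m - 1) + 1 = m from by omega, coeff_Gp_top z hm j, cast_pred (by omega)] at h
  rw [Shat, h]
  have hm1 : (m : ℂ) - 1 + 1 = (m : ℂ) := by ring
  rw [hm1, div_self (mcast_ne (by omega))]

lemma coeff_Shat_second (hm : 2 ≤ m) (j : Fin m) :
    (Shat z j).coeff (m - 1)
      = (-((m : ℂ) + 1) * (∑ l, z l) + 2 * (m : ℂ) * z j) / ((m : ℂ) - 1) := by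
  have h := coeff_pint_succ (Gp z j) (m - 2)
  rw [show (m - 2) + 1 = m - 1 from by omega, coeff_Gp_second z hm j, cast_pred2 hm] at h
  rw [Shat, h]
  have hm1 : (m : ℂ) - 2 + 1 = (m : ℂ) - 1 := by ring
  rw [hm1]


/-- The would-be-constant polynomial Ξ. -/
def Xi : ℂ[X] :=
  C (cc m) * Phi z + ∑ j, (-(Shat z j) - (X - C (z j)) * Gp z j)

lemma two_Gp (j : Fin m) :
    2 * Gp z j + (X - C (z j)) * derivative (Gp z j) = C (cc m) * Phik z j := by
  have h := congrArg derivative (Gp_spec z j)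
  rw [derivative_mul, derivative_pow, derivative_X_sub_C, derivative_sub, derivative_C,
    sub_zero, derivative_T0, Phi_eq_mul z j] at h
  have hC2 : (C (2 : ℂ) : ℂ[X]) = 2 := map_ofNat C 2
  apply mul_left_cancel₀ (X_sub_C_ne_zero (z j))
  push_cast at h
  simp only [hC2] at h
  linear_combination h

lemma derivative_Xi : derivative (Xi z) = 0 := by
  rw [Xi, derivative_add, derivative_C_mul, derivative_Phi, map_sum]
  have h : ∀ j : Fin m, derivative (-(Shat z j) - (X - C (z j)) * Gp z j)
      = -(C (cc m) * Phik z j) := by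
    intro j
    rw [derivative_sub, derivative_neg, derivative_Shat, derivative_mul,
      derivative_X_sub_C, one_mul, ← two_Gp z j]
    ring
  rw [Finset.sum_congr rfl fun j _ => h j]
  have h2 : ∑ j : Fin m, -(C (cc m) * Phik z j) = -(C (cc m) * ∑ j, Phik z j) := by
    simp [Finset.mul_sum]
  rw [h2]
  ring

def kap : ℂ := (Xi z).coeff 0

lemma Xi_eq : Xi z = C (kap z) := eq_C_of_derivative_eq_zero (derivative_Xi z)

/-- The constant e = -κ/m. -/
def esc : ℂ := -(kap z) / (m : ℂ)

/-- T_{j+1}. -/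
def Tsucc (j : Fin m) : ℂ[X] :=
  (X - C (z j)) * (C (esc z) - Shat z j) + C ((T0 z).eval (z j))

lemma derivative_Tsucc (j : Fin m) :
    derivative (Tsucc z j)
      = (C (esc z) - Shat z j) - (X - C (z j)) * Gp z j := by
  rw [Tsucc, derivative_add, derivative_C, derivative_mul, derivative_X_sub_C,
    derivative_sub, derivative_C, derivative_Shat]
  ring

lemma B_identity (j : Fin m) :
    (X - C (z j)) * derivative (Tsucc z j) = Tsucc z j - T0 z := by
  rw [derivative_Tsucc, Tsucc]
  linear_combination -(Gp_spec z j)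

lemma C_identity (hm : 1 ≤ m) :
    derivative (T0 z) + ∑ j, derivative (Tsucc z j) = 0 := by
  have h : ∀ j : Fin m, derivative (Tsucc z j)
      = C (esc z) + (-(Shat z j) - (X - C (z j)) * Gp z j) := by
    intro j; rw [derivative_Tsucc]; ring
  rw [Finset.sum_congr rfl fun j _ => h j, Finset.sum_add_distrib]
  have h1 : ∑ _j : Fin m, C (esc z) = C ((m : ℂ) * esc z) := by
    rw [Finset.sum_const, Finset.card_univ, Fintype.card_fin]
    rw [nsmul_eq_mul]
    push_cast
    rw [← C_eq_natCast, ← C_mul]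
  have h2 : (m : ℂ) * esc z = -(kap z) := by
    rw [esc, mul_div_assoc']
    field_simp [mcast_ne hm]
  have h3 : ∑ j, (-(Shat z j) - (X - C (z j)) * Gp z j) = C (kap z) - C (cc m) * Phi z := by
    have := Xi_eq z
    rw [Xi] at this
    linear_combination this
  rw [h1, h2, h3, derivative_T0]
  rw [C_neg]
  ring

lemma natDegree_Tsucc_le (hm : 1 ≤ m) (j : Fin m) : (Tsucc z j).natDegree ≤ m + 1 := by
  rw [Tsucc]
  refine le_trans (natDegree_add_le _ _) (max_le ?_ (by simp))
  refine le_trans (natDegree_mul_le) ?_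
  have h1 : (X - C (z j)).natDegree = 1 := natDegree_X_sub_C _
  have h2 : (C (esc z) - Shat z j).natDegree ≤ m :=
    le_trans (natDegree_sub_le _ _) (by simp [natDegree_Shat_le z hm j])
  omega

lemma coeff_Tsucc_zero (hm : 1 ≤ m) (j : Fin m) {t : ℕ} (ht : m + 1 < t) :
    (Tsucc z j).coeff t = 0 :=
  coeff_eq_zero_of_natDegree_lt (lt_of_le_of_lt (natDegree_Tsucc_le z hm j) ht)

lemma coeff_sub_C_shat (j : Fin m) {t : ℕ} (ht : 1 ≤ t) :
    (C (esc z) - Shat z j).coeff t = -(Shat z j).coeff t := by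
  rw [coeff_sub, coeff_C, if_neg (by omega)]
  ring

lemma coeff_Tsucc_top (hm : 2 ≤ m) (j : Fin m) : (Tsucc z j).coeff (m + 1) = -1 := by
  rw [Tsucc, coeff_add, coeff_C, if_neg (by omega)]
  have h : (X - C (z j)) * (C (esc z) - Shat z j)
      = X * (C (esc z) - Shat z j) - C (z j) * (C (esc z) - Shat z j) := by ring
  rw [h, coeff_sub, coeff_C_mul]
  have h1 : (X * (C (esc z) - Shat z j)).coeff (m + 1) = (C (esc z) - Shat z j).coeff m :=
    coeff_X_mul _ m
  rw [h1, coeff_sub_C_shat z j (by omega), coeff_Shat_top z hm j,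
    coeff_sub_C_shat z j (by omega),
    coeff_eq_zero_of_natDegree_lt (lt_of_le_of_lt (natDegree_Shat_le z (by omega) j) (by omega))]
  ring

lemma coeff_Tsucc_second (hm : 2 ≤ m) (j : Fin m) :
    (Tsucc z j).coeff m
      = z j - (-((m : ℂ) + 1) * (∑ l, z l) + 2 * (m : ℂ) * z j) / ((m : ℂ) - 1) := by
  rw [Tsucc, coeff_add, coeff_C, if_neg (by omega)]
  have h : (X - C (z j)) * (C (esc z) - Shat z j)
      = X * (C (esc z) - Shat z j) - C (z j) * (C (esc z) - Shat z j) := by ring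
  rw [h, coeff_sub, coeff_C_mul]
  obtain ⟨t, rfl⟩ : ∃ t, m = t + 1 := ⟨m - 1, by omega⟩
  have h1 : (X * (C (esc z) - Shat z j)).coeff (t + 1) = (C (esc z) - Shat z j).coeff t :=
    coeff_X_mul _ t
  rw [h1, coeff_sub_C_shat z j (by omega), coeff_sub_C_shat z j (by omega)]
  have hs2 := coeff_Shat_second z hm j
  rw [Nat.add_sub_cancel] at hs2
  rw [hs2, coeff_Shat_top z hm j]
  ring


section NLevel

variable (n : ℕ) [NeZero n] (z : Fin (n - 1) → ℂ)

/-- The inclusion k ↦ k+1 of Fin (n-1) into Fin n. -/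
def iot (k : Fin (n - 1)) : Fin n := ⟨k.1 + 1, by have := k.2; omega⟩

lemma iot_ne_zero (k : Fin (n - 1)) : iot n k ≠ 0 := by
  simp [iot, Fin.ext_iff]

lemma iot_inj : Function.Injective (iot n) := by
  intro a b h
  simpa [iot, Fin.ext_iff] using h

/-- The family of polynomials T_i. -/
def Tv (i : Fin n) : ℂ[X] :=
  if h : i.1 = 0 then T0 z else Tsucc z ⟨i.1 - 1, by have := i.2; omega⟩

lemma Tv_zero : Tv n z 0 = T0 z := by simp [Tv]

lemma Tv_iot (k : Fin (n - 1)) : Tv n z (iot n k) = Tsucc z k := by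
  rw [Tv, dif_neg (by simp [iot])]
  congr 1

lemma fin_cases' (i : Fin n) : i = 0 ∨ ∃ k : Fin (n - 1), i = iot n k := by
  rcases i with ⟨iv, hi⟩
  rcases iv with _ | v
  · left; rfl
  · right
    exact ⟨⟨v, by omega⟩, by simp [iot]⟩

lemma star_identity (hn : 3 ≤ n) (i : Fin n) :
    derivative (Tv n z i) * Phi z - Tv n z i * derivative (Phi z)
      + ∑ k, Phik z k * Tv n z (Equiv.swap 0 (iot n k) i) = 0 := by
  have hm : 1 ≤ n - 1 := by omega
  rcases fin_cases' n i with rfl | ⟨j, rfl⟩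
  · simp only [Equiv.swap_apply_left, Tv_zero, Tv_iot]
    have hB : ∀ k, Tsucc z k = T0 z + (X - C (z k)) * derivative (Tsucc z k) :=
      fun k => by linear_combination -(B_identity z k)
    have hsum : ∑ k, Phik z k * Tsucc z k
        = (∑ k, Phik z k) * T0 z + Phi z * ∑ k, derivative (Tsucc z k) := by
      rw [Finset.sum_mul, Finset.mul_sum, ← Finset.sum_add_distrib]
      refine Finset.sum_congr rfl fun k _ => ?_
      have hP := Phi_eq_mul z k
      linear_combination (Phik z k) * (hB k) - (derivative (Tsucc z k)) * hP
    have hC : ∑ k, derivative (Tsucc z k) = -derivative (T0 z) := by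
      linear_combination C_identity z hm
    rw [hsum, hC, ← derivative_Phi]
    ring
  · have hswj : Equiv.swap (0 : Fin n) (iot n j) (iot n j) = 0 :=
      Equiv.swap_apply_right _ _
    have hswk : ∀ k, k ≠ j →
        Equiv.swap (0 : Fin n) (iot n k) (iot n j) = iot n j := by
      intro k hk
      exact Equiv.swap_apply_of_ne_of_ne (iot_ne_zero n j)
        (fun h => hk (iot_inj n h).symm)
    have split : ∑ k, Phik z k * Tv n z (Equiv.swap 0 (iot n k) (iot n j))
        = Phik z j * T0 z + ∑ k ∈ Finset.univ.erase j, Phik z k * Tsucc z j := by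
      rw [← Finset.add_sum_erase _ _ (mem_univ j)]
      congr 1
      · rw [hswj, Tv_zero]
      · refine Finset.sum_congr rfl fun k hk => ?_
        rw [hswk k (Finset.mem_erase.mp hk).1, Tv_iot]
    have herase : ∑ k ∈ Finset.univ.erase j, Phik z k
        = derivative (Phi z) - Phik z j := by
      rw [derivative_Phi, ← Finset.add_sum_erase _ _ (mem_univ j)]
      ring
    rw [Tv_iot, split]
    have hsum2 : ∑ k ∈ Finset.univ.erase j, Phik z k * Tsucc z j
        = (derivative (Phi z) - Phik z j) * Tsucc z j := by
      rw [← Finset.sum_mul, herase]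
    rw [hsum2]
    have hB := B_identity z j
    have hP := Phi_eq_mul z j
    linear_combination (derivative (Tsucc z j)) * hP + (Phik z j) * hB


lemma ncast2_ne (hn : 3 ≤ n) : (n : ℂ) - 2 ≠ 0 := by
  have h : ((n : ℕ) : ℂ) ≠ ((2 : ℕ) : ℂ) := by
    intro h
    have := Nat.cast_inj (R := ℂ).mp h
    omega
  simpa [sub_ne_zero] using h

lemma ncast1_ne (hn : 3 ≤ n) : (n : ℂ) - 1 ≠ 0 := by
  have h : ((n : ℕ) : ℂ) ≠ ((1 : ℕ) : ℂ) := by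
    intro h
    have := Nat.cast_inj (R := ℂ).mp h
    omega
  simpa [sub_ne_zero] using h

lemma v3_zero : v3 n 0 = (n : ℂ) - 1 := if_pos rfl

lemma v3_iot (k : Fin (n - 1)) : v3 n (iot n k) = -1 := if_neg (iot_ne_zero n k)

/-- The constant term of the linear part of Y_i. -/
def cst (i : Fin n) : ℂ := ∑ j, z j * Nvec n j i

lemma cst_zero : cst n z 0 = ∑ j, z j := by
  unfold cst Nvec
  simp

lemma cst_iot (k : Fin (n - 1)) :
    cst n z (iot n k) = z k + (-2 / ((n : ℂ) - 2)) * ((∑ j, z j) - z k) := by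
  unfold cst
  have h : ∀ j : Fin (n - 1), Nvec n j (iot n k)
      = if j = k then 1 else -2 / ((n : ℂ) - 2) := by
    intro j
    rcases eq_or_ne j k with rfl | hj
    · simp [Nvec, iot]
    · rw [Nvec, if_neg, if_neg hj]
      push_neg
      refine ⟨by simp [iot], fun hc => hj (Fin.ext ?_)⟩
      simp only [iot] at hc
      omega
  have hs : (∑ j, z j * Nvec n j (iot n k))
      = ∑ j, z j * (if j = k then 1 else -2 / ((n : ℂ) - 2)) :=
    Finset.sum_congr rfl fun j _ => by rw [h j]
  rw [hs, ← Finset.add_sum_erase _ _ (mem_univ k), if_pos rfl, mul_one]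
  congr 1
  have hs2 : (∑ j ∈ Finset.univ.erase k,
        z j * (if j = k then 1 else -2 / ((n : ℂ) - 2)))
      = ∑ j ∈ Finset.univ.erase k, z j * (-2 / ((n : ℂ) - 2)) :=
    Finset.sum_congr rfl fun j hj => by rw [if_neg (Finset.mem_erase.mp hj).1]
  rw [hs2, ← Finset.sum_mul, Finset.sum_erase_eq_sub (mem_univ k)]
  ring

/-- The linear polynomial ℓ_i. -/
def lpoly (i : Fin n) : ℂ[X] := C (v3 n i) * X - C (cst n z i)

/-- The residue vectors L_k. -/
def Lvec (k : Fin (n - 1)) (i : Fin n) : ℂ :=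
  (Tv n z i).eval (z k) / (Phik z k).eval (z k)

lemma coeff_lpoly_mul (i : Fin n) (t : ℕ) :
    (lpoly n z i * Phi z).coeff (t + 1)
      = v3 n i * (Phi z).coeff t - cst n z i * (Phi z).coeff (t + 1) := by
  have h : lpoly n z i * Phi z
      = C (v3 n i) * (X * Phi z) - C (cst n z i) * Phi z := by
    rw [lpoly]; ring
  rw [h, coeff_sub, coeff_C_mul, coeff_C_mul, coeff_X_mul]

lemma natDegree_lpoly_mul_le (i : Fin n) :
    (lpoly n z i * Phi z).natDegree ≤ (n - 1) + 1 := by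
  refine le_trans natDegree_mul_le ?_
  have h1 : (lpoly n z i).natDegree ≤ 1 := by
    rw [lpoly]
    refine le_trans (natDegree_sub_le _ _) (max_le ?_ (by simp))
    exact le_trans (natDegree_C_mul_le _ _) (by simp)
  have h2 : (Phi z).natDegree = n - 1 := natDegree_Phi z
  omega

lemma natDegree_Tv_le (hn : 3 ≤ n) (i : Fin n) : (Tv n z i).natDegree ≤ (n - 1) + 1 := by
  rcases fin_cases' n i with rfl | ⟨k, rfl⟩
  · rw [Tv_zero]; exact natDegree_T0_le z
  · rw [Tv_iot]; exact natDegree_Tsucc_le z (by omega) k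

lemma key_coeff_top (hn : 3 ≤ n) (i : Fin n) :
    (Tv n z i).coeff ((n - 1) + 1) = (lpoly n z i * Phi z).coeff ((n - 1) + 1) := by
  have hm2 : 2 ≤ n - 1 := by omega
  have hRHS := coeff_lpoly_mul n z i (n - 1)
  rw [coeff_Phi_self, coeff_Phi_zero z (by omega)] at hRHS
  rcases fin_cases' n i with rfl | ⟨k, rfl⟩
  · rw [Tv_zero, coeff_T0_top, hRHS, v3_zero, cast_pred (by omega : 1 ≤ n)]
    ring
  · rw [Tv_iot, coeff_Tsucc_top z hm2 k, hRHS, v3_iot]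
    ring

lemma key_coeff_second (hn : 3 ≤ n) (i : Fin n) :
    (Tv n z i).coeff (n - 1) = (lpoly n z i * Phi z).coeff (n - 1) := by
  have hm2 : 2 ≤ n - 1 := by omega
  have hcast : ((n - 1 : ℕ) : ℂ) = (n : ℂ) - 1 := cast_pred (by omega : 1 ≤ n)
  have hRHS := coeff_lpoly_mul n z i (n - 2)
  rw [show (n - 2) + 1 = n - 1 from by omega] at hRHS
  rw [show (n - 2 : ℕ) = (n - 1) - 1 from by omega, coeff_Phi_pred z (by omega),
    coeff_Phi_self] at hRHS
  rcases fin_cases' n i with rfl | ⟨k, rfl⟩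
  · rw [Tv_zero, coeff_T0_second z (by omega), hRHS, v3_zero, cst_zero, hcast]
    ring
  · rw [Tv_iot, coeff_Tsucc_second z hm2 k, hRHS, v3_iot, cst_iot, hcast]
    have h2 : (n : ℂ) - 1 - 1 = (n : ℂ) - 2 := by ring
    rw [h2]
    field_simp [ncast2_ne n hn]
    ring

lemma interp (hn : 3 ≤ n) (hz : Function.Injective z) (i : Fin n) :
    Tv n z i = lpoly n z i * Phi z + ∑ k, C (Lvec n z k i) * Phik z k := by
  have hD : Tv n z i - (lpoly n z i * Phi z + ∑ k, C (Lvec n z k i) * Phik z k) = 0 := by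
    apply Polynomial.eq_zero_of_natDegree_lt_card_of_eval_eq_zero _ hz
    · intro k
      rw [eval_sub, eval_add, eval_mul, eval_Phi_root, mul_zero, zero_add, eval_finset_sum]
      rw [Finset.sum_eq_single k (fun l _ hl => by
        rw [eval_mul, eval_Phik_ne z l k hl, mul_zero]) (fun h => absurd (mem_univ k) h)]
      rw [eval_mul, eval_C, Lvec, div_mul_cancel₀ _ (eval_Phik_self_ne_zero z hz k)]
      ring
    · rw [Fintype.card_fin]
      have hle : (Tv n z i - (lpoly n z i * Phi z
          + ∑ k, C (Lvec n z k i) * Phik z k)).natDegree ≤ n - 2 := by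
        refine natDegree_le_iff_coeff_eq_zero.mpr fun N hN => ?_
        have hPhik : ∀ k : Fin (n - 1), (Phik z k).coeff N = 0 := fun k =>
          coeff_eq_zero_of_natDegree_lt (by rw [natDegree_Phik]; omega)
        have hsum : (∑ k, C (Lvec n z k i) * Phik z k).coeff N = 0 := by
          rw [finset_sum_coeff]
          exact Finset.sum_eq_zero fun k _ => by rw [coeff_C_mul, hPhik k, mul_zero]
        rw [coeff_sub, coeff_add, hsum, add_zero]
        rcases (by omega : N = n - 1 ∨ N = (n - 1) + 1 ∨ (n - 1) + 1 < N) with h | h | h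
        · rw [h, key_coeff_second n z hn i, sub_self]
        · rw [h, key_coeff_top n z hn i, sub_self]
        · rw [coeff_eq_zero_of_natDegree_lt (lt_of_le_of_lt (natDegree_Tv_le n z hn i) h),
            coeff_eq_zero_of_natDegree_lt (lt_of_le_of_lt (natDegree_lpoly_mul_le n z i) h),
            sub_self]
      omega
  linear_combination hD


lemma pf_eval (hn : 3 ≤ n) (hz : Function.Injective z) {w : ℂ}
    (hw : ∀ k, w ≠ z k) (i : Fin n) :
    (∑ k, (w - z k)⁻¹ * Lvec n z k i) + w * v3 n i - cst n z i
      = (Tv n z i).eval w / (Phi z).eval w := by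
  have hPhi : (Phi z).eval w ≠ 0 := eval_Phi_ne_zero z hw
  rw [eq_div_iff hPhi]
  have h : (Tv n z i).eval w
      = (v3 n i * w - cst n z i) * (Phi z).eval w
        + ∑ k, Lvec n z k i * (Phik z k).eval w := by
    have h0 := congrArg (fun p => p.eval w) (interp n z hn hz i)
    simp only [eval_add, eval_mul, eval_finset_sum, eval_C, lpoly, eval_sub, eval_X] at h0
    linear_combination h0
  have hsum : (∑ k, (w - z k)⁻¹ * Lvec n z k i) * (Phi z).eval w
      = ∑ k, Lvec n z k i * (Phik z k).eval w := by
    rw [Finset.sum_mul]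
    refine Finset.sum_congr rfl fun k _ => ?_
    have hk : (Phi z).eval w = (w - z k) * (Phik z k).eval w := by
      have := congrArg (fun p => p.eval w) (Phi_eq_mul z k)
      simpa using this
    have hne : w - z k ≠ 0 := sub_ne_zero.mpr (hw k)
    rw [hk]
    field_simp
  linear_combination hsum - h

lemma amat_apply (w : ℂ) (v : Fin n → ℂ) (i : Fin n) :
    (Amat n z w *ᵥ v) i = ∑ k, (w - z k)⁻¹ * v (Equiv.swap 0 (iot n k) i) := by
  have hPk : ∀ k : Fin (n - 1), Pk n k = permP n 0 (iot n k) := fun k => rfl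
  simp only [Amat, Matrix.mulVec, dotProduct, Matrix.sum_apply, Matrix.smul_apply,
    smul_eq_mul, hPk, permP, Matrix.of_apply]
  simp only [Finset.sum_mul]
  rw [Finset.sum_comm]
  refine Finset.sum_congr rfl fun k _ => ?_
  have hterm : ∀ j : Fin n,
      (w - z k)⁻¹ * (if i = Equiv.swap 0 (iot n k) j then (1 : ℂ) else 0) * v j
        = if j = Equiv.swap 0 (iot n k) i then (w - z k)⁻¹ * v j else 0 := by
    intro j
    by_cases h : j = Equiv.swap 0 (iot n k) i
    · subst h
      rw [if_pos rfl, if_pos (by rw [Equiv.swap_apply_self])]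
      ring
    · rw [if_neg h, if_neg (fun hc => h (by rw [hc, Equiv.swap_apply_self])), mul_zero,
        zero_mul]
  rw [Finset.sum_congr rfl fun j _ => hterm j, Finset.sum_ite_eq' univ _ _,
    if_pos (mem_univ _)]

lemma main_hasDerivAt (hn : 3 ≤ n) (hz : Function.Injective z) {w : ℂ}
    (hw : ∀ k, w ≠ z k) (i : Fin n) :
    HasDerivAt (fun u => (∑ k, (u - z k)⁻¹ * Lvec n z k i) + u * v3 n i - cst n z i)
      (-∑ k, (w - z k)⁻¹
        * ((Tv n z (Equiv.swap 0 (iot n k) i)).eval w / (Phi z).eval w)) w := by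
  have hPhi : (Phi z).eval w ≠ 0 := eval_Phi_ne_zero z hw
  have hF : HasDerivAt (fun u => (Tv n z i).eval u / (Phi z).eval u)
      (((derivative (Tv n z i)).eval w * (Phi z).eval w
        - (Tv n z i).eval w * (derivative (Phi z)).eval w) / ((Phi z).eval w) ^ 2) w :=
    ((Tv n z i).hasDerivAt w).div ((Phi z).hasDerivAt w) hPhi
  have hval : ((derivative (Tv n z i)).eval w * (Phi z).eval w
        - (Tv n z i).eval w * (derivative (Phi z)).eval w) / ((Phi z).eval w) ^ 2
      = -∑ k, (w - z k)⁻¹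
          * ((Tv n z (Equiv.swap 0 (iot n k) i)).eval w / (Phi z).eval w) := by
    have hstar := congrArg (fun p => p.eval w) (star_identity n z hn i)
    simp only [eval_add, eval_sub, eval_mul, eval_finset_sum, eval_zero] at hstar
    rw [div_eq_iff (pow_ne_zero 2 hPhi)]
    have key : (derivative (Tv n z i)).eval w * (Phi z).eval w
        - (Tv n z i).eval w * (derivative (Phi z)).eval w
        = -∑ k, (Phik z k).eval w * (Tv n z (Equiv.swap 0 (iot n k) i)).eval w := by
      linear_combination hstar
    rw [key, neg_mul, Finset.sum_mul, neg_inj]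
    refine Finset.sum_congr rfl fun k _ => ?_
    have hk : (Phi z).eval w = (w - z k) * (Phik z k).eval w := by
      have := congrArg (fun p => p.eval w) (Phi_eq_mul z k)
      simpa using this
    have hne : w - z k ≠ 0 := sub_ne_zero.mpr (hw k)
    rw [hk]
    have hPk : (Phik z k).eval w ≠ 0 := by
      intro h0
      exact hPhi (by rw [hk, h0, mul_zero])
    field_simp
  have hsetopen : IsOpen (⋂ k : Fin (n - 1), {u : ℂ | u ≠ z k}) :=
    isOpen_iInter_of_finite fun k => isOpen_ne
  have hmem : w ∈ ⋂ k : Fin (n - 1), {u : ℂ | u ≠ z k} := by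
    simp only [Set.mem_iInter, Set.mem_setOf_eq]
    exact hw
  have heq : (fun u => (∑ k, (u - z k)⁻¹ * Lvec n z k i) + u * v3 n i - cst n z i)
      =ᶠ[nhds w] (fun u => (Tv n z i).eval u / (Phi z).eval u) := by
    refine Filter.eventuallyEq_of_mem (hsetopen.mem_nhds hmem) fun u hu => ?_
    have hu' : ∀ k, u ≠ z k := by
      simpa only [Set.mem_iInter, Set.mem_setOf_eq] using hu
    exact pf_eval n z hn hz hu' i
  rw [hval] at hF
  exact hF.congr_of_eventuallyEq heq

end NLevel
end RS
end RS

/-- There are vectors L₁,…,L_{n-1} such that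
Y(z) = Σ_k L_k/(z - z_k) + z·v₃ - Σ_i z_i·N_i solves Y' = -A(z)·Y. -/
theorem rational_solution_Yn (n : ℕ) [NeZero n] (hn : 3 ≤ n)
    (z : Fin (n - 1) → ℂ) (hz : Function.Injective z) :
    ∃ (L : Fin (n - 1) → Fin n → ℂ) (Y : ℂ → Fin n → ℂ),
      (∀ u : ℂ, Y u = (∑ k : Fin (n - 1), (u - z k)⁻¹ • L k) + u • v3 n
          - ∑ i : Fin (n - 1), z i • Nvec n i) ∧
      (∀ w : ℂ, (∀ k, w ≠ z k) → ∀ i,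
        HasDerivAt (fun u => Y u i) (-(Amat n z w *ᵥ Y w) i) w) := by
  classical
  refine ⟨RS.Lvec n z,
    fun u i => (∑ k, (u - z k)⁻¹ * RS.Lvec n z k i) + u * v3 n i - RS.cst n z i,
    fun u => ?_, fun w hw i => ?_⟩
  · funext i
    simp only [Pi.add_apply, Pi.sub_apply, Finset.sum_apply, Pi.smul_apply, smul_eq_mul,
      RS.cst]
  · have hd := RS.main_hasDerivAt n z hn hz hw i
    have hval : -((Amat n z w *ᵥ
          fun j => (∑ k, (w - z k)⁻¹ * RS.Lvec n z k j) + w * v3 n j - RS.cst n z j) i)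
        = -∑ k, (w - z k)⁻¹
            * ((RS.Tv n z (Equiv.swap 0 (RS.iot n k) i)).eval w / (RS.Phi z).eval w) := by
      rw [RS.amat_apply, neg_inj]
      exact Finset.sum_congr rfl fun k _ => by
        rw [RS.pf_eval n z hn hz hw (Equiv.swap 0 (RS.iot n k) i)]
    beta_reduce
    rw [hval]
    exact hd
end

section
/- Let n ≥ 3 and let z_1, …, z_{n−1} be pairwise distinct complex numbers. Then there exist n vector functions Y_1, …, Y_n, each of the form Y_j(z) = Σ_{k=1}^{n−1} L_{k,j}/(z−z_k) + Q_j(z) with L_{k,j} ∈ ℂ^n and Q_j a vector of polynomials in z, such that Y_j′(z) = −A(z)·Y_j(z) for all z ∈ ℂ ∖ {z_1, …, z_{n−1}} and 1 ≤ j ≤ n, and the determinant of the n×n matrix with columns Y_1(z), …, Y_n(z) is not identically zero on ℂ ∖ {z_1, …, z_{n−1}}. In particular, for ρ = −1 the Knizhnik–Zamolodchikov system W′ = ρ·A(z)·W has a rational fundamental solution. -/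
open Matrix

open Polynomial Finset

namespace KZaux

/-- formal antiderivative of a complex polynomial -/
noncomputable def pint (p : ℂ[X]) : ℂ[X] := p.sum fun k a => C (a / (k+1)) * X ^ (k+1)

lemma derivative_pint (p : ℂ[X]) : derivative (pint p) = p := by
  conv_rhs => rw [← p.sum_C_mul_X_pow_eq]
  rw [pint, Polynomial.sum, map_sum, Polynomial.sum]
  refine Finset.sum_congr rfl fun k hk => ?_
  rw [derivative_C_mul_X_pow, Nat.add_sub_cancel]
  congr 1
  rw [Nat.cast_add, Nat.cast_one, div_mul_cancel₀]
  exact Nat.cast_add_one_ne_zero k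

variable {n : ℕ} [NeZero n]

/-- embedding of Fin (n-1) into Fin n, k ↦ k+1 -/
def em (k : Fin (n - 1)) : Fin n := ⟨k.1 + 1, by have := k.2; omega⟩

lemma em_inj : Function.Injective (em (n := n)) := by
  intro a b h
  have : a.1 + 1 = b.1 + 1 := congrArg Fin.val h
  exact Fin.ext (by omega)

lemma em_ne_zero (k : Fin (n - 1)) : em k ≠ (0 : Fin n) := by
  intro h
  have : k.1 + 1 = (0 : Fin n).1 := congrArg Fin.val h
  simp at this

lemma Pk_mulVec (k : Fin (n - 1)) (v : Fin n → ℂ) (i : Fin n) :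
    (Pk n k *ᵥ v) i = v (Equiv.swap 0 (em k) i) := by
  have hPk : Pk n k = permP n 0 (em k) := rfl
  rw [hPk, permP, mulVec, dotProduct]
  have key : ∀ x : Fin n, (i = Equiv.swap 0 (em k) x) ↔ (x = Equiv.swap 0 (em k) i) := by
    intro x
    constructor <;> intro h <;> simp [h, Equiv.swap_apply_self]
  simp only [Matrix.of_apply]
  simp_rw [key, ite_mul, one_mul, zero_mul]
  simp

lemma Amat_mulVec (z : Fin (n - 1) → ℂ) (w : ℂ) (v : Fin n → ℂ) (i : Fin n) :
    (Amat n z w *ᵥ v) i = ∑ k : Fin (n-1), (w - z k)⁻¹ * v (Equiv.swap 0 (em k) i) := by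
  rw [Amat]
  have hent : ∀ x, (∑ k : Fin (n-1), (w - z k)⁻¹ • Pk n k) i x
      = ∑ k : Fin (n-1), (w - z k)⁻¹ * Pk n k i x := by
    intro x; rw [Matrix.sum_apply]; simp
  rw [Matrix.mulVec, dotProduct]
  simp_rw [hent, Finset.sum_mul]
  rw [Finset.sum_comm]
  refine Finset.sum_congr rfl fun k _ => ?_
  have hP := Pk_mulVec k v i
  rw [Matrix.mulVec, dotProduct] at hP
  rw [← hP, Finset.mul_sum]
  exact Finset.sum_congr rfl fun x _ => (mul_assoc _ _ _)

section Defs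

variable (n : ℕ) [NeZero n] (z : Fin (n - 1) → ℂ)

noncomputable def fpol : ℂ[X] := Lagrange.nodal Finset.univ z

noncomputable def hpol (m : Fin (n - 1)) : ℂ[X] := Lagrange.nodal (Finset.univ.erase m) z

noncomputable def Fpol : ℂ[X] := pint (fpol n z)

noncomputable def Gpol : ℂ[X] := fpol n z - ∑ k : Fin (n-1), pint (hpol n z k)

noncomputable def Hpol (m : Fin (n - 1)) : ℂ[X] :=
  pint (hpol n z m) + if m.1 = 0 then Gpol n z else 0

noncomputable def cc (j : Fin n) (m : Fin (n - 1)) : ℂ :=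
  (if m.1 + 2 = j.1 then 1 else 0) - (if m.1 + 2 = n then 1 else 0)

noncomputable def acol (j : Fin n) : ℂ[X] :=
  if j.1 = 0 then 1 else if j.1 = 1 then Fpol n z else 0

noncomputable def bcol (j : Fin n) (m : Fin (n - 1)) : ℂ[X] :=
  if j.1 = 0 then 1
  else if j.1 = 1 then Fpol n z - (X - C (z m)) * Hpol n z m
  else C (cc n j m) * (X - C (z m))

noncomputable def Npol (j i : Fin n) : ℂ[X] :=
  if hi : i.1 = 0 then acol n z j else bcol n z j ⟨i.1 - 1, by have := i.2; omega⟩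

lemma fpol_eq_mul (m : Fin (n - 1)) :
    fpol n z = (X - C (z m)) * hpol n z m :=
  Lagrange.nodal_eq_mul_nodal_erase (Finset.mem_univ m)

lemma derivative_fpol : derivative (fpol n z) = ∑ m : Fin (n-1), hpol n z m :=
  Lagrange.derivative_nodal

lemma derivative_Gpol : derivative (Gpol n z) = 0 := by
  rw [Gpol, derivative_sub, map_sum, derivative_fpol]
  simp [derivative_pint]

lemma derivative_Hpol (m : Fin (n - 1)) : derivative (Hpol n z m) = hpol n z m := by
  rw [Hpol, derivative_add, derivative_pint]
  by_cases h : m.1 = 0 <;> simp [h, derivative_Gpol]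

lemma sum_ind (P : Fin (n-1) → Prop) [DecidablePred P] (m0 : Fin (n-1))
    (hP : ∀ m, P m ↔ m = m0) :
    ∑ m : Fin (n-1), (if P m then (1:ℂ) else 0) = 1 := by
  have : ∀ m : Fin (n-1), (if P m then (1:ℂ) else 0) = (if m = m0 then (1:ℂ) else 0) := by
    intro m; by_cases h : P m
    · rw [if_pos h, if_pos ((hP m).1 h)]
    · rw [if_neg h, if_neg (fun hc => h ((hP m).2 hc))]
  simp_rw [this]
  simp

lemma sum_Hpol (hn : 3 ≤ n) : ∑ m : Fin (n-1), Hpol n z m = fpol n z := by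
  have hn1 : 0 < n - 1 := by omega
  set m0 : Fin (n-1) := ⟨0, hn1⟩ with hm0
  have hc : ∀ m : Fin (n-1), (m.1 = 0) ↔ (m = m0) :=
    fun m => ⟨fun h => Fin.ext h, fun h => by rw [h]⟩
  simp_rw [Hpol, Finset.sum_add_distrib]
  have : ∀ m : Fin (n-1), (if m.1 = 0 then Gpol n z else 0)
      = (if m = m0 then Gpol n z else 0) := by
    intro m; by_cases h : m.1 = 0
    · rw [if_pos h, if_pos ((hc m).1 h)]
    · rw [if_neg h, if_neg (fun hcon => h ((hc m).2 hcon))]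
  simp_rw [this, Finset.sum_ite_eq' Finset.univ m0 (fun _ => Gpol n z), Finset.mem_univ,
    if_true, Gpol]
  ring

lemma sum_cc (hn : 3 ≤ n) (j : Fin n) (hj : 2 ≤ j.1) : ∑ m : Fin (n-1), cc n j m = 0 := by
  have hj2 : j.1 - 2 < n - 1 := by have := j.2; omega
  have hn2 : n - 2 < n - 1 := by omega
  simp_rw [cc, Finset.sum_sub_distrib]
  rw [sum_ind n (fun m => m.1 + 2 = j.1) ⟨j.1 - 2, hj2⟩
      (fun m => ⟨fun h => Fin.ext (by simp; omega), fun h => by rw [h]; simp; omega⟩),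
    sum_ind n (fun m => m.1 + 2 = n) ⟨n - 2, hn2⟩
      (fun m => ⟨fun h => Fin.ext (by simp; omega), fun h => by rw [h]; simp; omega⟩)]
  ring

lemma derivative_Fpol : derivative (Fpol n z) = fpol n z := derivative_pint _

/-- The per-component ODE identity (polynomial form). -/
lemma Em_identity (j : Fin n) (m : Fin (n - 1)) :
    derivative (bcol n z j m) * (X - C (z m)) = bcol n z j m - acol n z j := by
  rcases Nat.lt_or_ge j.1 1 with hj | hj
  · have hj0 : j.1 = 0 := by omega
    simp [bcol, acol, hj0]
  rcases Nat.lt_or_ge j.1 2 with hj2 | hj2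
  · have hj1 : j.1 = 1 := by omega
    have hne : ¬ j.1 = 0 := by omega
    simp only [bcol, acol, if_neg hne, if_pos hj1]
    rw [derivative_sub, derivative_Fpol, derivative_mul, derivative_Hpol]
    have hf := fpol_eq_mul n z m
    rw [hf]
    simp only [derivative_sub, derivative_X, derivative_C]
    ring
  · have hne : ¬ j.1 = 0 := by omega
    have hne1 : ¬ j.1 = 1 := by omega
    simp only [bcol, acol, if_neg hne, if_neg hne1]
    rw [derivative_mul, derivative_C]
    simp only [derivative_sub, derivative_X, derivative_C]
    ring

/-- The first-row ODE identity (polynomial form). -/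
lemma E0_identity (hn : 3 ≤ n) (j : Fin n) :
    derivative (acol n z j) * fpol n z
      = ∑ m : Fin (n-1), (acol n z j - bcol n z j m) * hpol n z m := by
  rcases Nat.lt_or_ge j.1 1 with hj | hj
  · have hj0 : j.1 = 0 := by omega
    simp [bcol, acol, hj0]
  rcases Nat.lt_or_ge j.1 2 with hj2 | hj2
  · have hj1 : j.1 = 1 := by omega
    have hne : ¬ j.1 = 0 := by omega
    simp only [bcol, acol, if_neg hne, if_pos hj1]
    rw [derivative_Fpol]
    have : ∀ m : Fin (n-1),
        (Fpol n z - (Fpol n z - (X - C (z m)) * Hpol n z m)) * hpol n z m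
          = Hpol n z m * fpol n z := by
      intro m
      rw [fpol_eq_mul n z m]
      ring
    simp_rw [this, ← Finset.sum_mul, sum_Hpol n z hn]
  · have hne : ¬ j.1 = 0 := by omega
    have hne1 : ¬ j.1 = 1 := by omega
    simp only [bcol, acol, if_neg hne, if_neg hne1]
    have : ∀ m : Fin (n-1),
        ((0:ℂ[X]) - C (cc n j m) * (X - C (z m))) * hpol n z m
          = C (cc n j m) * (-fpol n z) := by
      intro m
      rw [fpol_eq_mul n z m]
      ring
    simp_rw [this, ← Finset.sum_mul, ← map_sum, sum_cc n hn j hj2]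
    simp

end Defs

section Eval

variable (n : ℕ) [NeZero n] (z : Fin (n - 1) → ℂ)

lemma Npol_zero (j : Fin n) : Npol n z j 0 = acol n z j := by
  rw [Npol, dif_pos]
  simp

lemma Npol_em (j : Fin n) (k : Fin (n - 1)) : Npol n z j (em k) = bcol n z j k := by
  have h1 : (em k : Fin n).1 = k.1 + 1 := rfl
  rw [Npol, dif_neg (by simp [h1])]
  congr 1

variable {w : ℂ}

lemma fpol_eval_ne_zero (hw : ∀ k, w ≠ z k) : (fpol n z).eval w ≠ 0 :=
  Lagrange.eval_nodal_not_at_node (fun i _ => hw i)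

lemma fpol_eval_eq (m : Fin (n - 1)) :
    (fpol n z).eval w = (w - z m) * (hpol n z m).eval w := by
  conv_lhs => rw [fpol_eq_mul n z m]
  simp

lemma derivative_fpol_eval :
    (derivative (fpol n z)).eval w = ∑ m : Fin (n-1), (hpol n z m).eval w := by
  rw [derivative_fpol, eval_finset_sum]

/-- partial fraction decomposition of p/f, evaluated away from the nodes -/
lemma partial_fractions (hz : Function.Injective z) (hw : ∀ k, w ≠ z k) (p : ℂ[X]) :
    (∑ k : Fin (n-1), (w - z k)⁻¹ *
        (Lagrange.nodalWeight Finset.univ z k * (p %ₘ fpol n z).eval (z k)))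
      + (p /ₘ fpol n z).eval w
      = p.eval w / (fpol n z).eval w := by
  have hfw : (fpol n z).eval w ≠ 0 := fpol_eval_ne_zero n z hw
  set R := p %ₘ fpol n z with hRdef
  have hmonic : (Lagrange.nodal Finset.univ z).Monic := Lagrange.nodal_monic
  have hdeg : R.degree < (Finset.univ : Finset (Fin (n-1))).card := by
    have h1 := Polynomial.degree_modByMonic_lt p hmonic
    rw [← Lagrange.degree_nodal (v := z) (s := Finset.univ)]
    exact h1
  have hR : R = Lagrange.interpolate Finset.univ z (fun k => R.eval (z k)) :=
    Lagrange.eq_interpolate (Set.injOn_of_injective hz) hdeg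
  have hRw : R.eval w = (fpol n z).eval w *
      ∑ k, Lagrange.nodalWeight Finset.univ z k * (w - z k)⁻¹ * R.eval (z k) := by
    conv_lhs => rw [hR]
    exact Lagrange.eval_interpolate_not_at_node _ (fun i _ => hw i)
  have hsplit : p.eval w = R.eval w + (fpol n z).eval w * (p /ₘ fpol n z).eval w := by
    conv_lhs => rw [← Polynomial.modByMonic_add_div p (fpol n z)]
    rw [eval_add, eval_mul]
  rw [eq_div_iff hfw, add_mul, hsplit, hRw, Finset.sum_mul, Finset.mul_sum]
  congr 1
  · exact Finset.sum_congr rfl fun k _ => by ring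
  · ring

noncomputable def gval (w : ℂ) (j : Fin n) (m : Fin (n - 1)) : ℂ :=
  if j.1 = 0 then 0 else if j.1 = 1 then -((Hpol n z m).eval w) else cc n j m

lemma bcol_eval_decomp (j : Fin n) (m : Fin (n - 1)) :
    (bcol n z j m).eval w = (acol n z j).eval w + (w - z m) * gval n z w j m := by
  rcases Nat.lt_or_ge j.1 1 with hj | hj
  · have hj0 : j.1 = 0 := by omega
    simp [bcol, acol, gval, hj0]
  rcases Nat.lt_or_ge j.1 2 with hj2 | hj2
  · have hj1 : j.1 = 1 := by omega
    have hne : ¬ j.1 = 0 := by omega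
    simp only [bcol, acol, gval, if_neg hne, if_pos hj1, eval_sub, eval_mul, eval_X, eval_C]
    ring
  · have hne : ¬ j.1 = 0 := by omega
    have hne1 : ¬ j.1 = 1 := by omega
    simp only [bcol, acol, gval, if_neg hne, if_neg hne1, eval_mul, eval_sub, eval_X, eval_C,
      eval_zero]
    ring

lemma sum_gval (hn : 3 ≤ n) (j : Fin n) :
    ∑ m : Fin (n-1), gval n z w j m
      = if j.1 = 1 then -((fpol n z).eval w) else 0 := by
  rcases Nat.lt_or_ge j.1 1 with hj | hj
  · have hj0 : j.1 = 0 := by omega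
    simp [gval, hj0]
  rcases Nat.lt_or_ge j.1 2 with hj2 | hj2
  · have hj1 : j.1 = 1 := by omega
    have hne : ¬ j.1 = 0 := by omega
    simp only [gval, if_neg hne, if_pos hj1]
    rw [Finset.sum_neg_distrib, ← eval_finset_sum, sum_Hpol n z hn]
  · have hne : ¬ j.1 = 0 := by omega
    have hne1 : ¬ j.1 = 1 := by omega
    simp only [gval, if_neg hne, if_neg hne1]
    rw [sum_cc n hn j hj2]

end Eval

end KZaux

/-- For ρ = -1 the KZ system has a rational fundamental solution: there are n rational
vector solutions Y_j(z) = Σ_k L_{k,j}/(z-z_k) + Q_j(z) (Q_j a polynomial vector) of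
Y' = -A(z)·Y whose determinant is not identically zero on ℂ ∖ {z₁,…,z_{n-1}}. -/
theorem fundamental_rational_solution_rho_neg_one (n : ℕ) [NeZero n] (hn : 3 ≤ n)
    (z : Fin (n - 1) → ℂ) (hz : Function.Injective z) :
    ∃ (L : Fin n → Fin (n - 1) → Fin n → ℂ) (Q : Fin n → Fin n → Polynomial ℂ)
      (Y : Fin n → ℂ → Fin n → ℂ),
      (∀ (j : Fin n) (u : ℂ),
        Y j u = (∑ k : Fin (n - 1), (u - z k)⁻¹ • L j k) + fun i => (Q j i).eval u) ∧
      (∀ (j : Fin n) (w : ℂ), (∀ k, w ≠ z k) → ∀ i,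
        HasDerivAt (fun u => Y j u i) (-(Amat n z w *ᵥ Y j w) i) w) ∧
      (∃ w : ℂ, (∀ k, w ≠ z k) ∧ (Matrix.of fun i j => Y j w i).det ≠ 0) := by

  classical
  set f : ℂ[X] := KZaux.fpol n z with hfdef
  set L : Fin n → Fin (n - 1) → Fin n → ℂ :=
    fun j k i => Lagrange.nodalWeight Finset.univ z k * ((KZaux.Npol n z j i) %ₘ f).eval (z k)
    with hLdef
  set Q : Fin n → Fin n → Polynomial ℂ := fun j i => (KZaux.Npol n z j i) /ₘ f with hQdef
  set Y : Fin n → ℂ → Fin n → ℂ :=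
    fun j u => (∑ k : Fin (n - 1), (u - z k)⁻¹ • L j k) + fun i => (Q j i).eval u with hYdef
  have hYval : ∀ (j i : Fin n) (u : ℂ), (∀ k, u ≠ z k) →
      Y j u i = (KZaux.Npol n z j i).eval u / f.eval u := by
    intro j i u hu
    have hpf := KZaux.partial_fractions n z hz hu (KZaux.Npol n z j i)
    rw [← hpf]
    simp only [hYdef, hLdef, hQdef, Pi.add_apply, Finset.sum_apply, Pi.smul_apply, smul_eq_mul]
    rfl
  refine ⟨L, Q, Y, fun j u => rfl, ?_, ?_⟩
  · -- the ODE
    intro j w hw i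
    have hfw : f.eval w ≠ 0 := KZaux.fpol_eval_ne_zero n z hw
    have hfw2 : f.eval w ^ 2 ≠ 0 := pow_ne_zero 2 hfw
    have hsub : ∀ k, w - z k ≠ 0 := fun k => sub_ne_zero_of_ne (hw k)
    have hfm : ∀ k, f.eval w = (w - z k) * (KZaux.hpol n z k).eval w :=
      fun k => KZaux.fpol_eval_eq n z k
    have hinv : ∀ k, (w - z k)⁻¹ = (KZaux.hpol n z k).eval w / f.eval w := by
      intro k
      rw [eq_div_iff hfw, inv_mul_eq_div, div_eq_iff (hsub k)]
      linear_combination hfm k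
    have hfder : (derivative f).eval w = ∑ k : Fin (n-1), (KZaux.hpol n z k).eval w :=
      KZaux.derivative_fpol_eval n z
    have hopen : {u : ℂ | ∀ k, u ≠ z k} ∈ nhds w := by
      have h1 : {u : ℂ | ∀ k, u ≠ z k} = ⋂ k, {z k}ᶜ := by
        ext u; simp [Set.mem_iInter]
      rw [h1]
      refine (isOpen_iInter_of_finite fun k => isOpen_compl_singleton).mem_nhds ?_
      simp only [Set.mem_iInter, Set.mem_compl_iff, Set.mem_singleton_iff]
      exact hw
    have hEq : (fun u => Y j u i) =ᶠ[nhds w]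
        (fun u => (KZaux.Npol n z j i).eval u / f.eval u) :=
      Filter.eventuallyEq_of_mem hopen (fun u hu => hYval j i u hu)
    have hg : HasDerivAt (fun u => (KZaux.Npol n z j i).eval u / f.eval u)
        (((derivative (KZaux.Npol n z j i)).eval w * f.eval w
          - (KZaux.Npol n z j i).eval w * (derivative f).eval w) / f.eval w ^ 2) w :=
      (Polynomial.hasDerivAt _ w).div (Polynomial.hasDerivAt _ w) hfw
    have hder := hg.congr_of_eventuallyEq hEq
    refine hder.congr_deriv ?_
    symm
    rw [KZaux.Amat_mulVec]
    by_cases hi : i.1 = 0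
    · -- first row
      have hi0 : i = 0 := Fin.ext (by simpa using hi)
      subst hi0
      simp_rw [Equiv.swap_apply_left]
      have hYk : ∀ k, Y j w (KZaux.em k) = (KZaux.bcol n z j k).eval w / f.eval w := by
        intro k
        rw [hYval j _ w hw, KZaux.Npol_em]
      simp_rw [hYk, KZaux.Npol_zero]
      have hterm : ∀ k : Fin (n-1), (w - z k)⁻¹ * ((KZaux.bcol n z j k).eval w / f.eval w)
          = (KZaux.bcol n z j k).eval w * (KZaux.hpol n z k).eval w / f.eval w ^ 2 := by
        intro k
        rw [hinv k]
        ring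
      simp_rw [hterm]
      rw [← Finset.sum_div, ← neg_div, div_eq_div_iff hfw2 hfw2]
      have hE0 := congrArg (Polynomial.eval w) (KZaux.E0_identity n z hn j)
      simp only [eval_mul, eval_sub, eval_finset_sum] at hE0
      have hsum : ∑ k : Fin (n-1),
          ((KZaux.acol n z j).eval w - (KZaux.bcol n z j k).eval w)
            * (KZaux.hpol n z k).eval w
          = (KZaux.acol n z j).eval w * (∑ k : Fin (n-1), (KZaux.hpol n z k).eval w)
            - ∑ k : Fin (n-1), (KZaux.bcol n z j k).eval w * (KZaux.hpol n z k).eval w := by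
        rw [Finset.mul_sum, ← Finset.sum_sub_distrib]
        exact Finset.sum_congr rfl fun k _ => by ring
      rw [← hfdef] at hE0
      rw [hfder]
      linear_combination (-(f.eval w ^ 2)) * hE0 - (f.eval w ^ 2) * hsum
    · -- other rows
      have him : i = KZaux.em ⟨i.1 - 1, by have := i.2; omega⟩ := by
        refine Fin.ext ?_
        have h1 : (KZaux.em (n := n) ⟨i.1 - 1, by have := i.2; omega⟩).1 = (i.1 - 1) + 1 := rfl
        omega
      set m : Fin (n - 1) := ⟨i.1 - 1, by have := i.2; omega⟩ with hmdef
      rw [him]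
      have hswap : ∀ k, Equiv.swap 0 (KZaux.em k) (KZaux.em m)
          = if k = m then (0 : Fin n) else KZaux.em m := by
        intro k
        by_cases hk : k = m
        · subst hk
          simp [Equiv.swap_apply_right]
        · rw [if_neg hk]
          exact Equiv.swap_apply_of_ne_of_ne (KZaux.em_ne_zero m)
            (fun hc => hk (KZaux.em_inj hc).symm)
      have hY0 : Y j w 0 = (KZaux.acol n z j).eval w / f.eval w := by
        rw [hYval j _ w hw, KZaux.Npol_zero]
      have hYm : Y j w (KZaux.em m) = (KZaux.bcol n z j m).eval w / f.eval w := by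
        rw [hYval j _ w hw, KZaux.Npol_em]
      have hsplit : ∑ k : Fin (n-1), (w - z k)⁻¹ * Y j w (Equiv.swap 0 (KZaux.em k) (KZaux.em m))
          = (w - z m)⁻¹ * ((KZaux.acol n z j).eval w / f.eval w)
            + ∑ k ∈ Finset.univ.erase m,
                (w - z k)⁻¹ * ((KZaux.bcol n z j m).eval w / f.eval w) := by
        rw [← Finset.add_sum_erase _
          (fun k => (w - z k)⁻¹ * Y j w (Equiv.swap 0 (KZaux.em k) (KZaux.em m)))
          (Finset.mem_univ m)]
        congr 1
        · rw [hswap m, if_pos rfl, hY0]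
        · refine Finset.sum_congr rfl fun k hk => ?_
          rw [hswap k, if_neg (Finset.ne_of_mem_erase hk), hYm]
      rw [hsplit, KZaux.Npol_em]
      have hterm : ∀ k : Fin (n-1), (w - z k)⁻¹ * ((KZaux.bcol n z j m).eval w / f.eval w)
          = (KZaux.bcol n z j m).eval w * (KZaux.hpol n z k).eval w / f.eval w ^ 2 := by
        intro k
        rw [hinv k]
        ring
      have hterm0 : (w - z m)⁻¹ * ((KZaux.acol n z j).eval w / f.eval w)
          = (KZaux.acol n z j).eval w * (KZaux.hpol n z m).eval w / f.eval w ^ 2 := by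
        rw [hinv m]
        ring
      simp_rw [hterm, hterm0]
      rw [← Finset.sum_div, ← add_div, ← neg_div, div_eq_div_iff hfw2 hfw2]
      have herase : ∑ k ∈ Finset.univ.erase m,
          (KZaux.bcol n z j m).eval w * (KZaux.hpol n z k).eval w
          = (KZaux.bcol n z j m).eval w *
            ((∑ k : Fin (n-1), (KZaux.hpol n z k).eval w) - (KZaux.hpol n z m).eval w) := by
        rw [← Finset.mul_sum, Finset.sum_erase_eq_sub (Finset.mem_univ m)]
      have hEm := congrArg (Polynomial.eval w) (KZaux.Em_identity n z j m)
      simp only [eval_mul, eval_sub, eval_X, eval_C] at hEm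
      rw [herase, hfder]
      linear_combination (-(f.eval w ^ 2 * (KZaux.hpol n z m).eval w)) * hEm
        - ((derivative (KZaux.bcol n z j m)).eval w * f.eval w ^ 2) * (hfm m)
  · -- nonvanishing determinant
    obtain ⟨w, hwmem⟩ := (Set.finite_range z).infinite_compl.nonempty
    have hw : ∀ k, w ≠ z k := fun k hk => hwmem ⟨k, hk.symm⟩
    have hfw : f.eval w ≠ 0 := KZaux.fpol_eval_ne_zero n z hw
    have hsub : ∀ k, w - z k ≠ 0 := fun k => sub_ne_zero_of_ne (hw k)
    refine ⟨w, hw, fun hdet => ?_⟩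
    obtain ⟨v, hv0, hv⟩ := Matrix.exists_mulVec_eq_zero_iff.mpr hdet
    have hrow : ∀ i : Fin n, ∑ j0 : Fin n, (KZaux.Npol n z j0 i).eval w * v j0 = 0 := by
      intro i
      have h1 := congrFun hv i
      simp only [Matrix.mulVec, dotProduct, Matrix.of_apply, Pi.zero_apply] at h1
      have h2 : (∑ j0 : Fin n, (KZaux.Npol n z j0 i).eval w * v j0) / f.eval w = 0 := by
        rw [Finset.sum_div, ← h1]
        exact Finset.sum_congr rfl fun j0 _ => by rw [hYval j0 i w hw]; ring
      exact (div_eq_zero_iff.mp h2).resolve_right hfw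
    have hrow0 : ∑ j0 : Fin n, (KZaux.acol n z j0).eval w * v j0 = 0 := by
      have h1 := hrow 0
      simp_rw [KZaux.Npol_zero] at h1
      exact h1
    have hrowm : ∀ m : Fin (n-1),
        ∑ j0 : Fin n, (KZaux.bcol n z j0 m).eval w * v j0 = 0 := by
      intro m
      have h1 := hrow (KZaux.em m)
      simp_rw [KZaux.Npol_em] at h1
      exact h1
    have hT : ∀ m : Fin (n-1), ∑ j0 : Fin n, KZaux.gval n z w j0 m * v j0 = 0 := by
      intro m
      have h1 := hrowm m
      simp_rw [KZaux.bcol_eval_decomp, add_mul, Finset.sum_add_distrib, mul_assoc,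
        ← Finset.mul_sum, hrow0, zero_add] at h1
      exact (mul_eq_zero.mp h1).resolve_left (hsub m)
    have hj1lt : 1 < n := by omega
    set j1 : Fin n := ⟨1, hj1lt⟩ with hj1def
    have hv1 : v j1 = 0 := by
      have h1 : ∑ m : Fin (n-1), ∑ j0 : Fin n, KZaux.gval n z w j0 m * v j0 = 0 := by
        simp [hT]
      rw [Finset.sum_comm] at h1
      simp_rw [← Finset.sum_mul, KZaux.sum_gval n z hn] at h1
      have h2 : ∀ j0 : Fin n, (if (j0 : ℕ) = 1 then -(f.eval w) else 0) * v j0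
          = (if j0 = j1 then -(f.eval w) * v j1 else 0) := by
        intro j0
        by_cases hj : (j0 : ℕ) = 1
        · have : j0 = j1 := Fin.ext (by simpa using hj)
          rw [this]
          simp [hj1def]
        · rw [if_neg hj, if_neg (fun hc => hj (by rw [hc])), zero_mul]
      simp_rw [← hfdef, h2, Finset.sum_ite_eq' Finset.univ j1, Finset.mem_univ, if_true] at h1
      have h3 := mul_eq_zero.mp h1
      rcases h3 with h3 | h3
      · exact absurd (neg_eq_zero.mp h3) hfw
      · exact h3
    have hv0' : v 0 = 0 := by
      have h2 : ∀ j0 : Fin n, (KZaux.acol n z j0).eval w * v j0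
          = (if j0 = 0 then v 0 else 0) := by
        intro j0
        rcases Nat.lt_or_ge j0.1 1 with hj | hj
        · have hj0 : (j0:ℕ) = 0 := by omega
          have : j0 = 0 := Fin.ext (by simpa using hj0)
          rw [if_pos this, this]
          simp [KZaux.acol]
        rcases Nat.lt_or_ge j0.1 2 with hj2 | hj2
        · have hj1 : (j0:ℕ) = 1 := by omega
          have hne : ¬ (j0:ℕ) = 0 := by omega
          have : j0 = j1 := Fin.ext (by simpa using hj1)
          rw [if_neg (by simp [this, hj1def, Fin.ext_iff]), this, hv1]
          ring
        · have hne : ¬ (j0:ℕ) = 0 := by omega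
          have hne1 : ¬ (j0:ℕ) = 1 := by omega
          rw [if_neg (fun hc => hne (by rw [hc]; simp))]
          simp [KZaux.acol, hne, hne1]
      rw [Finset.sum_congr rfl (fun j0 _ => h2 j0),
        Finset.sum_ite_eq' Finset.univ (0 : Fin n) (fun _ => v 0)] at hrow0
      simpa using hrow0
    have hvj : ∀ j0 : Fin n, 2 ≤ (j0:ℕ) → v j0 = 0 := by
      intro j0 hj2
      have hmlt : (j0:ℕ) - 2 < n - 1 := by have := j0.2; omega
      set mj : Fin (n-1) := ⟨(j0:ℕ) - 2, hmlt⟩ with hmjdef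
      have h1 := hT mj
      have h2 : ∀ j' : Fin n, KZaux.gval n z w j' mj * v j'
          = (if j' = j0 then v j0 else 0) := by
        intro j'
        rcases Nat.lt_or_ge j'.1 1 with hj | hj
        · have hj0 : (j':ℕ) = 0 := by omega
          rw [if_neg (fun hc => by rw [hc] at hj0; omega)]
          simp [KZaux.gval, hj0]
        rcases Nat.lt_or_ge j'.1 2 with hjb | hjb
        · have hj1 : (j':ℕ) = 1 := by omega
          have : j' = j1 := Fin.ext (by simpa using hj1)
          rw [if_neg (fun hc => by rw [hc] at hj1; omega), this, hv1]
          ring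
        · have hne : ¬ (j':ℕ) = 0 := by omega
          have hne1 : ¬ (j':ℕ) = 1 := by omega
          have hcc : KZaux.cc n j' mj = (if j' = j0 then 1 else 0) := by
            rw [KZaux.cc]
            have hn2 : ¬ ((mj:ℕ) + 2 = n) := by
              have := j0.2
              simp only [hmjdef]
              omega
            rw [if_neg hn2]
            by_cases hc : j' = j0
            · rw [if_pos hc, if_pos (by rw [hc]; simp [hmjdef]; omega)]
              ring
            · rw [if_neg hc, if_neg (fun hcon => hc (Fin.ext (by simp [hmjdef] at hcon; omega)))]
              ring
          simp only [KZaux.gval, if_neg hne, if_neg hne1, hcc]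
          by_cases hc : j' = j0
          · rw [if_pos hc, if_pos hc, hc, one_mul]
          · rw [if_neg hc, if_neg hc, zero_mul]
      rw [Finset.sum_congr rfl (fun j' _ => h2 j'),
        Finset.sum_ite_eq' Finset.univ j0 (fun _ => v j0)] at h1
      simpa using h1
    apply hv0
    funext j0
    rcases Nat.lt_or_ge j0.1 1 with hj | hj
    · have : j0 = 0 := Fin.ext (by change j0.1 = 0; omega)
      rw [this, hv0']
      rfl
    rcases Nat.lt_or_ge j0.1 2 with hjb | hjb
    · have : j0 = j1 := Fin.ext (by simp [hj1def]; omega)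
      rw [this, hv1]
      rfl
    · rw [hvj j0 hjb]
      rfl
end
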